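/- arXiv:2103.10261 — 5 statements merged into one kernel-verified Lean document; each statement's English description precedes it below -/
import Mathlib

section
/- Let d₁, d₂, d₃ be even integers with dᵢ ≥ 4, let ε ∈ (0, 1/2), and let M₂ be a Schwartz function on ℝ⁴. Then there is a constant C > 0 (depending on M₂, ε and the dᵢ) such that for every c ∈ ℝ∖{0}: ∫_{(ℝ^×)³} | M₂( c/[a], a₁c/[a], a₂c/[a], a₃ ) | · max(1, |a₁|)^{1−d₁/2} · |[a]/c|^{−d₂/2} · {a}^{d/2−1} d^×a ≤ C · min(1, |c|)^{min(d₁,d₂,d₃)/2 − 1 − ε} · max(1, |c|)^{−1}. (Lemma 9.7 of the paper, archimedean case F = ℝ.) -/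
open MeasureTheory

noncomputable section

/-- The multiplicative Haar measure `d^×a = da/|a|` on `ℝ^× = ℝ ∖ {0}`. -/
def mulHaar : Measure ℝ := volume.withDensity fun a => ENNReal.ofReal |a|⁻¹

/-- The product measure `d^×a₁ d^×a₂ d^×a₃` on `(ℝ^×)³`. -/
def mulHaar3 : Measure (ℝ × ℝ × ℝ) := mulHaar.prod (mulHaar.prod mulHaar)

namespace Stmt11Aux

open Real Set ENNReal

lemma meas_density : Measurable fun a : ℝ => ENNReal.ofReal |a|⁻¹ :=
  measurable_abs.inv.ennreal_ofReal

instance : SFinite mulHaar := by unfold mulHaar; infer_instance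

lemma lintegral_mulHaar (f : ℝ → ℝ≥0∞) :
    ∫⁻ a, f a ∂mulHaar = ∫⁻ a, ENNReal.ofReal |a|⁻¹ * f a := by
  rw [mulHaar, lintegral_withDensity_eq_lintegral_mul_non_measurable _ meas_density
    (ae_of_all _ fun a => ENNReal.ofReal_lt_top)]
  rfl

lemma mulHaar_ae_ne : ∀ᵐ a ∂mulHaar, a ≠ 0 := by
  refine ae_iff.2 ?_
  have h : {a : ℝ | ¬ a ≠ 0} = {0} := by ext a; simp
  rw [h]
  exact (withDensity_absolutelyContinuous volume _) (measure_singleton 0)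

/-- Invariance of `mulHaar` under `a ↦ r / a`. -/
lemma lintegral_inv_shift {r : ℝ} (hr : r ≠ 0) (f : ℝ → ℝ≥0∞) :
    ∫⁻ a, f (r / a) ∂mulHaar = ∫⁻ a, f a ∂mulHaar := by
  rw [lintegral_mulHaar, lintegral_mulHaar]
  have h0 : ∀ g : ℝ → ℝ≥0∞,
      ∫⁻ a, ENNReal.ofReal |a|⁻¹ * g a = ∫⁻ a in ({0}ᶜ : Set ℝ), ENNReal.ofReal |a|⁻¹ * g a := by
    intro g; rw [restrict_compl_singleton]
  rw [h0, h0]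
  have himg : (fun x : ℝ => r / x) '' ({0}ᶜ : Set ℝ) = ({0}ᶜ : Set ℝ) := by
    ext y
    simp only [Set.mem_image, Set.mem_compl_iff, Set.mem_singleton_iff]
    constructor
    · rintro ⟨x, hx, rfl⟩; exact div_ne_zero hr hx
    · intro hy; exact ⟨r / y, div_ne_zero hr hy, by field_simp⟩
  have hderiv : ∀ x ∈ ({0}ᶜ : Set ℝ), HasDerivWithinAt (fun x : ℝ => r / x)
      (-(r / x ^ 2)) ({0}ᶜ : Set ℝ) x := by
    intro x hx
    have hx' : x ≠ 0 := hx
    have h := (hasDerivAt_inv hx').const_mul r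
    have h2 : HasDerivAt (fun y : ℝ => r / y) (-(r / x ^ 2)) x := by
      simpa [div_eq_mul_inv, mul_neg] using h
    exact h2.hasDerivWithinAt
  have hinj : Set.InjOn (fun x : ℝ => r / x) ({0}ᶜ : Set ℝ) := by
    intro x hx y hy hxy
    have hx' : x ≠ 0 := hx
    have hy' : y ≠ 0 := hy
    rw [div_eq_div_iff hx' hy'] at hxy
    exact (mul_left_cancel₀ hr hxy).symm
  have key := lintegral_image_eq_lintegral_abs_det_fderiv_mul volume
    (measurableSet_singleton (0:ℝ)).compl
    (fun x hx => ((hderiv x hx).hasFDerivWithinAt)) hinj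
    (fun y => ENNReal.ofReal |y|⁻¹ * f y)
  simp only [ContinuousLinearMap.det_toSpanSingleton] at key
  rw [himg] at key
  rw [key]
  refine setLIntegral_congr_fun (measurableSet_singleton (0:ℝ)).compl
    (fun x hx => ?_)
  have hx' : (x : ℝ) ≠ 0 := hx
  rw [← mul_assoc, ← ENNReal.ofReal_mul (abs_nonneg _)]
  congr 2
  rw [abs_neg, abs_div, abs_div]
  have : |x ^ 2| = |x| ^ 2 := abs_pow x 2
  rw [this]
  have hax : |x| ≠ 0 := abs_ne_zero.2 hx'
  have har : |r| ≠ 0 := abs_ne_zero.2 hr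
  field_simp

lemma lintegral_mulHaar3_iter (f : ℝ × ℝ × ℝ → ℝ≥0∞) (hf : Measurable f) :
    ∫⁻ a, f a ∂mulHaar3
      = ∫⁻ a₃, ∫⁻ a₁, ∫⁻ a₂, f (a₁, a₂, a₃) ∂mulHaar ∂mulHaar ∂mulHaar := by
  rw [mulHaar3, lintegral_prod _ hf.aemeasurable]
  have h1 : ∀ a₁ : ℝ, ∫⁻ p, f (a₁, p) ∂(mulHaar.prod mulHaar)
      = ∫⁻ a₂, ∫⁻ a₃, f (a₁, a₂, a₃) ∂mulHaar ∂mulHaar := fun a₁ =>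
    lintegral_prod _ ((hf.comp measurable_prodMk_left).aemeasurable)
  have h2 : ∀ a₁ : ℝ, ∫⁻ a₂, ∫⁻ a₃, f (a₁, a₂, a₃) ∂mulHaar ∂mulHaar
      = ∫⁻ a₃, ∫⁻ a₂, f (a₁, a₂, a₃) ∂mulHaar ∂mulHaar := by
    intro a₁
    exact lintegral_lintegral_swap ((hf.comp measurable_prodMk_left).aemeasurable)
  calc ∫⁻ a₁, ∫⁻ p, f (a₁, p) ∂(mulHaar.prod mulHaar) ∂mulHaar
      = ∫⁻ a₁, ∫⁻ a₃, ∫⁻ a₂, f (a₁, a₂, a₃) ∂mulHaar ∂mulHaar ∂mulHaar := by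
        refine lintegral_congr fun a₁ => ?_
        rw [h1, h2]
    _ = ∫⁻ a₃, ∫⁻ a₁, ∫⁻ a₂, f (a₁, a₂, a₃) ∂mulHaar ∂mulHaar ∂mulHaar := by
        refine lintegral_lintegral_swap ?_
        have hm : Measurable fun q : (ℝ × ℝ) × ℝ => f (q.1.1, q.2, q.1.2) :=
          hf.comp ((measurable_fst.fst).prodMk ((measurable_snd).prodMk measurable_fst.snd))
        exact (hm.lintegral_prod_right').aemeasurable

lemma double_subst {c t : ℝ} (hc : c ≠ 0) (ht : t ≠ 0) (g : ℝ → ℝ → ℝ≥0∞) :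
    ∫⁻ b₁, ∫⁻ b₂, g b₁ b₂ ∂mulHaar ∂mulHaar
      = ∫⁻ b₁, ∫⁻ b₂, g (c / (b₁ * t)) (c / (b₂ * t)) ∂mulHaar ∂mulHaar := by
  have hct : c / t ≠ 0 := div_ne_zero hc ht
  have h2 : ∀ x : ℝ, ∫⁻ b₂, g x b₂ ∂mulHaar = ∫⁻ b₂, g x (c / (b₂ * t)) ∂mulHaar := by
    intro x
    rw [← lintegral_inv_shift hct (fun y => g x y)]
    refine lintegral_congr fun b₂ => ?_
    congr 1
    ring
  rw [lintegral_congr h2]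
  rw [← lintegral_inv_shift hct (fun y => ∫⁻ b₂, g y (c / (b₂ * t)) ∂mulHaar)]
  refine lintegral_congr fun b₁ => ?_
  simp only [show c / t / b₁ = c / (b₁ * t) from by ring]

lemma triple_subst {c : ℝ} (hc : c ≠ 0) (f : ℝ × ℝ × ℝ → ℝ≥0∞) (hf : Measurable f) :
    ∫⁻ a, f a ∂mulHaar3
      = ∫⁻ b₃, ∫⁻ b₁, ∫⁻ b₂, f (c / (b₁ * b₃), c / (b₂ * b₃), b₃) ∂mulHaar ∂mulHaar ∂mulHaar := by
  rw [lintegral_mulHaar3_iter f hf]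
  refine lintegral_congr_ae ?_
  filter_upwards [mulHaar_ae_ne] with b₃ hb₃
  exact double_subst hc hb₃ (fun b₁ b₂ => f (b₁, b₂, b₃))

lemma lintegral_lt_top_of_even {g : ℝ → ℝ≥0∞} (hg : ∀ x, g (-x) = g x)
    (h : ∫⁻ x in Ioi (0:ℝ), g x < ⊤) : ∫⁻ x, g x < ⊤ := by
  rw [← lintegral_add_compl g (measurableSet_Ioi (a := (0:ℝ)))]
  have hIic : ∫⁻ x in (Ioi (0:ℝ))ᶜ, g x = ∫⁻ x in Ici (0:ℝ), g (-x) := by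
    rw [compl_Ioi]
    have hres : (volume : Measure ℝ).restrict (Iic (0:ℝ))
        = Measure.map (Neg.neg : ℝ → ℝ) (volume.restrict (Ici (0:ℝ))) := by
      conv_lhs => rw [← Measure.map_neg_eq_self (volume : Measure ℝ)]
      rw [Measure.restrict_map measurable_neg measurableSet_Iic]
      congr 1
      ext x
      simp
    rw [hres]
    exact (Homeomorph.neg ℝ).isClosedEmbedding.measurableEmbedding.lintegral_map _
  have hIci : ∫⁻ x in Ici (0:ℝ), g (-x) = ∫⁻ x in Ioi (0:ℝ), g x := by
    rw [← setLIntegral_congr (Ioi_ae_eq_Ici (a := (0:ℝ)))]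
    exact lintegral_congr fun x => hg x
  rw [hIic, hIci]
  exact ENNReal.add_lt_top.2 ⟨h, h⟩

lemma G_finite {e : ℝ} (he : 0 < e) {k : ℕ} (hk : e < k) :
    ∫⁻ b, ENNReal.ofReal ((1 + |b|) ^ (-(k:ℝ)) * |b| ^ e) ∂mulHaar < ⊤ := by
  rw [lintegral_mulHaar]
  have heven : ∀ x : ℝ, (fun b => ENNReal.ofReal |b|⁻¹
      * ENNReal.ofReal ((1 + |b|) ^ (-(k:ℝ)) * |b| ^ e)) (-x)
      = (fun b => ENNReal.ofReal |b|⁻¹ * ENNReal.ofReal ((1 + |b|) ^ (-(k:ℝ)) * |b| ^ e)) x := by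
    intro x; simp [abs_neg]
  refine lintegral_lt_top_of_even heven ?_
  have hsplit : Ioi (0:ℝ) = Ioc (0:ℝ) 1 ∪ Ioi (1:ℝ) := by
    rw [Ioc_union_Ioi_eq_Ioi]; norm_num
  have hpart1 : ∫⁻ x in Ioc (0:ℝ) 1, ENNReal.ofReal |x|⁻¹
      * ENNReal.ofReal ((1 + |x|) ^ (-(k:ℝ)) * |x| ^ e) < ⊤ := by
    have hint : IntegrableOn (fun x : ℝ => x ^ (e - 1)) (Ioc (0:ℝ) 1) := by
      have h := intervalIntegral.intervalIntegrable_rpow' (r := e - 1) (by linarith)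
        (a := 0) (b := 1)
      rwa [intervalIntegrable_iff_integrableOn_Ioc_of_le (by norm_num)] at h
    refine lt_of_le_of_lt (setLIntegral_mono (by fun_prop) fun x hx => ?_)
      (MeasureTheory.Integrable.lintegral_lt_top hint)
    obtain ⟨hx0, hx1⟩ := hx
    rw [abs_of_pos hx0, ← ENNReal.ofReal_mul (by positivity)]
    refine ENNReal.ofReal_le_ofReal ?_
    have h1 : (1 + x) ^ (-(k:ℝ)) ≤ 1 :=
      Real.rpow_le_one_of_one_le_of_nonpos (by linarith) (by simp)
    calc x⁻¹ * ((1 + x) ^ (-(k:ℝ)) * x ^ e) ≤ x⁻¹ * (1 * x ^ e) := by gcongr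
      _ = x ^ (-1:ℝ) * x ^ e := by rw [one_mul, Real.rpow_neg_one]
      _ = x ^ (e - 1) := by rw [← Real.rpow_add hx0]; congr 1; ring
  have hpart2 : ∫⁻ x in Ioi (1:ℝ), ENNReal.ofReal |x|⁻¹
      * ENNReal.ofReal ((1 + |x|) ^ (-(k:ℝ)) * |x| ^ e) < ⊤ := by
    have hint : IntegrableOn (fun x : ℝ => x ^ (e - 1 - k)) (Ioi (1:ℝ)) :=
      integrableOn_Ioi_rpow_of_lt (by linarith) zero_lt_one
    refine lt_of_le_of_lt (setLIntegral_mono (by fun_prop) fun x hx => ?_)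
      (MeasureTheory.Integrable.lintegral_lt_top hint)
    have hx0 : (0:ℝ) < x := lt_trans zero_lt_one hx
    rw [abs_of_pos hx0, ← ENNReal.ofReal_mul (by positivity)]
    refine ENNReal.ofReal_le_ofReal ?_
    have h1 : (1 + x) ^ (-(k:ℝ)) ≤ x ^ (-(k:ℝ)) :=
      Real.rpow_le_rpow_of_nonpos hx0 (by linarith) (by simp)
    calc x⁻¹ * ((1 + x) ^ (-(k:ℝ)) * x ^ e) ≤ x⁻¹ * (x ^ (-(k:ℝ)) * x ^ e) := by gcongr
      _ = x ^ (-1:ℝ) * x ^ (-(k:ℝ) + e) := by rw [← Real.rpow_add hx0, Real.rpow_neg_one]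
      _ = x ^ (e - 1 - k) := by rw [← Real.rpow_add hx0]; congr 1; ring
  rw [hsplit, lintegral_union measurableSet_Ioi (Ioc_disjoint_Ioi le_rfl)]
  exact ENNReal.add_lt_top.2 ⟨hpart1, hpart2⟩

lemma schwartz_decay (k : ℕ) (M₂ : SchwartzMap (ℝ × ℝ × ℝ × ℝ) ℂ) :
    ∃ CM : ℝ, 0 ≤ CM ∧ ∀ v : ℝ × ℝ × ℝ × ℝ,
      ‖M₂ v‖ ≤ CM * ((1 + |v.1|) * (1 + |v.2.1|) * (1 + |v.2.2.1|) * (1 + |v.2.2.2|))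
        ^ (-(k:ℝ)) := by
  set C0 : ℝ := 2 ^ (4*k) *
    ((Finset.Iic ((4*k : ℕ), (0:ℕ))).sup fun m => SchwartzMap.seminorm ℝ m.1 m.2) M₂ with hC0
  have hC0nn : 0 ≤ C0 := by positivity
  refine ⟨C0, hC0nn, fun v => ?_⟩
  have h := SchwartzMap.one_add_le_sup_seminorm_apply (𝕜 := ℝ) (m := ((4*k : ℕ), (0:ℕ)))
    le_rfl le_rfl M₂ v
  rw [norm_iteratedFDeriv_zero] at h
  set P : ℝ := (1 + |v.1|) * (1 + |v.2.1|) * (1 + |v.2.2.1|) * (1 + |v.2.2.2|) with hP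
  have hP0 : 0 < P := by positivity
  have hb1 : 1 + |v.1| ≤ 1 + ‖v‖ := by
    have := (norm_fst_le v).trans (le_refl ‖v‖)
    simp only [Real.norm_eq_abs] at this ⊢
    linarith [norm_fst_le v]
  have hv1 : |v.1| ≤ ‖v‖ := by
    simpa [Real.norm_eq_abs] using norm_fst_le v
  have hv2 : |v.2.1| ≤ ‖v‖ := by
    have h1 : ‖v.2.1‖ ≤ ‖v.2‖ := norm_fst_le v.2
    have h2 : ‖v.2‖ ≤ ‖v‖ := norm_snd_le v
    simpa [Real.norm_eq_abs] using h1.trans h2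
  have hv3 : |v.2.2.1| ≤ ‖v‖ := by
    have h1 : ‖v.2.2.1‖ ≤ ‖v.2.2‖ := norm_fst_le v.2.2
    have h2 : ‖v.2.2‖ ≤ ‖v.2‖ := norm_snd_le v.2
    have h3 : ‖v.2‖ ≤ ‖v‖ := norm_snd_le v
    simpa [Real.norm_eq_abs] using (h1.trans h2).trans h3
  have hv4 : |v.2.2.2| ≤ ‖v‖ := by
    have h1 : ‖v.2.2.2‖ ≤ ‖v.2.2‖ := norm_snd_le v.2.2
    have h2 : ‖v.2.2‖ ≤ ‖v.2‖ := norm_snd_le v.2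
    have h3 : ‖v.2‖ ≤ ‖v‖ := norm_snd_le v
    simpa [Real.norm_eq_abs] using (h1.trans h2).trans h3
  have hPle : P ≤ (1 + ‖v‖) ^ 4 := by
    calc P ≤ (1 + ‖v‖) * (1 + ‖v‖) * (1 + ‖v‖) * (1 + ‖v‖) := by
          rw [hP]
          gcongr <;> positivity
      _ = (1 + ‖v‖) ^ 4 := by ring
  have hPk : P ^ k ≤ (1 + ‖v‖) ^ (4 * k) := by
    calc P ^ k ≤ ((1 + ‖v‖) ^ 4) ^ k := pow_le_pow_left₀ hP0.le hPle k
      _ = (1 + ‖v‖) ^ (4 * k) := by rw [← pow_mul]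
  have hkey : ‖M₂ v‖ * P ^ k ≤ C0 := by
    calc ‖M₂ v‖ * P ^ k ≤ ‖M₂ v‖ * (1 + ‖v‖) ^ (4 * k) := by gcongr
      _ = (1 + ‖v‖) ^ (4 * k) * ‖M₂ v‖ := by ring
      _ ≤ C0 := h
  have hPkpos : (0:ℝ) < P ^ k := by positivity
  have : ‖M₂ v‖ ≤ C0 / P ^ k := (le_div_iff₀ hPkpos).2 hkey
  refine this.trans (le_of_eq ?_)
  rw [div_eq_mul_inv]
  congr 1
  rw [Real.rpow_neg hP0.le, ← Real.rpow_natCast P k]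

lemma rpow_identity (β γ θ σ : ℝ) {t x₁ x₂ x₃ : ℝ} (ht : 0 < t) (h₁ : 0 < x₁)
    (h₂ : 0 < x₂) (h₃ : 0 < x₃) :
    (x₁*x₂*x₃/t) ^ (-σ) * (t/(x₁*x₃)) ^ θ * ((t/(x₁*x₂*x₃)) ^ (-(β+1)) *
      ((t/(x₂*x₃)) ^ β * x₃ ^ γ))
      = t ^ (θ+σ-1) * (x₁ ^ (β+1-θ-σ) * (x₂ ^ (1-σ) * x₃ ^ (γ+1-θ-σ))) := by
  have hA : (0:ℝ) < x₁*x₂*x₃/t := by positivity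
  have hw : (0:ℝ) < t/(x₁*x₃) := by positivity
  have hB : (0:ℝ) < t/(x₁*x₂*x₃) := by positivity
  have hv : (0:ℝ) < t/(x₂*x₃) := by positivity
  have n1 : x₁ ≠ 0 := h₁.ne'
  have n2 : x₂ ≠ 0 := h₂.ne'
  have n3 : x₃ ≠ 0 := h₃.ne'
  have nt : t ≠ 0 := ht.ne'
  rw [Real.rpow_def_of_pos hA, Real.rpow_def_of_pos hw, Real.rpow_def_of_pos hB,
    Real.rpow_def_of_pos hv, Real.rpow_def_of_pos h₃, Real.rpow_def_of_pos ht,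
    Real.rpow_def_of_pos h₁, Real.rpow_def_of_pos h₂, Real.rpow_def_of_pos h₃]
  simp only [← Real.exp_add]
  congr 1
  rw [Real.log_div (by positivity) nt, Real.log_div nt (by positivity),
    Real.log_div nt (by positivity), Real.log_div nt (by positivity),
    Real.log_mul (mul_ne_zero n1 n2) n3, Real.log_mul n1 n2,
    Real.log_mul n1 n3, Real.log_mul n2 n3]
  ring

lemma arith_bound {α β γ θ σ : ℝ} (k : ℕ)
    (hθ0 : 0 ≤ θ) (hθα : θ ≤ α) (hσ0 : 0 ≤ σ) (hσk : σ ≤ k)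
    {t x₁ x₂ x₃ : ℝ} (ht : 0 < t) (h₁ : 0 < x₁) (h₂ : 0 < x₂) (h₃ : 0 < x₃) :
    ((1 + x₁*x₂*x₃/t) * (1 + x₂) * (1 + x₁) * (1 + x₃)) ^ (-(k:ℝ)) *
      max 1 (t/(x₁*x₃)) ^ (-α) * (t/(x₁*x₂*x₃)) ^ (-(β+1)) *
      ((t/(x₁*x₃)) ^ α * (t/(x₂*x₃)) ^ β * x₃ ^ γ)
    ≤ t ^ (θ+σ-1) *
      ((1 + x₁) ^ (-(k:ℝ)) * x₁ ^ (β+1-θ-σ) *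
        ((1 + x₂) ^ (-(k:ℝ)) * x₂ ^ (1-σ) * ((1 + x₃) ^ (-(k:ℝ)) * x₃ ^ (γ+1-θ-σ)))) := by
  have hA : (0:ℝ) < x₁*x₂*x₃/t := by positivity
  have hw : (0:ℝ) < t/(x₁*x₃) := by positivity
  set A := x₁*x₂*x₃/t with hAdef
  set w := t/(x₁*x₃) with hwdef
  have hsplit : ((1 + A) * (1 + x₂) * (1 + x₁) * (1 + x₃)) ^ (-(k:ℝ))
      = (1 + A) ^ (-(k:ℝ)) * (1 + x₂) ^ (-(k:ℝ)) * (1 + x₁) ^ (-(k:ℝ))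
        * (1 + x₃) ^ (-(k:ℝ)) := by
    rw [Real.mul_rpow (by positivity) (by positivity), Real.mul_rpow (by positivity)
      (by positivity), Real.mul_rpow (by positivity) (by positivity)]
  have hminmax : max 1 w ^ (-α) * w ^ α = min 1 w ^ α := by
    have hmax : (0:ℝ) < max 1 w := lt_max_of_lt_left one_pos
    rw [Real.rpow_neg hmax.le, inv_mul_eq_div, ← Real.div_rpow hw.le hmax.le]
    congr 1
    rcases le_total w 1 with hw1 | hw1
    · rw [max_eq_left hw1, min_eq_right hw1, div_one]
    · rw [max_eq_right hw1, min_eq_left hw1, div_self hw.ne']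
  have hmin : min 1 w ^ α ≤ w ^ θ := by
    have hminpos : (0:ℝ) < min 1 w := lt_min one_pos hw
    have h1 : min 1 w ^ α ≤ min 1 w ^ θ :=
      Real.rpow_le_rpow_of_exponent_ge hminpos (min_le_left _ _) hθα
    have h2 : min 1 w ^ θ ≤ w ^ θ :=
      Real.rpow_le_rpow hminpos.le (min_le_right _ _) hθ0
    exact h1.trans h2
  have hAk : (1 + A) ^ (-(k:ℝ)) ≤ A ^ (-σ) := by
    have h1 : (1 + A) ^ (-(k:ℝ)) ≤ (1 + A) ^ (-σ) :=
      Real.rpow_le_rpow_of_exponent_le (by linarith) (by simpa using hσk)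
    have h2 : (1 + A) ^ (-σ) ≤ A ^ (-σ) :=
      Real.rpow_le_rpow_of_nonpos hA (by linarith) (by linarith)
    exact h1.trans h2
  calc ((1 + A) * (1 + x₂) * (1 + x₁) * (1 + x₃)) ^ (-(k:ℝ)) *
      max 1 w ^ (-α) * (t/(x₁*x₂*x₃)) ^ (-(β+1)) * (w ^ α * (t/(x₂*x₃)) ^ β * x₃ ^ γ)
      = ((1 + x₂) ^ (-(k:ℝ)) * (1 + x₁) ^ (-(k:ℝ)) * (1 + x₃) ^ (-(k:ℝ))) *
        ((1 + A) ^ (-(k:ℝ)) * (max 1 w ^ (-α) * w ^ α) *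
          ((t/(x₁*x₂*x₃)) ^ (-(β+1)) * ((t/(x₂*x₃)) ^ β * x₃ ^ γ))) := by
        rw [hsplit]; ring
    _ = ((1 + x₂) ^ (-(k:ℝ)) * (1 + x₁) ^ (-(k:ℝ)) * (1 + x₃) ^ (-(k:ℝ))) *
        ((1 + A) ^ (-(k:ℝ)) * min 1 w ^ α *
          ((t/(x₁*x₂*x₃)) ^ (-(β+1)) * ((t/(x₂*x₃)) ^ β * x₃ ^ γ))) := by
        rw [hminmax]
    _ ≤ ((1 + x₂) ^ (-(k:ℝ)) * (1 + x₁) ^ (-(k:ℝ)) * (1 + x₃) ^ (-(k:ℝ))) *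
        (A ^ (-σ) * w ^ θ *
          ((t/(x₁*x₂*x₃)) ^ (-(β+1)) * ((t/(x₂*x₃)) ^ β * x₃ ^ γ))) := by
        gcongr
    _ = ((1 + x₂) ^ (-(k:ℝ)) * (1 + x₁) ^ (-(k:ℝ)) * (1 + x₃) ^ (-(k:ℝ))) *
        (t ^ (θ+σ-1) * (x₁ ^ (β+1-θ-σ) * (x₂ ^ (1-σ) * x₃ ^ (γ+1-θ-σ)))) := by
        rw [← rpow_identity β γ θ σ ht h₁ h₂ h₃]
    _ = t ^ (θ+σ-1) *
        ((1 + x₁) ^ (-(k:ℝ)) * x₁ ^ (β+1-θ-σ) *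
          ((1 + x₂) ^ (-(k:ℝ)) * x₂ ^ (1-σ) *
            ((1 + x₃) ^ (-(k:ℝ)) * x₃ ^ (γ+1-θ-σ)))) := by ring

def integrand (d₁ d₂ d₃ : ℕ) (M₂ : SchwartzMap (ℝ × ℝ × ℝ × ℝ) ℂ) (c : ℝ)
    (a : ℝ × ℝ × ℝ) : ℝ :=
  ‖M₂ (c / (a.1 * a.2.1 * a.2.2), a.1 * c / (a.1 * a.2.1 * a.2.2),
      a.2.1 * c / (a.1 * a.2.1 * a.2.2), a.2.2)‖ *
    max 1 |a.1| ^ (1 - (d₁ : ℝ) / 2) *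
    |a.1 * a.2.1 * a.2.2 / c| ^ (-(d₂ : ℝ) / 2) *
    (|a.1| ^ ((d₁ : ℝ) / 2 - 1) * |a.2.1| ^ ((d₂ : ℝ) / 2 - 1) *
      |a.2.2| ^ ((d₃ : ℝ) / 2 - 1))

lemma integrand_meas (d₁ d₂ d₃ : ℕ) (M₂ : SchwartzMap (ℝ × ℝ × ℝ × ℝ) ℂ) (c : ℝ) :
    Measurable fun a : ℝ × ℝ × ℝ => ENNReal.ofReal (integrand d₁ d₂ d₃ M₂ c a) := by
  unfold integrand
  have hM : Measurable fun v : ℝ × ℝ × ℝ × ℝ => ‖M₂ v‖ := M₂.continuous.norm.measurable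
  apply Measurable.ennreal_ofReal
  apply Measurable.mul
  apply Measurable.mul
  apply Measurable.mul
  · exact hM.comp (by fun_prop)
  · exact (measurable_const.max (by fun_prop : Measurable fun a : ℝ × ℝ × ℝ => |a.1|)).pow
      measurable_const
  · exact (by fun_prop : Measurable fun a : ℝ × ℝ × ℝ => |a.1 * a.2.1 * a.2.2 / c|).pow
      measurable_const
  · refine Measurable.mul (Measurable.mul ?_ ?_) ?_
    · exact (by fun_prop : Measurable fun a : ℝ × ℝ × ℝ => |a.1|).pow measurable_const
    · exact (by fun_prop : Measurable fun a : ℝ × ℝ × ℝ => |a.2.1|).pow measurable_const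
    · exact (by fun_prop : Measurable fun a : ℝ × ℝ × ℝ => |a.2.2|).pow measurable_const

lemma pointwise_real (d₁ d₂ d₃ k : ℕ) (M₂ : SchwartzMap (ℝ × ℝ × ℝ × ℝ) ℂ)
    (CM : ℝ) (hCM0 : 0 ≤ CM)
    (hCM : ∀ v : ℝ × ℝ × ℝ × ℝ, ‖M₂ v‖
      ≤ CM * ((1 + |v.1|) * (1 + |v.2.1|) * (1 + |v.2.2.1|) * (1 + |v.2.2.2|)) ^ (-(k:ℝ)))
    (θ σ : ℝ) (hθ0 : 0 ≤ θ) (hθα : θ ≤ (d₁:ℝ)/2 - 1) (hσ0 : 0 ≤ σ) (hσk : σ ≤ (k:ℝ))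
    {c b₁ b₂ b₃ : ℝ} (hc : c ≠ 0) (h1 : b₁ ≠ 0) (h2 : b₂ ≠ 0) (h3 : b₃ ≠ 0) :
    integrand d₁ d₂ d₃ M₂ c (c / (b₁ * b₃), c / (b₂ * b₃), b₃)
      ≤ CM * |c| ^ (θ + σ - 1) *
        ((1 + |b₁|) ^ (-(k:ℝ)) * |b₁| ^ ((d₂:ℝ)/2 - 1 + 1 - θ - σ) *
          ((1 + |b₂|) ^ (-(k:ℝ)) * |b₂| ^ (1 - σ) *
            ((1 + |b₃|) ^ (-(k:ℝ)) * |b₃| ^ ((d₃:ℝ)/2 - 1 + 1 - θ - σ)))) := by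
  have hb13 : b₁ * b₃ ≠ 0 := mul_ne_zero h1 h3
  have hb23 : b₂ * b₃ ≠ 0 := mul_ne_zero h2 h3
  have e1 : c / (c/(b₁*b₃) * (c/(b₂*b₃)) * b₃) = b₁*b₂*b₃/c := by
    field_simp
  have e2 : c/(b₁*b₃) * c / (c/(b₁*b₃) * (c/(b₂*b₃)) * b₃) = b₂ := by
    field_simp
  have e3 : c/(b₂*b₃) * c / (c/(b₁*b₃) * (c/(b₂*b₃)) * b₃) = b₁ := by
    field_simp
  have e4 : c/(b₁*b₃) * (c/(b₂*b₃)) * b₃ / c = c/(b₁*b₂*b₃) := by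
    field_simp
  have hx1 : (0:ℝ) < |b₁| := abs_pos.2 h1
  have hx2 : (0:ℝ) < |b₂| := abs_pos.2 h2
  have hx3 : (0:ℝ) < |b₃| := abs_pos.2 h3
  have ht : (0:ℝ) < |c| := abs_pos.2 hc
  have habs1 : |c/(b₁*b₃)| = |c| / (|b₁| * |b₃|) := by rw [abs_div, abs_mul]
  have habs2 : |c/(b₂*b₃)| = |c| / (|b₂| * |b₃|) := by rw [abs_div, abs_mul]
  have habs3 : |c/(b₁*b₂*b₃)| = |c| / (|b₁| * |b₂| * |b₃|) := by rw [abs_div, abs_mul, abs_mul]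
  have habs4 : |b₁*b₂*b₃/c| = |b₁| * |b₂| * |b₃| / |c| := by rw [abs_div, abs_mul, abs_mul]
  have hexp1 : 1 - (d₁:ℝ)/2 = -((d₁:ℝ)/2 - 1) := by ring
  have hexp2 : -(d₂:ℝ)/2 = -(((d₂:ℝ)/2 - 1)+1) := by ring
  simp only [integrand]
  rw [e1, e2, e3, e4, hexp1, hexp2, habs1, habs2, habs3]
  have hb := hCM (b₁*b₂*b₃/c, b₂, b₁, b₃)
  simp only [habs4] at hb
  calc ‖M₂ (b₁*b₂*b₃/c, b₂, b₁, b₃)‖ *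
        max 1 (|c| / (|b₁| * |b₃|)) ^ (-((d₁:ℝ)/2 - 1)) *
        (|c| / (|b₁| * |b₂| * |b₃|)) ^ (-(((d₂:ℝ)/2 - 1)+1)) *
        ((|c| / (|b₁| * |b₃|)) ^ ((d₁:ℝ)/2 - 1) * (|c| / (|b₂| * |b₃|)) ^ ((d₂:ℝ)/2 - 1) *
          |b₃| ^ ((d₃:ℝ)/2 - 1))
      ≤ (CM * ((1 + |b₁| * |b₂| * |b₃| / |c|) * (1 + |b₂|) * (1 + |b₁|) * (1 + |b₃|)) ^ (-(k:ℝ))) *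
        max 1 (|c| / (|b₁| * |b₃|)) ^ (-((d₁:ℝ)/2 - 1)) *
        (|c| / (|b₁| * |b₂| * |b₃|)) ^ (-(((d₂:ℝ)/2 - 1)+1)) *
        ((|c| / (|b₁| * |b₃|)) ^ ((d₁:ℝ)/2 - 1) * (|c| / (|b₂| * |b₃|)) ^ ((d₂:ℝ)/2 - 1) *
          |b₃| ^ ((d₃:ℝ)/2 - 1)) := by
        gcongr
    _ = CM * (((1 + |b₁| * |b₂| * |b₃| / |c|) * (1 + |b₂|) * (1 + |b₁|) * (1 + |b₃|)) ^ (-(k:ℝ)) *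
        max 1 (|c| / (|b₁| * |b₃|)) ^ (-((d₁:ℝ)/2 - 1)) *
        (|c| / (|b₁| * |b₂| * |b₃|)) ^ (-(((d₂:ℝ)/2 - 1)+1)) *
        ((|c| / (|b₁| * |b₃|)) ^ ((d₁:ℝ)/2 - 1) * (|c| / (|b₂| * |b₃|)) ^ ((d₂:ℝ)/2 - 1) *
          |b₃| ^ ((d₃:ℝ)/2 - 1))) := by ring
    _ ≤ CM * (|c| ^ (θ + σ - 1) *
        ((1 + |b₁|) ^ (-(k:ℝ)) * |b₁| ^ (((d₂:ℝ)/2 - 1) + 1 - θ - σ) *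
          ((1 + |b₂|) ^ (-(k:ℝ)) * |b₂| ^ (1 - σ) *
            ((1 + |b₃|) ^ (-(k:ℝ)) * |b₃| ^ (((d₃:ℝ)/2 - 1) + 1 - θ - σ))))) := by
        refine mul_le_mul_of_nonneg_left ?_ hCM0
        exact arith_bound k hθ0 hθα hσ0 hσk ht hx1 hx2 hx3
    _ = CM * |c| ^ (θ + σ - 1) *
        ((1 + |b₁|) ^ (-(k:ℝ)) * |b₁| ^ ((d₂:ℝ)/2 - 1 + 1 - θ - σ) *
          ((1 + |b₂|) ^ (-(k:ℝ)) * |b₂| ^ (1 - σ) *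
            ((1 + |b₃|) ^ (-(k:ℝ)) * |b₃| ^ ((d₃:ℝ)/2 - 1 + 1 - θ - σ)))) := by ring

lemma core (d₁ d₂ d₃ : ℕ) (hd₁ : 4 ≤ d₁) (hd₂ : 4 ≤ d₂) (hd₃ : 4 ≤ d₃)
    (M₂ : SchwartzMap (ℝ × ℝ × ℝ × ℝ) ℂ) (θ σ : ℝ)
    (hθ0 : 0 ≤ θ) (hθα : θ ≤ (d₁:ℝ)/2 - 1) (hσ0 : 0 ≤ σ) (hσ1 : σ < 1)
    (he₁ : 0 < (d₂:ℝ)/2 - 1 + 1 - θ - σ) (he₃ : 0 < (d₃:ℝ)/2 - 1 + 1 - θ - σ) :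
    ∃ C : ℝ, 0 < C ∧ ∀ c : ℝ, c ≠ 0 →
      ∫⁻ a, ENNReal.ofReal (integrand d₁ d₂ d₃ M₂ c a) ∂mulHaar3
        ≤ ENNReal.ofReal (C * |c| ^ (θ + σ - 1)) := by
  set k := d₂ + d₃ with hkdef
  obtain ⟨CM, hCM0, hCM⟩ := schwartz_decay k M₂
  have hd₂R : (4:ℝ) ≤ (d₂:ℝ) := by exact_mod_cast hd₂
  have hd₃R : (4:ℝ) ≤ (d₃:ℝ) := by exact_mod_cast hd₃
  have hkR : (k:ℝ) = (d₂:ℝ) + (d₃:ℝ) := by rw [hkdef]; push_cast; ring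
  set e₁ : ℝ := (d₂:ℝ)/2 - 1 + 1 - θ - σ with he₁def
  set e₂ : ℝ := 1 - σ with he₂def
  set e₃ : ℝ := (d₃:ℝ)/2 - 1 + 1 - θ - σ with he₃def
  have he₂pos : 0 < e₂ := by rw [he₂def]; linarith
  have he₁k : e₁ < (k:ℝ) := by rw [he₁def, hkR]; linarith
  have he₂k : e₂ < (k:ℝ) := by rw [he₂def, hkR]; linarith
  have he₃k : e₃ < (k:ℝ) := by rw [he₃def, hkR]; linarith
  set G₁ : ℝ → ℝ≥0∞ := fun b => ENNReal.ofReal ((1 + |b|) ^ (-(k:ℝ)) * |b| ^ e₁) with hG₁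
  set G₂ : ℝ → ℝ≥0∞ := fun b => ENNReal.ofReal ((1 + |b|) ^ (-(k:ℝ)) * |b| ^ e₂) with hG₂
  set G₃ : ℝ → ℝ≥0∞ := fun b => ENNReal.ofReal ((1 + |b|) ^ (-(k:ℝ)) * |b| ^ e₃) with hG₃
  set J₁ := ∫⁻ b, G₁ b ∂mulHaar with hJ₁def
  set J₂ := ∫⁻ b, G₂ b ∂mulHaar with hJ₂def
  set J₃ := ∫⁻ b, G₃ b ∂mulHaar with hJ₃def
  have hJ₁ : J₁ < ⊤ := G_finite he₁ he₁k
  have hJ₂ : J₂ < ⊤ := G_finite he₂pos he₂k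
  have hJ₃ : J₃ < ⊤ := G_finite he₃ he₃k
  refine ⟨CM * (J₁.toReal * J₂.toReal * J₃.toReal) + 1, by
    have hnn : (0:ℝ) ≤ J₁.toReal * J₂.toReal * J₃.toReal := by positivity
    nlinarith, fun c hc => ?_⟩
  have hσk : σ ≤ (k:ℝ) := by rw [hkR]; linarith
  have htc : (0:ℝ) < |c| := abs_pos.2 hc
  set D := ENNReal.ofReal (CM * |c| ^ (θ + σ - 1)) with hD
  have hDne : D ≠ ⊤ := ENNReal.ofReal_ne_top
  have hpt : ∀ b₁ b₂ b₃ : ℝ, b₁ ≠ 0 → b₂ ≠ 0 → b₃ ≠ 0 →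
      ENNReal.ofReal (integrand d₁ d₂ d₃ M₂ c (c / (b₁ * b₃), c / (b₂ * b₃), b₃))
        ≤ D * G₁ b₁ * G₃ b₃ * G₂ b₂ := by
    intro b₁ b₂ b₃ h1 h2 h3
    refine le_trans (ENNReal.ofReal_le_ofReal
      (pointwise_real d₁ d₂ d₃ k M₂ CM hCM0 hCM θ σ hθ0 hθα hσ0 hσk hc h1 h2 h3)) ?_
    refine le_of_eq ?_
    simp only [hD, hG₁, hG₂, hG₃, he₁def, he₂def, he₃def]
    have htpow : (0:ℝ) ≤ |c| ^ (θ + σ - 1) := Real.rpow_nonneg (abs_nonneg c) _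
    have hP : (0:ℝ) ≤ CM * |c| ^ (θ + σ - 1) := mul_nonneg hCM0 htpow
    have hQ₁ : (0:ℝ) ≤ (1 + |b₁|) ^ (-(k:ℝ)) * |b₁| ^ ((d₂:ℝ)/2 - 1 + 1 - θ - σ) := by
      positivity
    have hQ₂ : (0:ℝ) ≤ (1 + |b₂|) ^ (-(k:ℝ)) * |b₂| ^ (1 - σ) := by positivity
    rw [ENNReal.ofReal_mul hP, ENNReal.ofReal_mul hQ₁, ENNReal.ofReal_mul hQ₂]
    ring
  rw [triple_subst hc _ (integrand_meas d₁ d₂ d₃ M₂ c)]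
  have inner2 : ∀ b₁ b₃ : ℝ, b₁ ≠ 0 → b₃ ≠ 0 →
      ∫⁻ b₂, ENNReal.ofReal (integrand d₁ d₂ d₃ M₂ c (c / (b₁ * b₃), c / (b₂ * b₃), b₃))
          ∂mulHaar
        ≤ D * G₁ b₁ * G₃ b₃ * J₂ := by
    intro b₁ b₃ h1 h3
    have hmono : ∫⁻ b₂, ENNReal.ofReal
          (integrand d₁ d₂ d₃ M₂ c (c / (b₁ * b₃), c / (b₂ * b₃), b₃)) ∂mulHaar
        ≤ ∫⁻ b₂, D * G₁ b₁ * G₃ b₃ * G₂ b₂ ∂mulHaar := by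
      refine lintegral_mono_ae ?_
      filter_upwards [mulHaar_ae_ne] with b₂ h2
      exact hpt b₁ b₂ b₃ h1 h2 h3
    refine hmono.trans (le_of_eq ?_)
    exact lintegral_const_mul' _ _
      (ENNReal.mul_ne_top (ENNReal.mul_ne_top hDne ENNReal.ofReal_ne_top)
        ENNReal.ofReal_ne_top)
  have inner1 : ∀ b₃ : ℝ, b₃ ≠ 0 →
      ∫⁻ b₁, ∫⁻ b₂, ENNReal.ofReal
          (integrand d₁ d₂ d₃ M₂ c (c / (b₁ * b₃), c / (b₂ * b₃), b₃)) ∂mulHaar ∂mulHaar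
        ≤ D * G₃ b₃ * J₂ * J₁ := by
    intro b₃ h3
    have hmono : ∫⁻ b₁, ∫⁻ b₂, ENNReal.ofReal
          (integrand d₁ d₂ d₃ M₂ c (c / (b₁ * b₃), c / (b₂ * b₃), b₃)) ∂mulHaar ∂mulHaar
        ≤ ∫⁻ b₁, D * G₁ b₁ * G₃ b₃ * J₂ ∂mulHaar := by
      refine lintegral_mono_ae ?_
      filter_upwards [mulHaar_ae_ne] with b₁ h1
      exact inner2 b₁ b₃ h1 h3
    refine hmono.trans (le_of_eq ?_)
    have hcongr : ∀ b₁ : ℝ, D * G₁ b₁ * G₃ b₃ * J₂ = D * G₃ b₃ * J₂ * G₁ b₁ := fun b₁ => by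
      ring
    rw [lintegral_congr hcongr]
    exact lintegral_const_mul' _ _
      (ENNReal.mul_ne_top (ENNReal.mul_ne_top hDne ENNReal.ofReal_ne_top) hJ₂.ne)
  have houter : ∫⁻ b₃, ∫⁻ b₁, ∫⁻ b₂, ENNReal.ofReal
        (integrand d₁ d₂ d₃ M₂ c (c / (b₁ * b₃), c / (b₂ * b₃), b₃)) ∂mulHaar ∂mulHaar ∂mulHaar
      ≤ D * J₂ * J₁ * J₃ := by
    have hmono : ∫⁻ b₃, ∫⁻ b₁, ∫⁻ b₂, ENNReal.ofReal
          (integrand d₁ d₂ d₃ M₂ c (c / (b₁ * b₃), c / (b₂ * b₃), b₃)) ∂mulHaar ∂mulHaar ∂mulHaar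
        ≤ ∫⁻ b₃, D * G₃ b₃ * J₂ * J₁ ∂mulHaar := by
      refine lintegral_mono_ae ?_
      filter_upwards [mulHaar_ae_ne] with b₃ h3
      exact inner1 b₃ h3
    refine hmono.trans (le_of_eq ?_)
    have hcongr : ∀ b₃ : ℝ, D * G₃ b₃ * J₂ * J₁ = D * J₂ * J₁ * G₃ b₃ := fun b₃ => by ring
    rw [lintegral_congr hcongr]
    exact lintegral_const_mul' _ _
      (ENNReal.mul_ne_top (ENNReal.mul_ne_top hDne hJ₂.ne) hJ₁.ne)
  refine houter.trans ?_
  have hJ₁' : J₁ = ENNReal.ofReal J₁.toReal := (ENNReal.ofReal_toReal hJ₁.ne).symm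
  have hJ₂' : J₂ = ENNReal.ofReal J₂.toReal := (ENNReal.ofReal_toReal hJ₂.ne).symm
  have hJ₃' : J₃ = ENNReal.ofReal J₃.toReal := (ENNReal.ofReal_toReal hJ₃.ne).symm
  have h0 : (0:ℝ) ≤ |c| ^ (θ + σ - 1) := Real.rpow_nonneg (abs_nonneg c) _
  have h1 : (0:ℝ) ≤ J₁.toReal := ENNReal.toReal_nonneg
  have h2 : (0:ℝ) ≤ J₂.toReal := ENNReal.toReal_nonneg
  have h3 : (0:ℝ) ≤ J₃.toReal := ENNReal.toReal_nonneg
  have hP : (0:ℝ) ≤ CM * |c| ^ (θ + σ - 1) := mul_nonneg hCM0 h0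
  calc D * J₂ * J₁ * J₃
      = ENNReal.ofReal (CM * |c| ^ (θ + σ - 1) * J₂.toReal * J₁.toReal * J₃.toReal) := by
        conv_lhs => rw [hD, hJ₂', hJ₁', hJ₃']
        rw [← ENNReal.ofReal_mul hP, ← ENNReal.ofReal_mul (mul_nonneg hP h2),
          ← ENNReal.ofReal_mul (mul_nonneg (mul_nonneg hP h2) h1)]
    _ ≤ ENNReal.ofReal ((CM * (J₁.toReal * J₂.toReal * J₃.toReal) + 1) * |c| ^ (θ + σ - 1)) := by
        refine ENNReal.ofReal_le_ofReal ?_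
        nlinarith [h0]

end Stmt11Aux

/-- Lemma 9.7 (archimedean case `F = ℝ`). -/
theorem stmt11
    (d₁ d₂ d₃ : ℕ) (hd₁e : Even d₁) (hd₂e : Even d₂) (hd₃e : Even d₃)
    (hd₁ : 4 ≤ d₁) (hd₂ : 4 ≤ d₂) (hd₃ : 4 ≤ d₃)
    (ε : ℝ) (hε0 : 0 < ε) (hε : ε < 1 / 2)
    (M₂ : SchwartzMap (ℝ × ℝ × ℝ × ℝ) ℂ) :
    ∃ C : ℝ, 0 < C ∧
      ∀ c : ℝ, c ≠ 0 →
        (∫⁻ a : ℝ × ℝ × ℝ, ENNReal.ofReal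
            (‖M₂ (c / (a.1 * a.2.1 * a.2.2), a.1 * c / (a.1 * a.2.1 * a.2.2),
                a.2.1 * c / (a.1 * a.2.1 * a.2.2), a.2.2)‖ *
              max 1 |a.1| ^ (1 - (d₁ : ℝ) / 2) *
              |a.1 * a.2.1 * a.2.2 / c| ^ (-(d₂ : ℝ) / 2) *
              (|a.1| ^ ((d₁ : ℝ) / 2 - 1) * |a.2.1| ^ ((d₂ : ℝ) / 2 - 1) *
                |a.2.2| ^ ((d₃ : ℝ) / 2 - 1))) ∂mulHaar3)
        ≤ ENNReal.ofReal
            (C * min 1 |c| ^ ((min d₁ (min d₂ d₃) : ℝ) / 2 - 1 - ε) *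
              max 1 |c| ^ (-1 : ℝ)) := by
  classical
  set m := min d₁ (min d₂ d₃) with hm
  have hm₁ : m ≤ d₁ := min_le_left _ _
  have hm₂ : m ≤ d₂ := le_trans (min_le_right _ _) (min_le_left _ _)
  have hm₃ : m ≤ d₃ := le_trans (min_le_right _ _) (min_le_right _ _)
  have hm4 : 4 ≤ m := le_min hd₁ (le_min hd₂ hd₃)
  have hm₁R : (m:ℝ) ≤ (d₁:ℝ) := by exact_mod_cast hm₁
  have hm₂R : (m:ℝ) ≤ (d₂:ℝ) := by exact_mod_cast hm₂
  have hm₃R : (m:ℝ) ≤ (d₃:ℝ) := by exact_mod_cast hm₃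
  have hm4R : (4:ℝ) ≤ (m:ℝ) := by exact_mod_cast hm4
  have hd₁R : (4:ℝ) ≤ (d₁:ℝ) := by exact_mod_cast hd₁
  have hd₂R : (4:ℝ) ≤ (d₂:ℝ) := by exact_mod_cast hd₂
  have hd₃R : (4:ℝ) ≤ (d₃:ℝ) := by exact_mod_cast hd₃
  obtain ⟨C₁, hC₁pos, H₁⟩ := Stmt11Aux.core d₁ d₂ d₃ hd₁ hd₂ hd₃ M₂ 0 0 le_rfl
    (by linarith) le_rfl one_pos (by linarith) (by linarith)
  obtain ⟨C₂, hC₂pos, H₂⟩ := Stmt11Aux.core d₁ d₂ d₃ hd₁ hd₂ hd₃ M₂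
    ((m:ℝ)/2 - 1 - ε/2) (1 - ε/2) (by linarith) (by linarith) (by linarith) (by linarith)
    (by linarith) (by linarith)
  refine ⟨C₁ + C₂, by positivity, fun c hc => ?_⟩
  have htc : (0:ℝ) < |c| := abs_pos.2 hc
  have hcast : ((d₁:ℝ) ⊓ ((d₂:ℝ) ⊓ (d₃:ℝ))) = ((m:ℝ)) := by
    rw [hm]; push_cast; rfl
  rw [hcast]
  show (∫⁻ a : ℝ × ℝ × ℝ, ENNReal.ofReal
      (Stmt11Aux.integrand d₁ d₂ d₃ M₂ c a) ∂mulHaar3)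
      ≤ ENNReal.ofReal ((C₁ + C₂) * min 1 |c| ^ ((m : ℝ) / 2 - 1 - ε) *
        max 1 |c| ^ (-1 : ℝ))
  rcases le_or_gt |c| 1 with hle | hlt
  · have hmin : min 1 |c| = |c| := min_eq_right hle
    have hmax : max 1 |c| = 1 := max_eq_left hle
    rw [hmin, hmax, Real.one_rpow, mul_one]
    refine le_trans (H₂ c hc) (ENNReal.ofReal_le_ofReal ?_)
    have he : (m:ℝ)/2 - 1 - ε/2 + (1 - ε/2) - 1 = (m:ℝ)/2 - 1 - ε := by ring
    rw [he]
    have h0 : (0:ℝ) ≤ |c| ^ ((m:ℝ)/2 - 1 - ε) := Real.rpow_nonneg (abs_nonneg c) _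
    nlinarith
  · have hmin : min 1 |c| = 1 := min_eq_left hlt.le
    have hmax : max 1 |c| = |c| := max_eq_right hlt.le
    rw [hmin, hmax, Real.one_rpow, mul_one]
    refine le_trans (H₁ c hc) (ENNReal.ofReal_le_ofReal ?_)
    have he : (0:ℝ) + 0 - 1 = -1 := by norm_num
    rw [he]
    have h0 : (0:ℝ) ≤ |c| ^ (-1:ℝ) := Real.rpow_nonneg (abs_nonneg c) _
    nlinarith
end
end

section
/- Let d₁, d₂, d₃ be even integers with dᵢ ≥ 4, let ε ∈ (0, 1/2), and let M₃ be a Schwartz function on ℝ⁴. Then there is a constant C > 0 (depending on M₃, ε and the dᵢ) such that for every c ∈ ℝ∖{0}: ∫_{(ℝ^×)³} | M₃( c/[a], a₁c/[a], a₂c/[a], a₃c/[a] ) | · max(1, |a₁|)^{1−d₁/2} · max(1, |a₂|)^{1−d₂/2} · |[a]/c|^{−d₃/2} · {a}^{d/2−1} d^×a ≤ C · min(1, |c|)^{min(d₁,d₂,d₃)/2 − 1 − ε}. (Lemma 9.8 of the paper, archimedean case F = ℝ.) -/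
open MeasureTheory

noncomputable section

open Set
open scoped ENNReal

instance : SFinite mulHaar := by unfold mulHaar; infer_instance

namespace StmtAux

/-- The basic weight function `min(1,|x|)^p * max(1,|x|)^{-q}`. -/
def phi (p q x : ℝ) : ℝ := min 1 |x| ^ p * max 1 |x| ^ (-q)

lemma phi_nonneg (p q x : ℝ) : 0 ≤ phi p q x := by
  apply mul_nonneg <;> apply Real.rpow_nonneg
  · exact le_min zero_le_one (abs_nonneg x)
  · exact le_trans zero_le_one (le_max_left _ _)

lemma min_one_abs_nonneg (x : ℝ) : 0 ≤ min 1 |x| := le_min zero_le_one (abs_nonneg x)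
lemma min_one_abs_le_one (x : ℝ) : min 1 |x| ≤ 1 := min_le_left _ _
lemma one_le_max_one_abs (x : ℝ) : 1 ≤ max 1 |x| := le_max_left _ _
lemma max_one_abs_pos (x : ℝ) : 0 < max 1 |x| := lt_of_lt_of_le one_pos (le_max_left _ _)
lemma min_one_abs_pos {x : ℝ} (hx : x ≠ 0) : 0 < min 1 |x| :=
  lt_min one_pos (abs_pos.mpr hx)

lemma measurable_phi (p q : ℝ) : Measurable (phi p q) := by
  apply Measurable.mul
  · exact (measurable_const.min measurable_abs).pow_const _
  · exact ((measurable_const.max measurable_abs).pow_const _)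

lemma phi_zero (p q : ℝ) (hp : p ≠ 0) : phi p q 0 = 0 := by
  simp [phi, Real.zero_rpow hp]

/-- monotonicity in the exponents -/
lemma phi_le_phi {p q r s : ℝ} (hr : 0 < r) (hrp : r ≤ p) (hsq : s ≤ q) (x : ℝ) :
    phi p q x ≤ phi r s x := by
  rcases eq_or_ne x 0 with rfl | hx
  · rw [phi_zero p q (hr.trans_le hrp).ne', phi_zero r s hr.ne']
  · apply mul_le_mul
    · exact Real.rpow_le_rpow_of_exponent_ge (min_one_abs_pos hx) (min_one_abs_le_one x) hrp
    · exact Real.rpow_le_rpow_of_exponent_le (one_le_max_one_abs x) (by linarith)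
    · exact Real.rpow_nonneg (max_one_abs_pos x).le _
    · exact Real.rpow_nonneg (min_one_abs_nonneg x) _

lemma min_one_abs_mul_le (x z : ℝ) : min 1 |x * z| ≤ min 1 |x| * max 1 |z| := by
  rw [abs_mul]
  rcases le_total |z| 1 with hz | hz
  · rw [max_eq_left hz]
    rw [mul_one]
    exact min_le_min le_rfl (by nlinarith [abs_nonneg x, abs_nonneg z])
  · rw [max_eq_right hz]
    rcases le_total |x| 1 with hx | hx
    · rw [min_eq_right hx]
      exact min_le_right 1 _
    · rw [min_eq_left hx]
      rw [one_mul]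
      exact le_trans (min_le_left _ _) hz

lemma max_one_abs_mul_ge (x z : ℝ) : max 1 |x| * min 1 |z| ≤ max 1 |x * z| := by
  rw [abs_mul]
  rcases le_total |z| 1 with hz | hz
  · rw [min_eq_right hz]
    calc max 1 |x| * |z| = max |z| (|x| * |z|) := by
          rw [max_mul_of_nonneg _ _ (abs_nonneg z), one_mul]
      _ ≤ max 1 (|x| * |z|) := max_le_max hz le_rfl
  · rw [min_eq_left hz]
    rw [mul_one]
    exact max_le_max le_rfl (by nlinarith [abs_nonneg x, abs_nonneg z])

lemma rpow_neg_anti {a b q : ℝ} (ha : 0 < a) (hab : a ≤ b) (hq : 0 ≤ q) :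
    b ^ (-q) ≤ a ^ (-q) := by
  rw [Real.rpow_neg ha.le, Real.rpow_neg (ha.trans_le hab).le]
  exact inv_anti₀ (Real.rpow_pos_of_pos ha q) (Real.rpow_le_rpow ha.le hab hq)

/-- submultiplicativity-type estimate -/
lemma phi_mul_le {p q : ℝ} (hp : 0 < p) (hq : 0 < q) (x z : ℝ) :
    phi p q (x * z) ≤ phi p q x * (max 1 |z| ^ p * min 1 |z| ^ (-q)) := by
  rcases eq_or_ne z 0 with rfl | hz
  · rw [mul_zero, phi_zero p q hp.ne', abs_zero]
    simp [Real.zero_rpow (neg_ne_zero.mpr hq.ne')]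
  · have h1 : min 1 |x * z| ^ p ≤ min 1 |x| ^ p * max 1 |z| ^ p := by
      rw [← Real.mul_rpow (min_one_abs_nonneg x) (max_one_abs_pos z).le]
      exact Real.rpow_le_rpow (min_one_abs_nonneg _) (min_one_abs_mul_le x z) hp.le
    have h2 : max 1 |x * z| ^ (-q) ≤ max 1 |x| ^ (-q) * min 1 |z| ^ (-q) := by
      rw [← Real.mul_rpow (max_one_abs_pos x).le (min_one_abs_nonneg z)]
      exact rpow_neg_anti (mul_pos (max_one_abs_pos x) (min_one_abs_pos hz))
        (max_one_abs_mul_ge x z) hq.le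
    calc min 1 |x * z| ^ p * max 1 |x * z| ^ (-q)
        ≤ (min 1 |x| ^ p * max 1 |z| ^ p) * (max 1 |x| ^ (-q) * min 1 |z| ^ (-q)) := by
          apply mul_le_mul h1 h2 (Real.rpow_nonneg (le_trans zero_le_one (one_le_max_one_abs _)) _)
          positivity
      _ = phi p q x * (max 1 |z| ^ p * min 1 |z| ^ (-q)) := by rw [phi]; ring
open ENNReal

def Phi (p q x : ℝ) : ℝ≥0∞ := ENNReal.ofReal (phi p q x)

lemma measurable_Phi (p q : ℝ) : Measurable (Phi p q) :=
  (measurable_phi p q).ennreal_ofReal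

lemma max_one_abs_inv {a : ℝ} (ha : a ≠ 0) : max 1 |a⁻¹| = (min 1 |a|)⁻¹ := by
  rw [abs_inv]
  rcases le_total |a| 1 with h | h
  · rw [min_eq_right h, max_eq_right ((one_le_inv₀ (abs_pos.mpr ha)).mpr h)]
  · rw [min_eq_left h, max_eq_left ((inv_le_one₀ (lt_of_lt_of_le one_pos h)).mpr h), inv_one]

lemma min_one_abs_inv {a : ℝ} (ha : a ≠ 0) : min 1 |a⁻¹| = (max 1 |a|)⁻¹ := by
  rw [abs_inv]
  rcases le_total |a| 1 with h | h
  · rw [max_eq_left h, min_eq_left ((one_le_inv₀ (abs_pos.mpr ha)).mpr h), inv_one]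
  · rw [max_eq_right h, min_eq_right ((inv_le_one₀ (lt_of_lt_of_le one_pos h)).mpr h)]

lemma phi_conv_pointwise {p q p' q' r s : ℝ} (hr : 0 < r) (hs : 0 < s)
    (hrp : r ≤ p) (hsq : s ≤ q) (hrp' : r < p') (hsq' : s < q') (x a : ℝ) :
    phi p q (x * a⁻¹) * phi p' q' a ≤ phi r s x * phi (p' - r) (q' - s) a := by
  rcases eq_or_ne a 0 with rfl | ha
  · rw [phi_zero p' q' (hr.trans_le hrp'.le).ne', mul_zero]
    exact mul_nonneg (phi_nonneg _ _ _) (phi_nonneg _ _ _)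
  · have h1 : max 1 |a⁻¹| ^ r = min 1 |a| ^ (-r) := by
      rw [max_one_abs_inv ha, Real.rpow_neg (min_one_abs_nonneg a)]
      exact Real.inv_rpow (min_one_abs_nonneg a) r
    have h2 : min 1 |a⁻¹| ^ (-s) = max 1 |a| ^ s := by
      rw [min_one_abs_inv ha, ← neg_neg s, Real.rpow_neg (max_one_abs_pos a).le (-s), neg_neg,
        Real.inv_rpow (max_one_abs_pos a).le]
    calc phi p q (x * a⁻¹) * phi p' q' a
        ≤ phi r s (x * a⁻¹) * phi p' q' a :=
          mul_le_mul_of_nonneg_right (phi_le_phi hr hrp hsq _) (phi_nonneg _ _ _)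
      _ ≤ (phi r s x * (max 1 |a⁻¹| ^ r * min 1 |a⁻¹| ^ (-s))) * phi p' q' a :=
          mul_le_mul_of_nonneg_right (phi_mul_le hr hs x a⁻¹) (phi_nonneg _ _ _)
      _ = phi r s x * ((min 1 |a| ^ (-r) * min 1 |a| ^ p') * (max 1 |a| ^ s * max 1 |a| ^ (-q'))) := by
          rw [h1, h2]; simp only [phi]; ring
      _ = phi r s x * phi (p' - r) (q' - s) a := by
          rw [← Real.rpow_add (min_one_abs_pos ha), ← Real.rpow_add (max_one_abs_pos a)]
          have e1 : -r + p' = p' - r := by ring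
          have e2 : s + -q' = -(q' - s) := by ring
          rw [e1, e2]; simp only [phi]

lemma Phi_conv_pointwise {p q p' q' r s : ℝ} (hr : 0 < r) (hs : 0 < s)
    (hrp : r ≤ p) (hsq : s ≤ q) (hrp' : r < p') (hsq' : s < q') (x a : ℝ) :
    Phi p q (x * a⁻¹) * Phi p' q' a ≤ Phi r s x * Phi (p' - r) (q' - s) a := by
  rw [Phi, Phi, Phi, Phi, ← ENNReal.ofReal_mul (phi_nonneg _ _ _),
    ← ENNReal.ofReal_mul (phi_nonneg _ _ _)]
  exact ENNReal.ofReal_le_ofReal (phi_conv_pointwise hr hs hrp hsq hrp' hsq' x a)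

/-! ### Integration lemmas for `mulHaar` -/

lemma lintegral_mulHaar_eq (f : ℝ → ℝ≥0∞) (hf : Measurable f) :
    ∫⁻ x, f x ∂mulHaar = ∫⁻ x, f x * ENNReal.ofReal |x|⁻¹ := by
  rw [mulHaar, lintegral_withDensity_eq_lintegral_mul₀'
    (show AEMeasurable (fun a : ℝ => ENNReal.ofReal |a|⁻¹) volume from measurable_abs.inv.ennreal_ofReal.aemeasurable) hf.aemeasurable]
  exact lintegral_congr fun x => mul_comm _ _

lemma lintegral_mulHaar_comp_mul {f : ℝ → ℝ≥0∞} (hf : Measurable f) {r : ℝ} (hr : r ≠ 0) :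
    ∫⁻ x, f (r * x) ∂mulHaar = ∫⁻ x, f x ∂mulHaar := by
  rw [lintegral_mulHaar_eq (fun x => f (r * x)) (hf.comp (measurable_const_mul r)), lintegral_mulHaar_eq f hf]
  have habs : ∀ x : ℝ, |r| * |r * x|⁻¹ = |x|⁻¹ := by
    intro x
    rw [abs_mul, mul_inv, ← mul_assoc, mul_inv_cancel₀ (abs_ne_zero.mpr hr), one_mul]
  have hg : Measurable fun y : ℝ => f y * ENNReal.ofReal (|r| * |y|⁻¹) :=
    hf.mul ((measurable_const.mul measurable_abs.inv).ennreal_ofReal)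
  calc ∫⁻ x, f (r * x) * ENNReal.ofReal |x|⁻¹
      = ∫⁻ x, (fun y => f y * ENNReal.ofReal (|r| * |y|⁻¹)) (r * x) := by
        refine lintegral_congr fun x => ?_
        simp only
        rw [habs]
    _ = ∫⁻ y, f y * ENNReal.ofReal (|r| * |y|⁻¹) ∂(Measure.map (r * ·) volume) :=
        (lintegral_map hg (measurable_const_mul r)).symm
    _ = ENNReal.ofReal |r⁻¹| * ∫⁻ y, f y * ENNReal.ofReal (|r| * |y|⁻¹) := by
        rw [Real.map_volume_mul_left hr, lintegral_smul_measure, smul_eq_mul]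
    _ = ∫⁻ y, ENNReal.ofReal |r⁻¹| * (f y * ENNReal.ofReal (|r| * |y|⁻¹)) :=
        (lintegral_const_mul _ hg).symm
    _ = ∫⁻ y, f y * ENNReal.ofReal |y|⁻¹ := by
        refine lintegral_congr fun y => ?_
        rw [← mul_left_comm, ← ENNReal.ofReal_mul (abs_nonneg _)]
        congr 2
        rw [abs_inv, ← mul_assoc, inv_mul_cancel₀ (abs_ne_zero.mpr hr), one_mul]

lemma lintegral_mulHaar_inv {f : ℝ → ℝ≥0∞} (hf : Measurable f) :
    ∫⁻ x, f x⁻¹ ∂mulHaar = ∫⁻ x, f x ∂mulHaar := by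
  have hs : MeasurableSet ({0}ᶜ : Set ℝ) := (measurableSet_singleton 0).compl
  have h0 : ∀ (g : ℝ → ℝ≥0∞), ∫⁻ x, g x ∂volume = ∫⁻ x in ({0}ᶜ : Set ℝ), g x ∂volume := by
    intro g
    rw [← lintegral_add_compl g hs, compl_compl,
      setLIntegral_measure_zero _ _ (measure_singleton 0), add_zero]
  have himg : (fun y : ℝ => y⁻¹) '' ({0}ᶜ : Set ℝ) = ({0}ᶜ : Set ℝ) := by
    ext y
    simp only [Set.mem_image, Set.mem_compl_iff, Set.mem_singleton_iff]
    constructor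
    · rintro ⟨x, hx, rfl⟩; simpa using hx
    · intro hy; exact ⟨y⁻¹, by simpa using hy, inv_inv y⟩
  have hder : ∀ x ∈ ({0}ᶜ : Set ℝ), HasDerivWithinAt (fun y : ℝ => y⁻¹) (-(x^2)⁻¹) ({0}ᶜ) x :=
    fun x hx => (hasDerivAt_inv (by simpa using hx)).hasDerivWithinAt
  have hinj : Set.InjOn (fun y : ℝ => y⁻¹) ({0}ᶜ) := fun a _ b _ h => inv_injective h
  have key := lintegral_image_eq_lintegral_abs_det_fderiv_mul volume
    (f' := fun x : ℝ => (1 : ℝ →L[ℝ] ℝ).smulRight (-(x^2)⁻¹)) hs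
    (fun x hx => (hder x hx).hasFDerivWithinAt) hinj
    (fun y => f y * ENNReal.ofReal |y|⁻¹)
  rw [himg] at key
  simp only [ContinuousLinearMap.smulRight_one_eq_toSpanSingleton, ContinuousLinearMap.det_toSpanSingleton] at key
  rw [lintegral_mulHaar_eq (fun x => f x⁻¹) (hf.comp measurable_inv), lintegral_mulHaar_eq f hf,
    h0 (fun x => f x⁻¹ * ENNReal.ofReal |x|⁻¹), h0 (fun x => f x * ENNReal.ofReal |x|⁻¹)]
  calc ∫⁻ x in ({0}ᶜ : Set ℝ), f x⁻¹ * ENNReal.ofReal |x|⁻¹ ∂volume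
      = ∫⁻ x in ({0}ᶜ : Set ℝ),
          ENNReal.ofReal |(-(x ^ 2)⁻¹)| * (f x⁻¹ * ENNReal.ofReal |x⁻¹|⁻¹) ∂volume := by
        refine setLIntegral_congr_fun hs (fun x hx => ?_)
        have hx0 : x ≠ 0 := by simpa using hx
        have hax : |x| ≠ 0 := abs_ne_zero.mpr hx0
        rw [abs_inv, inv_inv, abs_neg, abs_inv, mul_left_comm, ← ENNReal.ofReal_mul (by positivity)]
        congr 2
        rw [abs_pow]
        field_simp
    _ = ∫⁻ x in ({0}ᶜ : Set ℝ), f x * ENNReal.ofReal |x|⁻¹ ∂volume := key.symm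

/-! ### Finiteness of `∫ φ dmulHaar` -/

lemma finite_of_integrableOn {f : ℝ → ℝ} {s : Set ℝ} (h : IntegrableOn f s volume) :
    ∫⁻ x in s, ENNReal.ofReal (f x) ∂volume < ⊤ := by
  refine lt_of_le_of_lt (lintegral_mono fun x => ?_) h.2
  calc ENNReal.ofReal (f x) ≤ ENNReal.ofReal |f x| := ENNReal.ofReal_le_ofReal (le_abs_self _)
    _ = (‖f x‖₊ : ℝ≥0∞) := (Real.enorm_eq_ofReal_abs (f x)).symm

lemma setLIntegral_reflect (F : ℝ → ℝ≥0∞) (s : Set ℝ) :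
    ∫⁻ x in (fun x : ℝ => -x) ⁻¹' s, F (-x) ∂volume = ∫⁻ x in s, F x ∂volume :=
  (Measure.measurePreserving_neg volume).setLIntegral_comp_preimage_emb
    (Homeomorph.neg ℝ).measurableEmbedding F s

lemma lintegral_abs_rpow_Icc {u : ℝ} (hu : -1 < u) :
    ∫⁻ x in Set.Icc (-1 : ℝ) 1, ENNReal.ofReal (|x| ^ u) ∂volume < ⊤ := by
  have hIoc : ∫⁻ x in Set.Ioc (0 : ℝ) 1, ENNReal.ofReal (|x| ^ u) ∂volume < ⊤ := by
    have hint : IntegrableOn (fun x : ℝ => x ^ u) (Set.Ioc (0 : ℝ) 1) volume := by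
      have : IntervalIntegrable (fun x : ℝ => x ^ u) volume 0 1 := intervalIntegral.intervalIntegrable_rpow' hu
      rwa [intervalIntegrable_iff, Set.uIoc_of_le zero_le_one] at this
    refine lt_of_le_of_lt (le_of_eq (setLIntegral_congr_fun measurableSet_Ioc
      (fun x hx => ?_))) (finite_of_integrableOn hint)
    rw [abs_of_nonneg (le_of_lt hx.1)]
  have hIcc01 : ∫⁻ x in Set.Icc (0 : ℝ) 1, ENNReal.ofReal (|x| ^ u) ∂volume < ⊤ := by
    have : Set.Icc (0 : ℝ) 1 =ᵐ[volume] Set.Ioc (0 : ℝ) 1 := (MeasureTheory.Ioc_ae_eq_Icc).symm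
    rwa [Measure.restrict_congr_set this]
  have hrefl : ∫⁻ x in Set.Icc (-1 : ℝ) 0, ENNReal.ofReal (|x| ^ u) ∂volume < ⊤ := by
    have hpre : (fun x : ℝ => -x) ⁻¹' (Set.Icc (0:ℝ) 1) = Set.Icc (-1 : ℝ) 0 := by
      ext y; simp only [Set.mem_preimage, Set.mem_Icc]; constructor <;> intro h <;>
        constructor <;> linarith [h.1, h.2]
    have := setLIntegral_reflect (fun x => ENNReal.ofReal (|x| ^ u)) (Set.Icc (0:ℝ) 1)
    rw [hpre] at this
    simp only [abs_neg] at this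
    rwa [this]
  have hsub : Set.Icc (-1 : ℝ) 1 ⊆ Set.Icc (-1 : ℝ) 0 ∪ Set.Icc (0 : ℝ) 1 := by
    intro y hy
    rcases le_total y 0 with h | h
    · exact Set.mem_union_left _ ⟨hy.1, h⟩
    · exact Set.mem_union_right _ ⟨h, hy.2⟩
  calc ∫⁻ x in Set.Icc (-1 : ℝ) 1, ENNReal.ofReal (|x| ^ u) ∂volume
      ≤ ∫⁻ x in Set.Icc (-1 : ℝ) 0 ∪ Set.Icc (0 : ℝ) 1, ENNReal.ofReal (|x| ^ u) ∂volume :=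
        lintegral_mono_set hsub
    _ ≤ _ + _ := lintegral_union_le _ _ _
    _ < ⊤ := ENNReal.add_lt_top.mpr ⟨hrefl, hIcc01⟩

lemma lintegral_abs_rpow_compl {v : ℝ} (hv : v < -1) :
    ∫⁻ x in (Set.Icc (-1 : ℝ) 1)ᶜ, ENNReal.ofReal (|x| ^ v) ∂volume < ⊤ := by
  have hIoi : ∫⁻ x in Set.Ioi (1 : ℝ), ENNReal.ofReal (|x| ^ v) ∂volume < ⊤ := by
    have hint : IntegrableOn (fun x : ℝ => x ^ v) (Set.Ioi (1 : ℝ)) volume :=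
      integrableOn_Ioi_rpow_of_lt hv one_pos
    refine lt_of_le_of_lt (le_of_eq (setLIntegral_congr_fun measurableSet_Ioi
      (fun x hx => ?_))) (finite_of_integrableOn hint)
    rw [abs_of_nonneg (by linarith [Set.mem_Ioi.mp hx] : (0:ℝ) ≤ x)]
  have hIio : ∫⁻ x in Set.Iio (-1 : ℝ), ENNReal.ofReal (|x| ^ v) ∂volume < ⊤ := by
    have hpre : (fun x : ℝ => -x) ⁻¹' (Set.Ioi (1:ℝ)) = Set.Iio (-1 : ℝ) := by
      ext y; simp only [Set.mem_preimage, Set.mem_Ioi, Set.mem_Iio]; constructor <;> intro h <;>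
        linarith
    have := setLIntegral_reflect (fun x => ENNReal.ofReal (|x| ^ v)) (Set.Ioi (1:ℝ))
    rw [hpre] at this
    simp only [abs_neg] at this
    rwa [this]
  have hcompl : (Set.Icc (-1 : ℝ) 1)ᶜ ⊆ Set.Iio (-1 : ℝ) ∪ Set.Ioi (1 : ℝ) := by
    intro y hy
    simp only [Set.mem_compl_iff, Set.mem_Icc, not_and_or, not_le] at hy
    rcases hy with h | h
    · exact Set.mem_union_left _ h
    · exact Set.mem_union_right _ h
  calc ∫⁻ x in (Set.Icc (-1 : ℝ) 1)ᶜ, ENNReal.ofReal (|x| ^ v) ∂volume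
      ≤ ∫⁻ x in Set.Iio (-1 : ℝ) ∪ Set.Ioi (1 : ℝ), ENNReal.ofReal (|x| ^ v) ∂volume :=
        lintegral_mono_set hcompl
    _ ≤ _ + _ := lintegral_union_le _ _ _
    _ < ⊤ := ENNReal.add_lt_top.mpr ⟨hIio, hIoi⟩

lemma lintegral_Phi_lt_top {p q : ℝ} (hp : 0 < p) (hq : 0 < q) :
    ∫⁻ x, Phi p q x ∂mulHaar < ⊤ := by
  rw [lintegral_mulHaar_eq _ (measurable_Phi p q)]
  have hbound : ∀ x : ℝ, Phi p q x * ENNReal.ofReal |x|⁻¹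
      ≤ (Set.Icc (-1:ℝ) 1).indicator (fun x => ENNReal.ofReal (|x| ^ (p - 1))) x
        + ((Set.Icc (-1:ℝ) 1)ᶜ).indicator (fun x => ENNReal.ofReal (|x| ^ (-(q + 1)))) x := by
    intro x
    rcases le_or_gt |x| 1 with hx1 | hx1
    · have hmem : x ∈ Set.Icc (-1:ℝ) 1 := abs_le.mp hx1
      rw [Set.indicator_of_mem hmem, Set.indicator_of_notMem (by simp [hmem] : x ∉ (Set.Icc (-1:ℝ) 1)ᶜ)]
      rcases eq_or_ne x 0 with rfl | hx0
      · rw [Phi, phi_zero p q hp.ne']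
        simp
      · rw [Phi, phi, min_eq_right hx1, add_zero]
        rw [← ENNReal.ofReal_mul (by positivity)]
        apply ENNReal.ofReal_le_ofReal
        have : |x| ^ p * max 1 |x| ^ (-q) * |x|⁻¹ ≤ |x| ^ p * 1 * |x|⁻¹ := by
          apply mul_le_mul_of_nonneg_right _ (by positivity)
          apply mul_le_mul_of_nonneg_left _ (by positivity)
          exact Real.rpow_le_one_of_one_le_of_nonpos (one_le_max_one_abs x) (by linarith)
        refine le_trans this (le_of_eq ?_)
        rw [mul_one, Real.rpow_sub (abs_pos.mpr hx0), Real.rpow_one]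
        rw [div_eq_mul_inv]
    · have hmem : x ∉ Set.Icc (-1:ℝ) 1 := fun hcon => absurd (abs_le.mpr ⟨hcon.1, hcon.2⟩) (not_le.mpr hx1)
      rw [Set.indicator_of_notMem hmem, Set.indicator_of_mem (Set.mem_compl hmem), zero_add]
      have hx0 : x ≠ 0 := fun h => by rw [h, abs_zero] at hx1; linarith
      rw [Phi, phi, min_eq_left hx1.le, max_eq_right hx1.le,
        Real.one_rpow, one_mul, ← ENNReal.ofReal_mul (by positivity)]
      apply ENNReal.ofReal_le_ofReal
      rw [← Real.rpow_neg_one |x|, ← Real.rpow_add (abs_pos.mpr hx0)]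
      apply le_of_eq
      congr 1
      ring
  refine lt_of_le_of_lt (lintegral_mono hbound) ?_
  calc ∫⁻ x, ((Set.Icc (-1:ℝ) 1).indicator (fun x => ENNReal.ofReal (|x| ^ (p - 1))) x
        + ((Set.Icc (-1:ℝ) 1)ᶜ).indicator (fun x => ENNReal.ofReal (|x| ^ (-(q + 1)))) x) ∂volume
      = (∫⁻ x in Set.Icc (-1:ℝ) 1, ENNReal.ofReal (|x| ^ (p - 1)) ∂volume)
        + ∫⁻ x in (Set.Icc (-1:ℝ) 1)ᶜ, ENNReal.ofReal (|x| ^ (-(q + 1))) ∂volume := by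
        rw [lintegral_add_left ((measurable_abs.pow_const _).ennreal_ofReal.indicator measurableSet_Icc),
          lintegral_indicator measurableSet_Icc, lintegral_indicator measurableSet_Icc.compl]
    _ < ⊤ := ENNReal.add_lt_top.mpr
        ⟨lintegral_abs_rpow_Icc (by linarith), lintegral_abs_rpow_compl (by linarith)⟩

/-! ### Convolution bound -/

lemma lintegral_conv_le {p q p' q' r s : ℝ} (hr : 0 < r) (hs : 0 < s)
    (hrp : r ≤ p) (hsq : s ≤ q) (hrp' : r < p') (hsq' : s < q') (x : ℝ) :
    ∫⁻ a, Phi p' q' a * Phi p q (x * a⁻¹) ∂mulHaar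
      ≤ Phi r s x * ∫⁻ a, Phi (p' - r) (q' - s) a ∂mulHaar := by
  rw [← lintegral_const_mul _ (measurable_Phi _ _)]
  refine lintegral_mono fun a => ?_
  rw [mul_comm (Phi p' q' a)]
  exact Phi_conv_pointwise hr hs hrp hsq hrp' hsq' x a

/-! ### Schwartz decay -/

lemma schwartz_prod_decay (M : SchwartzMap (ℝ × ℝ × ℝ × ℝ) ℂ) (N : ℕ) :
    ∃ C : ℝ, 0 < C ∧ ∀ u₀ u₁ u₂ u₃ : ℝ,
      ‖M (u₀, u₁, u₂, u₃)‖ * ((1 + |u₀|) ^ (N:ℝ) * (1 + |u₁|) ^ (N:ℝ) * (1 + |u₂|) ^ (N:ℝ)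
        * (1 + |u₃|) ^ (N:ℝ)) ≤ C := by
  obtain ⟨C₁, hC₁pos, hC₁⟩ := M.decay (4 * N) 0
  obtain ⟨C₀, hC₀pos, hC₀⟩ := M.decay 0 0
  refine ⟨2 ^ (4 * N) * (C₀ + C₁), by positivity, fun u₀ u₁ u₂ u₃ => ?_⟩
  set x : ℝ × ℝ × ℝ × ℝ := (u₀, u₁, u₂, u₃) with hx
  have hnx : (0:ℝ) ≤ ‖x‖ := norm_nonneg x
  have habs : ∀ u : ℝ, |u| = ‖u‖ := fun u => (Real.norm_eq_abs u).symm
  have h₀ : |u₀| ≤ ‖x‖ := by rw [habs]; exact norm_fst_le x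
  have h₁ : |u₁| ≤ ‖x‖ := by rw [habs]; exact le_trans (norm_fst_le x.2) (norm_snd_le x)
  have h₂ : |u₂| ≤ ‖x‖ := by
    rw [habs]; exact le_trans (le_trans (norm_fst_le x.2.2) (norm_snd_le x.2)) (norm_snd_le x)
  have h₃ : |u₃| ≤ ‖x‖ := by
    rw [habs]; exact le_trans (le_trans (norm_snd_le x.2.2) (norm_snd_le x.2)) (norm_snd_le x)
  have hprod : (1 + |u₀|) ^ (N:ℝ) * (1 + |u₁|) ^ (N:ℝ) * (1 + |u₂|) ^ (N:ℝ) * (1 + |u₃|) ^ (N:ℝ)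
      ≤ (1 + ‖x‖) ^ (4 * N) := by
    have hfac : ∀ u : ℝ, |u| ≤ ‖x‖ → (1 + |u|) ^ (N:ℝ) ≤ (1 + ‖x‖) ^ N := by
      intro u hu
      rw [Real.rpow_natCast]
      exact pow_le_pow_left₀ (by positivity) (by linarith) N
    calc (1 + |u₀|) ^ (N:ℝ) * (1 + |u₁|) ^ (N:ℝ) * (1 + |u₂|) ^ (N:ℝ) * (1 + |u₃|) ^ (N:ℝ)
        ≤ (1 + ‖x‖) ^ N * (1 + ‖x‖) ^ N * (1 + ‖x‖) ^ N * (1 + ‖x‖) ^ N := by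
          have g₀ := hfac u₀ h₀; have g₁ := hfac u₁ h₁; have g₂ := hfac u₂ h₂
          have g₃ := hfac u₃ h₃
          have n₀ : (0:ℝ) ≤ (1 + |u₀|) ^ (N:ℝ) := Real.rpow_nonneg (by positivity) _
          have n₁ : (0:ℝ) ≤ (1 + |u₁|) ^ (N:ℝ) := Real.rpow_nonneg (by positivity) _
          have n₂ : (0:ℝ) ≤ (1 + |u₂|) ^ (N:ℝ) := Real.rpow_nonneg (by positivity) _
          have n₃ : (0:ℝ) ≤ (1 + |u₃|) ^ (N:ℝ) := Real.rpow_nonneg (by positivity) _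
          have m : (0:ℝ) ≤ (1 + ‖x‖) ^ N := by positivity
          exact mul_le_mul (mul_le_mul (mul_le_mul g₀ g₁ n₁ m) g₂ n₂ (by positivity)) g₃ n₃
            (by positivity)
    _ = (1 + ‖x‖) ^ (4 * N) := by ring
  have hsplit : (1 + ‖x‖) ^ (4 * N) ≤ 2 ^ (4 * N) * (1 + ‖x‖ ^ (4 * N)) := by
    have h1 : (1 + ‖x‖) ^ (4 * N) ≤ (2 * max 1 ‖x‖) ^ (4 * N) := by
      apply pow_le_pow_left₀ (by positivity)
      rcases le_total ‖x‖ 1 with h | h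
      · rw [max_eq_left h]; linarith
      · rw [max_eq_right h]; linarith
    have h2 : (max 1 ‖x‖) ^ (4 * N) ≤ 1 + ‖x‖ ^ (4 * N) := by
      rcases le_total ‖x‖ 1 with h | h
      · rw [max_eq_left h, one_pow]
        have : (0:ℝ) ≤ ‖x‖ ^ (4 * N) := by positivity
        linarith
      · rw [max_eq_right h]
        have : (0:ℝ) ≤ ‖x‖ ^ (4*N) := by positivity
        linarith
    calc (1 + ‖x‖) ^ (4 * N) ≤ (2 * max 1 ‖x‖) ^ (4 * N) := h1
      _ = 2 ^ (4 * N) * (max 1 ‖x‖) ^ (4 * N) := mul_pow _ _ _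
      _ ≤ 2 ^ (4 * N) * (1 + ‖x‖ ^ (4 * N)) := by
          apply mul_le_mul_of_nonneg_left h2 (by positivity)
  have hM0 : ‖M x‖ ≤ C₀ := by
    have := hC₀ x; simpa [norm_iteratedFDeriv_zero] using this
  have hM1 : ‖x‖ ^ (4 * N) * ‖M x‖ ≤ C₁ := by
    have := hC₁ x; simpa [norm_iteratedFDeriv_zero] using this
  have hMnn : (0:ℝ) ≤ ‖M x‖ := norm_nonneg _
  calc ‖M x‖ * ((1 + |u₀|) ^ (N:ℝ) * (1 + |u₁|) ^ (N:ℝ) * (1 + |u₂|) ^ (N:ℝ) * (1 + |u₃|) ^ (N:ℝ))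
      ≤ ‖M x‖ * (2 ^ (4 * N) * (1 + ‖x‖ ^ (4 * N))) := by
        apply mul_le_mul_of_nonneg_left (le_trans hprod hsplit) hMnn
    _ = 2 ^ (4 * N) * (‖M x‖ + ‖x‖ ^ (4 * N) * ‖M x‖) := by ring
    _ ≤ 2 ^ (4 * N) * (C₀ + C₁) := by
        apply mul_le_mul_of_nonneg_left (add_le_add hM0 hM1) (by positivity)

/-! ### Elementary decay estimates -/

lemma one_le_one_add_abs (u : ℝ) : (1:ℝ) ≤ 1 + |u| := by linarith [abs_nonneg u]

lemma decay_le_one {u NR : ℝ} (hN : 0 ≤ NR) : (1 + |u|) ^ (-NR) ≤ 1 :=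
  Real.rpow_le_one_of_one_le_of_nonpos (one_le_one_add_abs u) (by linarith)

lemma E2 {a t β NR : ℝ} (ht : t ≠ 0) (hβ : 0 < β) (hN : β ≤ NR) :
    (1 + |a * t|) ^ (-NR) ≤ max 1 |a| ^ (-β) * min 1 |t| ^ (-β) := by
  have hb : (1:ℝ) ≤ 1 + |a * t| := one_le_one_add_abs _
  have h1 : (1 + |a * t|) ^ (-NR) ≤ (1 + |a * t|) ^ (-β) :=
    Real.rpow_le_rpow_of_exponent_le hb (by linarith)
  have hpos : 0 < max 1 |a| * min 1 |t| := mul_pos (max_one_abs_pos a) (min_one_abs_pos ht)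
  have h2 : max 1 |a| * min 1 |t| ≤ 1 + |a * t| := by
    refine le_trans (max_one_abs_mul_ge a t) ?_
    exact max_le (by linarith [abs_nonneg (a*t)]) (by linarith)
  calc (1 + |a * t|) ^ (-NR) ≤ (1 + |a * t|) ^ (-β) := h1
    _ ≤ (max 1 |a| * min 1 |t|) ^ (-β) := rpow_neg_anti hpos h2 hβ.le
    _ = max 1 |a| ^ (-β) * min 1 |t| ^ (-β) :=
        Real.mul_rpow (max_one_abs_pos a).le (min_one_abs_pos ht).le
          |>.symm ▸ by
            rw [← Real.mul_rpow (max_one_abs_pos a).le (min_one_abs_pos ht).le]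

lemma E3 {t NR : ℝ} (h2 : 2 ≤ NR) : |t| * (1 + |t|) ^ (-NR) ≤ min 1 |t| * max 1 |t| ^ (-(1:ℝ)) := by
  have hb : (1:ℝ) ≤ 1 + |t| := one_le_one_add_abs t
  rcases le_total |t| 1 with h | h
  · rw [max_eq_left h, Real.one_rpow, mul_one, min_eq_right h]
    calc |t| * (1 + |t|) ^ (-NR) ≤ |t| * 1 :=
        mul_le_mul_of_nonneg_left (decay_le_one (by linarith)) (abs_nonneg t)
      _ = |t| := mul_one _
  · have htpos : (0:ℝ) < |t| := lt_of_lt_of_le one_pos h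
    rw [max_eq_right h, min_eq_left h, one_mul]
    have key : (1 + |t|) ^ (-NR) ≤ |t| ^ (-(2:ℝ)) := by
      calc (1 + |t|) ^ (-NR) ≤ (1 + |t|) ^ (-(2:ℝ)) :=
          Real.rpow_le_rpow_of_exponent_le hb (by linarith)
        _ ≤ |t| ^ (-(2:ℝ)) := rpow_neg_anti htpos (by linarith) (by norm_num)
    calc |t| * (1 + |t|) ^ (-NR) ≤ |t| * |t| ^ (-(2:ℝ)) :=
        mul_le_mul_of_nonneg_left key (abs_nonneg t)
      _ = |t| ^ ((1:ℝ) + -2) := by rw [Real.rpow_add htpos, Real.rpow_one]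
      _ = |t| ^ (-(1:ℝ)) := by norm_num

lemma E4 {w p NR : ℝ} (hp : 0 < p) (hN : p + 1 ≤ NR) :
    |w| ^ p * (1 + |w|) ^ (-NR) ≤ phi p 1 w := by
  have hb : (1:ℝ) ≤ 1 + |w| := one_le_one_add_abs w
  rcases le_total |w| 1 with h | h
  · rw [phi, min_eq_right h, max_eq_left h, Real.one_rpow, mul_one]
    calc |w| ^ p * (1 + |w|) ^ (-NR) ≤ |w| ^ p * 1 :=
        mul_le_mul_of_nonneg_left (decay_le_one (by linarith)) (Real.rpow_nonneg (abs_nonneg w) p)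
      _ = |w| ^ p := mul_one _
  · have hwpos : (0:ℝ) < |w| := lt_of_lt_of_le one_pos h
    rw [phi, min_eq_left h, max_eq_right h, Real.one_rpow, one_mul]
    have key : (1 + |w|) ^ (-NR) ≤ |w| ^ (-(p+1)) := by
      calc (1 + |w|) ^ (-NR) ≤ (1 + |w|) ^ (-(p+1)) :=
          Real.rpow_le_rpow_of_exponent_le hb (by linarith)
        _ ≤ |w| ^ (-(p+1)) := rpow_neg_anti hwpos (by linarith) (by linarith)
    calc |w| ^ p * (1 + |w|) ^ (-NR) ≤ |w| ^ p * |w| ^ (-(p+1)) :=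
        mul_le_mul_of_nonneg_left key (Real.rpow_nonneg (abs_nonneg w) p)
      _ = |w| ^ (p + -(p+1)) := (Real.rpow_add hwpos _ _).symm
      _ = |w| ^ (-(1:ℝ)) := by norm_num

lemma S1 {x e : ℝ} (he : 0 ≤ e) (hx : x ≠ 0) :
    max 1 |x| ^ (-e) * |x| ^ e = min 1 |x| ^ e := by
  rcases le_total |x| 1 with h | h
  · rw [max_eq_left h, Real.one_rpow, one_mul, min_eq_right h]
  · rw [max_eq_right h, min_eq_left h, Real.one_rpow,
      ← Real.rpow_add (abs_pos.mpr hx), neg_add_cancel, Real.rpow_zero]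

/-! ### The main pointwise bound -/

lemma pointwise_bound {d₁ d₂ d₃ : ℕ} (hd₁ : 4 ≤ d₁) (hd₂ : 4 ≤ d₂) (hd₃ : 4 ≤ d₃)
    (M₃ : SchwartzMap (ℝ × ℝ × ℝ × ℝ) ℂ) :
    ∃ C : ℝ, 0 < C ∧ ∀ c : ℝ, c ≠ 0 → ∀ a₁ a₂ a₃ : ℝ,
      ‖M₃ (c / (a₁ * a₂ * a₃), a₁ * c / (a₁ * a₂ * a₃), a₂ * c / (a₁ * a₂ * a₃),
          a₃ * c / (a₁ * a₂ * a₃))‖ *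
        max 1 |a₁| ^ (1 - (d₁ : ℝ) / 2) * max 1 |a₂| ^ (1 - (d₂ : ℝ) / 2) *
        |a₁ * a₂ * a₃ / c| ^ (-(d₃ : ℝ) / 2) *
        (|a₁| ^ ((d₁ : ℝ) / 2 - 1) * |a₂| ^ ((d₂ : ℝ) / 2 - 1) * |a₃| ^ ((d₃ : ℝ) / 2 - 1))
      ≤ C * (phi ((d₁:ℝ)/2 - 1) 4⁻¹ a₁ *
          (phi ((d₂:ℝ)/2 - 1) 4⁻¹ a₂ * phi ((d₃:ℝ)/2 - 1) 1 (c / a₁ * a₂⁻¹)) *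
          phi 2⁻¹ 1 (c / (a₁ * a₂) * a₃⁻¹)) := by
  have hd₁R : (4:ℝ) ≤ (d₁:ℝ) := by exact_mod_cast hd₁
  have hd₂R : (4:ℝ) ≤ (d₂:ℝ) := by exact_mod_cast hd₂
  have hd₃R : (4:ℝ) ≤ (d₃:ℝ) := by exact_mod_cast hd₃
  obtain ⟨C, hC0, hC⟩ := schwartz_prod_decay M₃ d₃
  refine ⟨C, hC0, fun c hc a₁ a₂ a₃ => ?_⟩
  set p₁ : ℝ := (d₁:ℝ)/2 - 1 with hp₁def
  set p₂ : ℝ := (d₂:ℝ)/2 - 1 with hp₂def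
  set p₃ : ℝ := (d₃:ℝ)/2 - 1 with hp₃def
  have hp₁ : 1 ≤ p₁ := by rw [hp₁def]; linarith
  have hp₂ : 1 ≤ p₂ := by rw [hp₂def]; linarith
  have hp₃ : 1 ≤ p₃ := by rw [hp₃def]; linarith
  have hRHSnn : 0 ≤ C * (phi p₁ 4⁻¹ a₁ * (phi p₂ 4⁻¹ a₂ * phi p₃ 1 (c / a₁ * a₂⁻¹)) *
      phi 2⁻¹ 1 (c / (a₁ * a₂) * a₃⁻¹)) :=
    mul_nonneg hC0.le (mul_nonneg (mul_nonneg (phi_nonneg _ _ _)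
      (mul_nonneg (phi_nonneg _ _ _) (phi_nonneg _ _ _))) (phi_nonneg _ _ _))
  rcases eq_or_ne a₁ 0 with rfl | ha₁
  · have h0 : |(0:ℝ)| ^ p₁ = 0 := by
      rw [abs_zero]; exact Real.zero_rpow (by linarith)
    refine le_trans (le_of_eq ?_) hRHSnn
    simp only [h0, zero_mul, mul_zero]
  rcases eq_or_ne a₂ 0 with rfl | ha₂
  · have h0 : |(0:ℝ)| ^ p₂ = 0 := by
      rw [abs_zero]; exact Real.zero_rpow (by linarith)
    refine le_trans (le_of_eq ?_) hRHSnn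
    simp only [h0, zero_mul, mul_zero]
  rcases eq_or_ne a₃ 0 with rfl | ha₃
  · have h0 : |(0:ℝ)| ^ p₃ = 0 := by
      rw [abs_zero]; exact Real.zero_rpow (by linarith)
    refine le_trans (le_of_eq ?_) hRHSnn
    simp only [h0, zero_mul, mul_zero]
  -- now all aᵢ ≠ 0
  have hb : a₁ * a₂ * a₃ ≠ 0 := mul_ne_zero (mul_ne_zero ha₁ ha₂) ha₃
  set t : ℝ := c / (a₁ * a₂ * a₃) with htdef
  have ht : t ≠ 0 := div_ne_zero hc hb
  have harg1 : c / a₁ * a₂⁻¹ = a₃ * t := by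
    rw [htdef]; field_simp
  have harg2 : c / (a₁ * a₂) * a₃⁻¹ = t := by
    rw [htdef, ← div_eq_mul_inv, div_div]
  have hA1 : a₁ * c / (a₁ * a₂ * a₃) = a₁ * t := by rw [htdef, mul_div_assoc]
  have hA2 : a₂ * c / (a₁ * a₂ * a₃) = a₂ * t := by rw [htdef, mul_div_assoc]
  have hA3 : a₃ * c / (a₁ * a₂ * a₃) = a₃ * t := by rw [htdef, mul_div_assoc]
  have hY : |a₁ * a₂ * a₃ / c| ^ (-(d₃:ℝ)/2) = |t| ^ ((d₃:ℝ)/2) := by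
    rw [htdef, ← inv_div c (a₁ * a₂ * a₃), abs_inv, Real.inv_rpow (abs_nonneg _),
      ← Real.rpow_neg (abs_nonneg _)]
    congr 1
    ring
  rw [harg1, harg2, hA1, hA2, hA3, hY]
  -- exponent rewrites
  have hexp₁ : (1:ℝ) - (d₁:ℝ)/2 = -p₁ := by rw [hp₁def]; ring
  have hexp₂ : (1:ℝ) - (d₂:ℝ)/2 = -p₂ := by rw [hp₂def]; ring
  rw [hexp₁, hexp₂]
  set NR : ℝ := (d₃ : ℝ) with hNRdef
  -- Schwartz bound
  have hprodpos : (0:ℝ) < (1 + |t|) ^ NR * (1 + |a₁ * t|) ^ NR * (1 + |a₂ * t|) ^ NR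
      * (1 + |a₃ * t|) ^ NR := by
    have h0 : (0:ℝ) < 1 + |t| := by linarith [abs_nonneg t]
    have h1 : (0:ℝ) < 1 + |a₁ * t| := by linarith [abs_nonneg (a₁ * t)]
    have h2 : (0:ℝ) < 1 + |a₂ * t| := by linarith [abs_nonneg (a₂ * t)]
    have h3 : (0:ℝ) < 1 + |a₃ * t| := by linarith [abs_nonneg (a₃ * t)]
    exact mul_pos (mul_pos (mul_pos (Real.rpow_pos_of_pos h0 _) (Real.rpow_pos_of_pos h1 _))
      (Real.rpow_pos_of_pos h2 _)) (Real.rpow_pos_of_pos h3 _)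
  have hM : ‖M₃ (t, a₁ * t, a₂ * t, a₃ * t)‖
      ≤ C * ((1 + |t|) ^ (-NR) * (1 + |a₁ * t|) ^ (-NR) * (1 + |a₂ * t|) ^ (-NR)
        * (1 + |a₃ * t|) ^ (-NR)) := by
    have h := hC t (a₁ * t) (a₂ * t) (a₃ * t)
    have hinv : (1 + |t|) ^ (-NR) * (1 + |a₁ * t|) ^ (-NR) * (1 + |a₂ * t|) ^ (-NR)
        * (1 + |a₃ * t|) ^ (-NR)
        = ((1 + |t|) ^ NR * (1 + |a₁ * t|) ^ NR * (1 + |a₂ * t|) ^ NR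
          * (1 + |a₃ * t|) ^ NR)⁻¹ := by
      rw [Real.rpow_neg (by positivity), Real.rpow_neg (by positivity),
        Real.rpow_neg (by positivity), Real.rpow_neg (by positivity)]
      rw [mul_inv, mul_inv, mul_inv]
    rw [hinv, ← div_eq_mul_inv, le_div_iff₀ hprodpos]
    exact h
  have hS1a : max 1 |a₁| ^ (-p₁) * |a₁| ^ p₁ = min 1 |a₁| ^ p₁ := S1 (by linarith) ha₁
  have hS1b : max 1 |a₂| ^ (-p₂) * |a₂| ^ p₂ = min 1 |a₂| ^ p₂ := S1 (by linarith) ha₂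
  have hT : |t| ^ ((d₃:ℝ)/2) * |a₃| ^ p₃ = |t| * |a₃ * t| ^ p₃ := by
    rw [abs_mul, Real.mul_rpow (abs_nonneg a₃) (abs_nonneg t)]
    rw [show (d₃:ℝ)/2 = 1 + p₃ by rw [hp₃def]; ring, Real.rpow_add (abs_pos.mpr ht),
      Real.rpow_one]
    ring
  -- the grand chain
  have hβN : (4:ℝ)⁻¹ ≤ NR := by rw [hNRdef]; linarith
  have h2N : (2:ℝ) ≤ NR := by rw [hNRdef]; linarith
  have hp₃N : p₃ + 1 ≤ NR := by rw [hp₃def, hNRdef]; linarith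
  have e2a := E2 (a := a₁) (t := t) ht (by norm_num : (0:ℝ) < 4⁻¹) hβN
  have e2b := E2 (a := a₂) (t := t) ht (by norm_num : (0:ℝ) < 4⁻¹) hβN
  have e3 := E3 (t := t) h2N
  have e4 := E4 (w := a₃ * t) (by linarith : (0:ℝ) < p₃) hp₃N
  have hcollapse : min 1 |t| * min 1 |t| ^ (-(4:ℝ)⁻¹) * min 1 |t| ^ (-(4:ℝ)⁻¹)
      = min 1 |t| ^ (2:ℝ)⁻¹ := by
    have h := min_one_abs_pos ht
    rw [show ((2:ℝ)⁻¹ : ℝ) = 1 + -(4:ℝ)⁻¹ + -(4:ℝ)⁻¹ by norm_num,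
      Real.rpow_add h, Real.rpow_add h, Real.rpow_one]
  calc ‖M₃ (t, a₁ * t, a₂ * t, a₃ * t)‖ * max 1 |a₁| ^ (-p₁) * max 1 |a₂| ^ (-p₂)
        * |t| ^ ((d₃:ℝ)/2) * (|a₁| ^ p₁ * |a₂| ^ p₂ * |a₃| ^ p₃)
      = ‖M₃ (t, a₁ * t, a₂ * t, a₃ * t)‖ * ((max 1 |a₁| ^ (-p₁) * |a₁| ^ p₁)
          * (max 1 |a₂| ^ (-p₂) * |a₂| ^ p₂) * (|t| ^ ((d₃:ℝ)/2) * |a₃| ^ p₃)) := by ring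
    _ = ‖M₃ (t, a₁ * t, a₂ * t, a₃ * t)‖ * (min 1 |a₁| ^ p₁ * min 1 |a₂| ^ p₂
          * (|t| * |a₃ * t| ^ p₃)) := by rw [hS1a, hS1b, hT]
    _ ≤ (C * ((1 + |t|) ^ (-NR) * (1 + |a₁ * t|) ^ (-NR) * (1 + |a₂ * t|) ^ (-NR)
          * (1 + |a₃ * t|) ^ (-NR))) * (min 1 |a₁| ^ p₁ * min 1 |a₂| ^ p₂
          * (|t| * |a₃ * t| ^ p₃)) := by
        apply mul_le_mul_of_nonneg_right hM
        have n1 : (0:ℝ) ≤ min 1 |a₁| ^ p₁ := Real.rpow_nonneg (min_one_abs_nonneg a₁) _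
        have n2 : (0:ℝ) ≤ min 1 |a₂| ^ p₂ := Real.rpow_nonneg (min_one_abs_nonneg a₂) _
        have n3 : (0:ℝ) ≤ |a₃ * t| ^ p₃ := Real.rpow_nonneg (abs_nonneg _) _
        have n4 : (0:ℝ) ≤ |t| := abs_nonneg t
        positivity
    _ = C * ((|t| * (1 + |t|) ^ (-NR)) * ((1 + |a₁ * t|) ^ (-NR)) * ((1 + |a₂ * t|) ^ (-NR))
          * (|a₃ * t| ^ p₃ * (1 + |a₃ * t|) ^ (-NR))
          * (min 1 |a₁| ^ p₁ * min 1 |a₂| ^ p₂)) := by ring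
    _ ≤ C * ((min 1 |t| * max 1 |t| ^ (-(1:ℝ)))
          * (max 1 |a₁| ^ (-(4:ℝ)⁻¹) * min 1 |t| ^ (-(4:ℝ)⁻¹))
          * (max 1 |a₂| ^ (-(4:ℝ)⁻¹) * min 1 |t| ^ (-(4:ℝ)⁻¹))
          * (phi p₃ 1 (a₃ * t))
          * (min 1 |a₁| ^ p₁ * min 1 |a₂| ^ p₂)) := by
        apply mul_le_mul_of_nonneg_left _ hC0.le
        have m1 : (0:ℝ) ≤ (1 + |a₁ * t|) ^ (-NR) := Real.rpow_nonneg (by positivity) _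
        have m2 : (0:ℝ) ≤ (1 + |a₂ * t|) ^ (-NR) := Real.rpow_nonneg (by positivity) _
        have m3 : (0:ℝ) ≤ |a₃ * t| ^ p₃ * (1 + |a₃ * t|) ^ (-NR) :=
          mul_nonneg (Real.rpow_nonneg (abs_nonneg _) _) (Real.rpow_nonneg (by positivity) _)
        have m4 : (0:ℝ) ≤ min 1 |a₁| ^ p₁ * min 1 |a₂| ^ p₂ :=
          mul_nonneg (Real.rpow_nonneg (min_one_abs_nonneg a₁) _)
            (Real.rpow_nonneg (min_one_abs_nonneg a₂) _)
        have b1 : (0:ℝ) ≤ min 1 |t| * max 1 |t| ^ (-(1:ℝ)) :=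
          mul_nonneg (min_one_abs_nonneg t) (Real.rpow_nonneg (max_one_abs_pos t).le _)
        have b2 : (0:ℝ) ≤ max 1 |a₁| ^ (-(4:ℝ)⁻¹) * min 1 |t| ^ (-(4:ℝ)⁻¹) :=
          mul_nonneg (Real.rpow_nonneg (max_one_abs_pos a₁).le _)
            (Real.rpow_nonneg (min_one_abs_nonneg t) _)
        have b3 : (0:ℝ) ≤ max 1 |a₂| ^ (-(4:ℝ)⁻¹) * min 1 |t| ^ (-(4:ℝ)⁻¹) :=
          mul_nonneg (Real.rpow_nonneg (max_one_abs_pos a₂).le _)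
            (Real.rpow_nonneg (min_one_abs_nonneg t) _)
        have t1 : (0:ℝ) ≤ |t| * (1 + |t|) ^ (-NR) :=
          mul_nonneg (abs_nonneg t) (Real.rpow_nonneg (by positivity) _)
        exact mul_le_mul (mul_le_mul (mul_le_mul (mul_le_mul e3 e2a m1 b1) e2b m2
          (mul_nonneg b1 b2)) e4 m3 (mul_nonneg (mul_nonneg b1 b2) b3)) le_rfl m4
          (mul_nonneg (mul_nonneg (mul_nonneg b1 b2) b3) (phi_nonneg _ _ _))
    _ = C * (phi p₁ 4⁻¹ a₁ * (phi p₂ 4⁻¹ a₂ * phi p₃ 1 (a₃ * t)) * phi 2⁻¹ 1 t) := by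
        simp only [phi]
        rw [← hcollapse]
        ring

lemma lintegral_inv_scaled {F : ℝ → ℝ≥0∞} (hF : Measurable F) {w : ℝ} (hw : w ≠ 0) :
    ∫⁻ x, F (w * x⁻¹) ∂mulHaar = ∫⁻ x, F x ∂mulHaar := by
  have h1 : ∫⁻ x, (fun y => F (w * y)) x⁻¹ ∂mulHaar = ∫⁻ x, F (w * x) ∂mulHaar :=
    lintegral_mulHaar_inv (hF.comp (measurable_const_mul w))
  have h2 : ∫⁻ x, F (w * x) ∂mulHaar = ∫⁻ x, F x ∂mulHaar :=
    lintegral_mulHaar_comp_mul hF hw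
  rw [← h2, ← h1]

end StmtAux

open StmtAux

/-- Lemma 9.8 (archimedean case `F = ℝ`). -/
theorem stmt12
    (d₁ d₂ d₃ : ℕ) (hd₁e : Even d₁) (hd₂e : Even d₂) (hd₃e : Even d₃)
    (hd₁ : 4 ≤ d₁) (hd₂ : 4 ≤ d₂) (hd₃ : 4 ≤ d₃)
    (ε : ℝ) (hε0 : 0 < ε) (hε : ε < 1 / 2)
    (M₃ : SchwartzMap (ℝ × ℝ × ℝ × ℝ) ℂ) :
    ∃ C : ℝ, 0 < C ∧
      ∀ c : ℝ, c ≠ 0 →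
        (∫⁻ a : ℝ × ℝ × ℝ, ENNReal.ofReal
            (‖M₃ (c / (a.1 * a.2.1 * a.2.2), a.1 * c / (a.1 * a.2.1 * a.2.2),
                a.2.1 * c / (a.1 * a.2.1 * a.2.2), a.2.2 * c / (a.1 * a.2.1 * a.2.2))‖ *
              max 1 |a.1| ^ (1 - (d₁ : ℝ) / 2) *
              max 1 |a.2.1| ^ (1 - (d₂ : ℝ) / 2) *
              |a.1 * a.2.1 * a.2.2 / c| ^ (-(d₃ : ℝ) / 2) *
              (|a.1| ^ ((d₁ : ℝ) / 2 - 1) * |a.2.1| ^ ((d₂ : ℝ) / 2 - 1) *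
                |a.2.2| ^ ((d₃ : ℝ) / 2 - 1))) ∂mulHaar3)
        ≤ ENNReal.ofReal
            (C * min 1 |c| ^ ((min d₁ (min d₂ d₃) : ℝ) / 2 - 1 - ε)) := by
  have hd₁R : (4:ℝ) ≤ (d₁:ℝ) := by exact_mod_cast hd₁
  have hd₂R : (4:ℝ) ≤ (d₂:ℝ) := by exact_mod_cast hd₂
  have hd₃R : (4:ℝ) ≤ (d₃:ℝ) := by exact_mod_cast hd₃
  obtain ⟨C₀, hC₀0, hpoint⟩ := pointwise_bound hd₁ hd₂ hd₃ M₃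
  set p₁ : ℝ := (d₁:ℝ)/2 - 1 with hp₁def
  set p₂ : ℝ := (d₂:ℝ)/2 - 1 with hp₂def
  set p₃ : ℝ := (d₃:ℝ)/2 - 1 with hp₃def
  have hp₁ : 1 ≤ p₁ := by rw [hp₁def]; linarith
  have hp₂ : 1 ≤ p₂ := by rw [hp₂def]; linarith
  have hp₃ : 1 ≤ p₃ := by rw [hp₃def]; linarith
  set r : ℝ := min p₃ (p₂ - ε) with hrdef
  set r' : ℝ := min r (p₁ - ε) with hr'def
  have hr0 : 0 < r := lt_min (by linarith) (by linarith)
  have hr'0 : 0 < r' := lt_min hr0 (by linarith)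
  set Kγ : ℝ≥0∞ := ∫⁻ x, Phi 2⁻¹ 1 x ∂mulHaar with hKγdef
  set K₂ : ℝ≥0∞ := ∫⁻ x, Phi (p₂ - r) (4⁻¹ - 8⁻¹) x ∂mulHaar with hK₂def
  set K₁ : ℝ≥0∞ := ∫⁻ x, Phi (p₁ - r') (4⁻¹ - 16⁻¹) x ∂mulHaar with hK₁def
  have hKγfin : Kγ < ⊤ := lintegral_Phi_lt_top (by norm_num) (by norm_num)
  have hK₂fin : K₂ < ⊤ := by
    apply lintegral_Phi_lt_top _ (by norm_num)
    have : r ≤ p₂ - ε := min_le_right _ _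
    linarith
  have hK₁fin : K₁ < ⊤ := by
    apply lintegral_Phi_lt_top _ (by norm_num)
    have : r' ≤ p₁ - ε := min_le_right _ _
    linarith
  set T : ℝ≥0∞ := ENNReal.ofReal C₀ * (Kγ * (K₂ * K₁)) with hTdef
  have hTfin : T ≠ ⊤ := by
    rw [hTdef]
    exact ENNReal.mul_ne_top ENNReal.ofReal_ne_top (ENNReal.mul_ne_top hKγfin.ne
      (ENNReal.mul_ne_top hK₂fin.ne hK₁fin.ne))
  refine ⟨max 1 T.toReal, lt_of_lt_of_le one_pos (le_max_left _ _), fun c hc => ?_⟩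
  set Pe : ℝ := (min d₁ (min d₂ d₃) : ℝ)/2 - 1 - ε with hPedef
  have hPe_le : Pe ≤ r' := by
    have hm2 : (min d₁ (min d₂ d₃) : ℝ) ≤ (d₂:ℝ) := by
      exact_mod_cast le_trans (min_le_right d₁ _) (min_le_left d₂ d₃)
    have hm3 : (min d₁ (min d₂ d₃) : ℝ) ≤ (d₃:ℝ) := by
      exact_mod_cast le_trans (min_le_right d₁ _) (min_le_right d₂ d₃)
    have hm1 : (min d₁ (min d₂ d₃) : ℝ) ≤ (d₁:ℝ) := by
      exact_mod_cast min_le_left d₁ _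
    rw [hr'def, hrdef]
    refine le_min (le_min ?_ ?_) ?_
    · rw [hPedef, hp₃def]; linarith
    · rw [hPedef, hp₂def]; linarith
    · rw [hPedef, hp₁def]; linarith
  -- the dominating function
  set G : ℝ × ℝ × ℝ → ℝ≥0∞ := fun a =>
    Phi p₁ 4⁻¹ a.1 * (Phi p₂ 4⁻¹ a.2.1 * Phi p₃ 1 (c / a.1 * a.2.1⁻¹)) *
      Phi 2⁻¹ 1 (c / (a.1 * a.2.1) * a.2.2⁻¹) with hGdef
  have hGmeas : Measurable G := by
    rw [hGdef]
    apply Measurable.fun_mul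
    · apply Measurable.fun_mul
      · exact (measurable_Phi _ _).comp measurable_fst
      · apply Measurable.fun_mul
        · exact (measurable_Phi _ _).comp (measurable_fst.comp measurable_snd)
        · exact (measurable_Phi _ _).comp
            (((measurable_const.div measurable_fst)).mul
              (measurable_fst.comp measurable_snd).inv)
    · exact (measurable_Phi _ _).comp
        ((measurable_const.div (measurable_fst.mul (measurable_fst.comp measurable_snd))).mul
          ((measurable_snd.comp measurable_snd).inv))
  have step0 : (∫⁻ a : ℝ × ℝ × ℝ, ENNReal.ofReal
      (‖M₃ (c / (a.1 * a.2.1 * a.2.2), a.1 * c / (a.1 * a.2.1 * a.2.2),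
          a.2.1 * c / (a.1 * a.2.1 * a.2.2), a.2.2 * c / (a.1 * a.2.1 * a.2.2))‖ *
        max 1 |a.1| ^ (1 - (d₁ : ℝ) / 2) *
        max 1 |a.2.1| ^ (1 - (d₂ : ℝ) / 2) *
        |a.1 * a.2.1 * a.2.2 / c| ^ (-(d₃ : ℝ) / 2) *
        (|a.1| ^ ((d₁ : ℝ) / 2 - 1) * |a.2.1| ^ ((d₂ : ℝ) / 2 - 1) *
          |a.2.2| ^ ((d₃ : ℝ) / 2 - 1))) ∂mulHaar3)
      ≤ ENNReal.ofReal C₀ * ∫⁻ a, G a ∂mulHaar3 := by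
    rw [← lintegral_const_mul _ hGmeas]
    refine lintegral_mono fun a => ?_
    refine le_trans (ENNReal.ofReal_le_ofReal (hpoint c hc a.1 a.2.1 a.2.2)) (le_of_eq ?_)
    rw [hGdef]
    simp only
    rw [ENNReal.ofReal_mul hC₀0.le, ENNReal.ofReal_mul (mul_nonneg (phi_nonneg _ _ _)
      (mul_nonneg (phi_nonneg _ _ _) (phi_nonneg _ _ _))),
      ENNReal.ofReal_mul (phi_nonneg _ _ _), ENNReal.ofReal_mul (phi_nonneg _ _ _)]
    rfl
  have htonelli : ∫⁻ a, G a ∂mulHaar3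
      = ∫⁻ a₁, ∫⁻ a₂, ∫⁻ a₃, G (a₁, a₂, a₃) ∂mulHaar ∂mulHaar ∂mulHaar := by
    rw [mulHaar3, lintegral_prod _ hGmeas.aemeasurable]
    refine lintegral_congr fun a₁ => ?_
    exact lintegral_prod _ (hGmeas.comp measurable_prodMk_left).aemeasurable
  have hinner : ∀ a₁ a₂ : ℝ, ∫⁻ a₃, Phi 2⁻¹ 1 (c / (a₁ * a₂) * a₃⁻¹) ∂mulHaar ≤ Kγ := by
    intro a₁ a₂
    rcases eq_or_ne (c / (a₁ * a₂)) 0 with h | h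
    · rw [h]
      simp only [zero_mul]
      rw [show Phi 2⁻¹ 1 (0:ℝ) = 0 by
        rw [Phi, phi_zero _ _ (by norm_num : (2:ℝ)⁻¹ ≠ 0), ENNReal.ofReal_zero]]
      rw [lintegral_const]
      simp
    · exact le_of_eq (lintegral_inv_scaled (measurable_Phi _ _) h)
  have hmeas_a3 : ∀ a₁ a₂ : ℝ, Measurable fun a₃ : ℝ => Phi 2⁻¹ 1 (c / (a₁ * a₂) * a₃⁻¹) :=
    fun a₁ a₂ => (measurable_Phi _ _).comp (measurable_const.mul measurable_inv)
  have hmeas_a2 : ∀ a₁ : ℝ, Measurable fun a₂ : ℝ => Phi p₂ 4⁻¹ a₂ * Phi p₃ 1 (c / a₁ * a₂⁻¹) :=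
    fun a₁ => (measurable_Phi _ _).mul
      ((measurable_Phi _ _).comp (measurable_const.mul measurable_inv))
  have hmeas_a1 : Measurable fun a₁ : ℝ => Phi p₁ 4⁻¹ a₁ * Phi r 8⁻¹ (c * a₁⁻¹) :=
    (measurable_Phi _ _).mul
      ((measurable_Phi _ _).comp (measurable_const.mul measurable_inv))
  have hconvD : ∀ a₁ : ℝ, ∫⁻ a₂, Phi p₂ 4⁻¹ a₂ * Phi p₃ 1 (c / a₁ * a₂⁻¹) ∂mulHaar
      ≤ Phi r 8⁻¹ (c / a₁) * K₂ := by
    intro a₁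
    refine lintegral_conv_le hr0 (by norm_num) (min_le_left _ _) (by norm_num)
      (lt_of_le_of_lt (min_le_right _ _) (by linarith)) (by norm_num) (c / a₁)
  have hconvE : ∫⁻ a₁, Phi p₁ 4⁻¹ a₁ * Phi r 8⁻¹ (c * a₁⁻¹) ∂mulHaar
      ≤ Phi r' 16⁻¹ c * K₁ := by
    refine lintegral_conv_le hr'0 (by norm_num) (min_le_left _ _) (by norm_num)
      (lt_of_le_of_lt (min_le_right _ _) (by linarith)) (by norm_num) c
  have main : ∫⁻ a₁, ∫⁻ a₂, ∫⁻ a₃, G (a₁, a₂, a₃) ∂mulHaar ∂mulHaar ∂mulHaar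
      ≤ (Kγ * K₂) * (Phi r' 16⁻¹ c * K₁) := by
    calc ∫⁻ a₁, ∫⁻ a₂, ∫⁻ a₃, G (a₁, a₂, a₃) ∂mulHaar ∂mulHaar ∂mulHaar
        ≤ ∫⁻ a₁, ∫⁻ a₂, (Kγ * Phi p₁ 4⁻¹ a₁)
            * (Phi p₂ 4⁻¹ a₂ * Phi p₃ 1 (c / a₁ * a₂⁻¹)) ∂mulHaar ∂mulHaar := by
          refine lintegral_mono fun a₁ => lintegral_mono fun a₂ => ?_
          rw [hGdef]
          simp only
          rw [lintegral_const_mul _ (hmeas_a3 a₁ a₂)]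
          calc (Phi p₁ 4⁻¹ a₁ * (Phi p₂ 4⁻¹ a₂ * Phi p₃ 1 (c / a₁ * a₂⁻¹)))
                * ∫⁻ a₃, Phi 2⁻¹ 1 (c / (a₁ * a₂) * a₃⁻¹) ∂mulHaar
              ≤ (Phi p₁ 4⁻¹ a₁ * (Phi p₂ 4⁻¹ a₂ * Phi p₃ 1 (c / a₁ * a₂⁻¹))) * Kγ :=
                mul_le_mul_right (hinner a₁ a₂) _
            _ = (Kγ * Phi p₁ 4⁻¹ a₁) * (Phi p₂ 4⁻¹ a₂ * Phi p₃ 1 (c / a₁ * a₂⁻¹)) := by ring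
      _ ≤ ∫⁻ a₁, (Kγ * Phi p₁ 4⁻¹ a₁) * (Phi r 8⁻¹ (c / a₁) * K₂) ∂mulHaar := by
          refine lintegral_mono fun a₁ => ?_
          rw [lintegral_const_mul _ (hmeas_a2 a₁)]
          exact mul_le_mul_right (hconvD a₁) _
      _ = ∫⁻ a₁, (Kγ * K₂) * (Phi p₁ 4⁻¹ a₁ * Phi r 8⁻¹ (c * a₁⁻¹)) ∂mulHaar := by
          refine lintegral_congr fun a₁ => ?_
          rw [div_eq_mul_inv c a₁]
          ring
      _ = (Kγ * K₂) * ∫⁻ a₁, Phi p₁ 4⁻¹ a₁ * Phi r 8⁻¹ (c * a₁⁻¹) ∂mulHaar :=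
          lintegral_const_mul _ hmeas_a1
      _ ≤ (Kγ * K₂) * (Phi r' 16⁻¹ c * K₁) := mul_le_mul_right hconvE _
  have hF : Phi r' 16⁻¹ c ≤ ENNReal.ofReal (min 1 |c| ^ Pe) := by
    apply ENNReal.ofReal_le_ofReal
    calc phi r' 16⁻¹ c ≤ min 1 |c| ^ r' * 1 := by
          apply mul_le_mul_of_nonneg_left _ (Real.rpow_nonneg (min_one_abs_nonneg c) _)
          exact Real.rpow_le_one_of_one_le_of_nonpos (one_le_max_one_abs c) (by norm_num)
      _ = min 1 |c| ^ r' := mul_one _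
      _ ≤ min 1 |c| ^ Pe :=
          Real.rpow_le_rpow_of_exponent_ge (min_one_abs_pos hc) (min_one_abs_le_one c) hPe_le
  have hTle : T ≤ ENNReal.ofReal (max 1 T.toReal) := by
    refine le_trans (le_of_eq (ENNReal.ofReal_toReal hTfin).symm) ?_
    exact ENNReal.ofReal_le_ofReal (le_max_right _ _)
  calc (∫⁻ a : ℝ × ℝ × ℝ, ENNReal.ofReal _ ∂mulHaar3)
      ≤ ENNReal.ofReal C₀ * ∫⁻ a, G a ∂mulHaar3 := step0
    _ = ENNReal.ofReal C₀ * ∫⁻ a₁, ∫⁻ a₂, ∫⁻ a₃, G (a₁, a₂, a₃) ∂mulHaar ∂mulHaar ∂mulHaar := by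
        rw [htonelli]
    _ ≤ ENNReal.ofReal C₀ * ((Kγ * K₂) * (Phi r' 16⁻¹ c * K₁)) := mul_le_mul_right main _
    _ = T * Phi r' 16⁻¹ c := by rw [hTdef]; ring
    _ ≤ T * ENNReal.ofReal (min 1 |c| ^ Pe) := mul_le_mul_right hF _
    _ ≤ ENNReal.ofReal (max 1 T.toReal) * ENNReal.ofReal (min 1 |c| ^ Pe) :=
        mul_le_mul_left hTle _
    _ = ENNReal.ofReal (max 1 T.toReal * min 1 |c| ^ Pe) :=
        (ENNReal.ofReal_mul (by positivity)).symm
end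
end

section
/- Let d₁, d₂, d₃ be even integers with dᵢ ≥ 4 and let M₃ be a Schwartz function on ℝ⁴. Then for every α > 0 there exist β > 0 and C > 0 (depending on M₃, α and the dᵢ) such that for every c ∈ ℝ with |c| > 1: ∫_{|a| ≥ |c|^α} | M₃( c/[a], a₁c/[a], a₂c/[a], a₃c/[a] ) | · max(1, |a₁|)^{1−d₁/2} · max(1, |a₂|)^{1−d₂/2} · |[a]/c|^{−d₃/2} · {a}^{d/2−1} d^×a ≤ C · |c|^{−β}, where the integral is over a ∈ (ℝ^×)³ with |a| = max(|a₁|,|a₂|,|a₃|) ≥ |c|^α. (Corollary 9.9 of the paper, archimedean case F = ℝ.) -/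
open MeasureTheory

noncomputable section

section AuxiliaryLemmas

open Set Real

/-- auxiliary weight function -/
def phiAux (t : ℝ) : ℝ := (min |t| |t|⁻¹) ^ ((8:ℝ)⁻¹)

lemma phiAux_nonneg (t : ℝ) : 0 ≤ phiAux t :=
  Real.rpow_nonneg (le_min (abs_nonneg t) (by positivity)) _

lemma phiAux_measurable : Measurable phiAux := by unfold phiAux; fun_prop

lemma phiAux_neg (t : ℝ) : phiAux (-t) = phiAux t := by unfold phiAux; rw [abs_neg]

lemma integrable_h : Integrable (fun t : ℝ => |t|⁻¹ * phiAux t) volume := by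
  have hmeas : Measurable fun t : ℝ => |t|⁻¹ * phiAux t := by unfold phiAux; fun_prop
  have hnonneg : ∀ t : ℝ, 0 ≤ |t|⁻¹ * phiAux t :=
    fun t => mul_nonneg (by positivity) (phiAux_nonneg t)
  have hpos : IntegrableOn (fun t : ℝ => |t|⁻¹ * phiAux t) (Ioi 0) := by
    have hsplit : Ioo (0:ℝ) 1 ∪ Ici 1 = Ioi 0 := Ioo_union_Ici_eq_Ioi one_pos
    rw [← hsplit, integrableOn_union]
    constructor
    · apply Integrable.mono' ((intervalIntegral.integrableOn_Ioo_rpow_iff one_pos).2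
        (by norm_num : (-1:ℝ) < -(7/8)))
        (hmeas.aestronglyMeasurable.restrict)
      filter_upwards [ae_restrict_mem measurableSet_Ioo] with t ht
      have ht0 : (0:ℝ) < t := ht.1
      have ht1 : t ≤ 1 := ht.2.le
      have h1 : (1:ℝ) ≤ t⁻¹ := one_le_inv_iff₀.2 ⟨ht0, ht1⟩
      rw [Real.norm_eq_abs, abs_of_nonneg (hnonneg t)]
      unfold phiAux
      rw [abs_of_pos ht0, min_eq_left (le_trans ht1 h1),
        show t⁻¹ = t ^ (-1:ℝ) from (Real.rpow_neg_one t).symm,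
        ← Real.rpow_add ht0]
      apply le_of_eq; congr 1; norm_num
    · rw [integrableOn_Ici_iff_integrableOn_Ioi]
      apply Integrable.mono' ((integrableOn_Ioi_rpow_iff one_pos).2
        (by norm_num : -(9/8) < (-1:ℝ)))
        (hmeas.aestronglyMeasurable.restrict)
      filter_upwards [ae_restrict_mem measurableSet_Ioi] with t ht
      have ht1 : (1:ℝ) < t := ht
      have ht0 : (0:ℝ) < t := lt_trans one_pos ht1
      have h1 : t⁻¹ ≤ t := le_trans (inv_le_one_of_one_le₀ ht1.le) ht1.le
      rw [Real.norm_eq_abs, abs_of_nonneg (hnonneg t)]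
      unfold phiAux
      rw [abs_of_pos ht0, min_eq_right h1,
        show t⁻¹ = t ^ (-1:ℝ) from (Real.rpow_neg_one t).symm,
        ← Real.rpow_mul ht0.le, ← Real.rpow_add ht0]
      apply le_of_eq; congr 1; norm_num
  rw [← integrableOn_univ, ← Iio_union_Ici (a := (0:ℝ)), integrableOn_union]
  constructor
  · rw [← (Measure.measurePreserving_neg (volume : Measure ℝ)).integrableOn_comp_preimage
      (Homeomorph.neg ℝ).measurableEmbedding]
    simp only [Function.comp_def, neg_preimage, neg_Iio, neg_zero, abs_neg, phiAux_neg]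
    exact hpos
  · rw [integrableOn_Ici_iff_integrableOn_Ioi]
    exact hpos

lemma J_lt_top : ∫⁻ t, ENNReal.ofReal (phiAux t) ∂mulHaar < ⊤ := by
  unfold mulHaar
  rw [lintegral_withDensity_eq_lintegral_mul volume
    (by fun_prop : Measurable fun a : ℝ => ENNReal.ofReal |a|⁻¹)
    (g := fun t => ENNReal.ofReal (phiAux t))
    (ENNReal.measurable_ofReal.comp phiAux_measurable :
      Measurable fun t => ENNReal.ofReal (phiAux t))]
  simp only [Pi.mul_apply, Function.comp]
  calc ∫⁻ t, ENNReal.ofReal |t|⁻¹ * ENNReal.ofReal (phiAux t) ∂volume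
      = ∫⁻ t, ENNReal.ofReal (|t|⁻¹ * phiAux t) ∂volume :=
        lintegral_congr fun t => (ENNReal.ofReal_mul (by positivity)).symm
    _ < ⊤ := integrable_h.lintegral_lt_top

/-- coordinate bound 1 -/
lemma c1c (A : ℝ) (hA : 0 < A) : (min 1 A)^8 ≤ min A A⁻¹ * max 1 A := by
  rcases le_total A 1 with h | h
  · have h1 : A ≤ A⁻¹ := le_trans h (one_le_inv_iff₀.2 ⟨hA, h⟩)
    rw [min_eq_right h, min_eq_left h1, max_eq_left h, mul_one]
    calc A^8 ≤ A^1 := pow_le_pow_of_le_one hA.le h (by norm_num)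
      _ = A := pow_one A
  · have h1 : A⁻¹ ≤ A := le_trans (inv_le_one_of_one_le₀ h) h
    rw [min_eq_left h, min_eq_right h1, max_eq_right h, one_pow,
      inv_mul_cancel₀ (ne_of_gt hA)]

/-- coordinate bound 3 -/
lemma c3c (A : ℝ) (hA : 0 < A) : (min 1 A)^8 * max 1 A ≤ min A A⁻¹ * A^4 := by
  rcases le_total A 1 with h | h
  · have h1 : A ≤ A⁻¹ := le_trans h (one_le_inv_iff₀.2 ⟨hA, h⟩)
    rw [min_eq_right h, min_eq_left h1, max_eq_left h, mul_one]
    calc A^8 ≤ A^5 := pow_le_pow_of_le_one hA.le h (by norm_num)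
      _ = A * A^4 := by ring
  · have h1 : A⁻¹ ≤ A := le_trans (inv_le_one_of_one_le₀ h) h
    rw [min_eq_left h, min_eq_right h1, max_eq_right h, one_pow, one_mul]
    have e : A⁻¹ * A^4 = A^3 := by field_simp
    rw [e]
    calc A = A^1 := (pow_one A).symm
      _ ≤ A^3 := pow_le_pow_right₀ h (by norm_num)

lemma L1c (A MM : ℝ) (hA : 0 < A) (hMM : 1 ≤ MM) :
    (min 1 (A/MM))^16 * (MM^4 * A^4) ≤ (min 1 A)^8 * A^8 := by
  have hMM0 : 0 < MM := lt_of_lt_of_le one_pos hMM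
  set q := min 1 (A/MM) with hqdef
  have hq0 : 0 ≤ q := le_min zero_le_one (by positivity)
  have hq1 : q ≤ 1 := min_le_left _ _
  have hqMM : q * MM ≤ A := by
    calc q * MM ≤ (A/MM) * MM := mul_le_mul_of_nonneg_right (min_le_right _ _) hMM0.le
      _ = A := div_mul_cancel₀ _ (ne_of_gt hMM0)
  have h4 : (q*MM)^4 ≤ A^4 := pow_le_pow_left₀ (mul_nonneg hq0 hMM0.le) hqMM 4
  rcases le_total A 1 with h | h
  · rw [min_eq_right h]
    have hqA : q ≤ A := le_trans (le_mul_of_one_le_right hq0 hMM) hqMM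
    have hq12 : q^12 ≤ A^12 := pow_le_pow_left₀ hq0 hqA 12
    calc q^16*(MM^4*A^4) = (q*MM)^4 * q^12 * A^4 := by ring
      _ ≤ A^4 * A^12 * A^4 :=
        mul_le_mul (mul_le_mul h4 hq12 (pow_nonneg hq0 _) (pow_nonneg hA.le _)) le_rfl
          (pow_nonneg hA.le _) (by positivity)
      _ = A^20 := by ring
      _ ≤ A^16 := pow_le_pow_of_le_one hA.le h (by norm_num)
      _ = A^8 * A^8 := by ring
  · rw [min_eq_left h, one_pow, one_mul]
    have hq12 : q^12 ≤ 1 := pow_le_one₀ hq0 hq1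
    calc q^16*(MM^4*A^4) = (q*MM)^4*(q^12*A^4) := by ring
      _ ≤ A^4*(1*A^4) := mul_le_mul h4
          (mul_le_mul_of_nonneg_right hq12 (by positivity)) (by positivity) (by positivity)
      _ = A^8 := by ring

lemma poly_core (D E₁ E₂ : ℕ) (hD : 2 ≤ D) (hE₁ : 1 ≤ E₁) (hE₂ : 1 ≤ E₂)
    {q m₁ m₂ m₃ P₁ P₂ P₃ M₁ M₂ M₃ MM N A₃ : ℝ}
    (hq0 : 0 ≤ q) (hq1 : q ≤ 1) (hm₁0 : 0 ≤ m₁) (hm₁1 : m₁ ≤ 1)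
    (hm₂0 : 0 ≤ m₂) (hm₂1 : m₂ ≤ 1) (hm₃0 : 0 ≤ m₃)
    (hA₃ : 0 < A₃) (hMM0 : 0 < MM) (hM₁0 : 0 < M₁) (hM₂0 : 0 < M₂) (hM₃0 : 0 < M₃)
    (hP₁ : 0 ≤ P₁) (hP₂ : 0 ≤ P₂) (hP₃ : 0 ≤ P₃) (hN0 : 0 ≤ N)
    (hL1 : q^16 * (MM^4*A₃^4) ≤ m₃^8 * A₃^8)
    (hc1 : m₁^8 ≤ P₁*M₁) (hc2 : m₂^8 ≤ P₂*M₂) (hc3 : m₃^8*M₃ ≤ P₃*A₃^4)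
    (hN : N ≤ M₁*(M₂*M₃)) (hM₁MM : M₁ ≤ MM) (hM₂MM : M₂ ≤ MM) :
    q^D*(m₁^E₁*m₂^E₂)/A₃ * N^((8:ℝ)⁻¹) ≤ (P₁*(P₂*P₃))^((8:ℝ)⁻¹) := by
  have hPP : 0 ≤ P₁*(P₂*P₃) := mul_nonneg hP₁ (mul_nonneg hP₂ hP₃)
  have hpow : ∀ y:ℝ, 0 ≤ y → (y ^ ((8:ℝ)⁻¹))^(8:ℕ) = y := by
    intro y hy
    rw [← Real.rpow_natCast (y ^ ((8:ℝ)⁻¹)) 8, ← Real.rpow_mul hy]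
    norm_num
  apply le_of_pow_le_pow_left₀ (n := 8) (by norm_num) (Real.rpow_nonneg hPP _)
  rw [mul_pow, hpow N hN0, hpow _ hPP, div_pow, div_mul_eq_mul_div,
    div_le_iff₀ (by positivity : (0:ℝ) < A₃^8)]
  have key : (q^D*(m₁^E₁*m₂^E₂))^8 * N * (MM^4*A₃^4)
      ≤ (P₁*(P₂*P₃) * A₃^8) * (MM^4*A₃^4) := by
    have hq16 : (q^D)^8 ≤ q^16 := by
      rw [← pow_mul]; exact pow_le_pow_of_le_one hq0 hq1 (by omega)
    have hm18 : (m₁^E₁)^8 ≤ m₁^8 := by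
      rw [← pow_mul]; exact pow_le_pow_of_le_one hm₁0 hm₁1 (by omega)
    have hm28 : (m₂^E₂)^8 ≤ m₂^8 := by
      rw [← pow_mul]; exact pow_le_pow_of_le_one hm₂0 hm₂1 (by omega)
    calc (q^D*(m₁^E₁*m₂^E₂))^8 * N * (MM^4*A₃^4)
        = ((q^D)^8*((m₁^E₁)^8*(m₂^E₂)^8)) * (N*(MM^4*A₃^4)) := by ring
      _ ≤ (q^16*(m₁^8*m₂^8)) * (N*(MM^4*A₃^4)) := by
          apply mul_le_mul_of_nonneg_right _ (by positivity)
          exact mul_le_mul hq16 (mul_le_mul hm18 hm28 (by positivity) (by positivity))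
            (by positivity) (by positivity)
      _ = (q^16*(MM^4*A₃^4)) * ((m₁^8*m₂^8)*N) := by ring
      _ ≤ (m₃^8*A₃^8) * ((m₁^8*m₂^8)*N) :=
          mul_le_mul_of_nonneg_right hL1 (by positivity)
      _ ≤ (m₃^8*A₃^8) * ((m₁^8*m₂^8)*(M₁*(M₂*M₃))) := by
          apply mul_le_mul_of_nonneg_left (mul_le_mul_of_nonneg_left hN (by positivity))
            (by positivity)
      _ = (m₁^8*((m₂^8)*(m₃^8*M₃))) * (A₃^8*(M₁*M₂)) := by ring
      _ ≤ ((P₁*M₁)*((P₂*M₂)*(P₃*A₃^4))) * (A₃^8*(M₁*M₂)) := by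
          apply mul_le_mul_of_nonneg_right _ (by positivity)
          exact mul_le_mul hc1 (mul_le_mul hc2 hc3 (by positivity) (by positivity))
            (by positivity) (by positivity)
      _ = (P₁*(P₂*P₃)*A₃^8) * (A₃^4*((M₁*M₁)*(M₂*M₂))) := by ring
      _ ≤ (P₁*(P₂*P₃)*A₃^8) * (A₃^4*((MM*MM)*(MM*MM))) := by
          apply mul_le_mul_of_nonneg_left _ (by positivity)
          apply mul_le_mul_of_nonneg_left _ (by positivity)
          exact mul_le_mul (mul_le_mul hM₁MM hM₁MM hM₁0.le hMM0.le)
            (mul_le_mul hM₂MM hM₂MM hM₂0.le hMM0.le) (by positivity) (by positivity)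
      _ = (P₁*(P₂*P₃)*A₃^8) * (MM^4*A₃^4) := by ring
  exact le_of_mul_le_mul_right key (by positivity)

lemma core_ineq (D E₁ E₂ : ℕ) (hD : 2 ≤ D) (hE₁ : 1 ≤ E₁) (hE₂ : 1 ≤ E₂)
    (A₁ A₂ A₃ : ℝ) (h1 : 0 < A₁) (h2 : 0 < A₂) (h3 : 0 < A₃) :
    (min 1 (A₃ / max 1 (max A₁ A₂)))^D * ((min 1 A₁)^E₁*(min 1 A₂)^E₂) / A₃
        * (max A₁ (max A₂ A₃)) ^ ((8:ℝ)⁻¹)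
      ≤ (min A₁ A₁⁻¹) ^ ((8:ℝ)⁻¹) *
        ((min A₂ A₂⁻¹) ^ ((8:ℝ)⁻¹) * (min A₃ A₃⁻¹) ^ ((8:ℝ)⁻¹)) := by
  have hP₁ : 0 ≤ min A₁ A₁⁻¹ := le_min h1.le (by positivity)
  have hP₂ : 0 ≤ min A₂ A₂⁻¹ := le_min h2.le (by positivity)
  have hP₃ : 0 ≤ min A₃ A₃⁻¹ := le_min h3.le (by positivity)
  rw [← Real.mul_rpow hP₂ hP₃, ← Real.mul_rpow hP₁ (mul_nonneg hP₂ hP₃)]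
  have hMM : (1:ℝ) ≤ max 1 (max A₁ A₂) := le_max_left _ _
  have hM₁ : (1:ℝ) ≤ max 1 A₁ := le_max_left _ _
  have hM₂ : (1:ℝ) ≤ max 1 A₂ := le_max_left _ _
  have hM₃ : (1:ℝ) ≤ max 1 A₃ := le_max_left _ _
  have hM₁0 : (0:ℝ) < max 1 A₁ := lt_of_lt_of_le one_pos hM₁
  have hM₂0 : (0:ℝ) < max 1 A₂ := lt_of_lt_of_le one_pos hM₂
  have hM₃0 : (0:ℝ) < max 1 A₃ := lt_of_lt_of_le one_pos hM₃
  have hMM0 : (0:ℝ) < max 1 (max A₁ A₂) := lt_of_lt_of_le one_pos hMM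
  have hN : max A₁ (max A₂ A₃) ≤ max 1 A₁ * (max 1 A₂ * max 1 A₃) := by
    have h23 : (1:ℝ) ≤ max 1 A₂ * max 1 A₃ := by nlinarith
    apply max_le
    · calc A₁ ≤ max 1 A₁ := le_max_right _ _
        _ ≤ max 1 A₁ * (max 1 A₂ * max 1 A₃) := le_mul_of_one_le_right hM₁0.le h23
    apply max_le
    · calc A₂ ≤ max 1 A₂ := le_max_right _ _
        _ ≤ max 1 A₁ * (max 1 A₂ * max 1 A₃) := by nlinarith [le_max_right (1:ℝ) A₃]
    · calc A₃ ≤ max 1 A₃ := le_max_right _ _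
        _ ≤ max 1 A₁ * (max 1 A₂ * max 1 A₃) := by nlinarith
  have hM₁MM : max 1 A₁ ≤ max 1 (max A₁ A₂) :=
    max_le (le_max_left _ _) (le_trans (le_max_left A₁ A₂) (le_max_right 1 _))
  have hM₂MM : max 1 A₂ ≤ max 1 (max A₁ A₂) :=
    max_le (le_max_left _ _) (le_trans (le_max_right A₁ A₂) (le_max_right 1 _))
  exact poly_core D E₁ E₂ hD hE₁ hE₂
    (le_min zero_le_one (by positivity)) (min_le_left _ _)
    (le_min zero_le_one h1.le) (min_le_left _ _)
    (le_min zero_le_one h2.le) (min_le_left _ _)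
    (le_min zero_le_one h3.le)
    h3 hMM0 hM₁0 hM₂0 hM₃0 hP₁ hP₂ hP₃
    (le_trans h1.le (le_max_left A₁ (max A₂ A₃)))
    (L1c A₃ _ h3 hMM) (c1c A₁ h1) (c1c A₂ h2) (c3c A₃ h3) hN hM₁MM hM₂MM

lemma region_bound {α : ℝ} {c : ℝ} (hc : 1 < |c|) {N X Φ : ℝ}
    (hN : |c|^α ≤ N) (hX : 0 ≤ X) (h : X * N^((8:ℝ)⁻¹) ≤ Φ) :
    X ≤ |c|^(-(α/8)) * Φ := by
  have hc0 : (0:ℝ) < |c| := lt_trans one_pos hc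
  have hcb : (0:ℝ) < |c|^(α/8) := Real.rpow_pos_of_pos hc0 _
  have h1 : |c|^(α/8) = (|c|^α)^((8:ℝ)⁻¹) := by
    rw [← Real.rpow_mul hc0.le]; norm_num; ring_nf
  have h2 : |c|^(α/8) ≤ N^((8:ℝ)⁻¹) := by
    rw [h1]; exact Real.rpow_le_rpow (Real.rpow_nonneg hc0.le α) hN (by norm_num)
  have h3 : X * |c|^(α/8) ≤ Φ := le_trans (mul_le_mul_of_nonneg_left h2 hX) h
  rw [Real.rpow_neg hc0.le, inv_mul_eq_div, le_div_iff₀ hcb]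
  exact h3

lemma final_real (D E₁ E₂ : ℕ) (hD : 2 ≤ D) (hE₁ : 1 ≤ E₁) (hE₂ : 1 ≤ E₂)
    {α c : ℝ} (hc : 1 < |c|) (a₁ a₂ a₃ : ℝ)
    (h1 : a₁ ≠ 0) (h2 : a₂ ≠ 0) (h3 : a₃ ≠ 0)
    (hreg : |c|^α ≤ max |a₁| (max |a₂| |a₃|)) :
    min 1 (|a₃| / max 1 (max |a₁| |a₂|)) ^ D * ((min 1 |a₁|)^E₁ * (min 1 |a₂|)^E₂) / |a₃|
      ≤ |c|^(-(α/8)) * (phiAux a₁ * (phiAux a₂ * phiAux a₃)) := by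
  have hA1 : (0:ℝ) < |a₁| := abs_pos.2 h1
  have hA2 : (0:ℝ) < |a₂| := abs_pos.2 h2
  have hA3 : (0:ℝ) < |a₃| := abs_pos.2 h3
  apply region_bound hc hreg
  · apply div_nonneg _ (abs_nonneg a₃)
    apply mul_nonneg (pow_nonneg (le_min zero_le_one (by positivity)) _)
    exact mul_nonneg (pow_nonneg (le_min zero_le_one hA1.le) _)
      (pow_nonneg (le_min zero_le_one hA2.le) _)
  · exact core_ineq D E₁ E₂ hD hE₁ hE₂ _ _ _ hA1 hA2 hA3

/-- generic Schwartz coordinate-decay step -/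
lemma step2 {f u xj t B : ℝ} (D : ℕ) (hf : 0 ≤ f) (ht : 0 ≤ t)
    (hB : f * max 1 |xj| ^ D ≤ B) (hu : |u| ≤ max 1 |xj| * t) :
    f * |u|^D ≤ B * t^D := by
  have h1 : |u|^D ≤ (max 1 |xj|)^D * t^D := by
    rw [← mul_pow]; exact pow_le_pow_left₀ (abs_nonneg u) hu D
  calc f*|u|^D ≤ f*((max 1 |xj|)^D * t^D) := mul_le_mul_of_nonneg_left h1 hf
    _ = (f*(max 1 |xj|)^D)*t^D := by ring
    _ ≤ B*t^D := mul_le_mul_of_nonneg_right hB (pow_nonneg ht D)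

lemma main_bound (M₃ : SchwartzMap (ℝ × ℝ × ℝ × ℝ) ℂ) (D E₁ E₂ : ℕ)
    (hD : 2 ≤ D) (hE₁ : 1 ≤ E₁) (hE₂ : 1 ≤ E₂) (B : ℝ)
    (hB : ∀ x : ℝ×ℝ×ℝ×ℝ, ‖M₃ x‖ * max 1 ‖x‖ ^ D ≤ B)
    (c a₁ a₂ a₃ : ℝ) (hc : c ≠ 0) (h1 : a₁ ≠ 0) (h2 : a₂ ≠ 0) (h3 : a₃ ≠ 0) :
    ‖M₃ (c/(a₁*a₂*a₃), a₁*c/(a₁*a₂*a₃), a₂*c/(a₁*a₂*a₃), a₃*c/(a₁*a₂*a₃))‖ *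
      (max 1 |a₁| ^ E₁)⁻¹ * (max 1 |a₂| ^ E₂)⁻¹ * (|a₁*a₂*a₃/c| ^ D)⁻¹ *
      (|a₁|^E₁ * |a₂|^E₂ * |a₃|^(D-1)) ≤
    B * ((min 1 (|a₃| / max 1 (max |a₁| |a₂|)))^D *
      ((min 1 |a₁|)^E₁ * (min 1 |a₂|)^E₂) / |a₃|) := by
  set x : ℝ×ℝ×ℝ×ℝ := (c/(a₁*a₂*a₃), a₁*c/(a₁*a₂*a₃), a₂*c/(a₁*a₂*a₃), a₃*c/(a₁*a₂*a₃))
    with hxdef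
  have hA1 : (0:ℝ) < |a₁| := abs_pos.2 h1
  have hA2 : (0:ℝ) < |a₂| := abs_pos.2 h2
  have hA3 : (0:ℝ) < |a₃| := abs_pos.2 h3
  have hAc : (0:ℝ) < |c| := abs_pos.2 hc
  have hM₁0 : (0:ℝ) < max 1 |a₁| := lt_of_lt_of_le one_pos (le_max_left _ _)
  have hM₂0 : (0:ℝ) < max 1 |a₂| := lt_of_lt_of_le one_pos (le_max_left _ _)
  have hBj : ∀ w : ℝ, |w| ≤ ‖x‖ → ‖M₃ x‖ * max 1 |w| ^ D ≤ B := by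
    intro w hw
    calc ‖M₃ x‖ * max 1 |w| ^ D ≤ ‖M₃ x‖ * max 1 ‖x‖ ^ D := by
          apply mul_le_mul_of_nonneg_left _ (norm_nonneg _)
          exact pow_le_pow_left₀ (le_trans zero_le_one (le_max_left _ _))
            (max_le_max le_rfl hw) D
      _ ≤ B := hB x
  have hn0 : |c/(a₁*a₂*a₃)| ≤ ‖x‖ := by
    rw [← Real.norm_eq_abs]; exact norm_fst_le x
  have hn1 : |a₁*c/(a₁*a₂*a₃)| ≤ ‖x‖ := by
    rw [← Real.norm_eq_abs]; exact le_trans (norm_fst_le x.2) (norm_snd_le x)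
  have hn2 : |a₂*c/(a₁*a₂*a₃)| ≤ ‖x‖ := by
    rw [← Real.norm_eq_abs]
    exact le_trans (norm_fst_le x.2.2) (le_trans (norm_snd_le x.2) (norm_snd_le x))
  have hn3 : |a₃*c/(a₁*a₂*a₃)| ≤ ‖x‖ := by
    rw [← Real.norm_eq_abs]
    exact le_trans (norm_snd_le x.2.2) (le_trans (norm_snd_le x.2) (norm_snd_le x))
  have ineq2 : ‖M₃ x‖ * |c/(a₁*a₂)|^D
      ≤ B * (min 1 (|a₃| / max 1 (max |a₁| |a₂|)))^D := by
    rcases le_total 1 (|a₃| / max 1 (max |a₁| |a₂|)) with hq | hq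
    · rw [min_eq_left hq]
      apply step2 D (norm_nonneg _) zero_le_one (hBj _ hn3)
      have e : a₃*c/(a₁*a₂*a₃) = c/(a₁*a₂) := by field_simp
      rw [mul_one, e]
      exact le_max_right _ _
    · rw [min_eq_right hq]
      rcases max_cases 1 (max |a₁| |a₂|) with ⟨hMMeq, hle⟩ | ⟨hMMeq, hlt⟩
      · rw [hMMeq, div_one]
        apply step2 D (norm_nonneg _) (abs_nonneg a₃) (hBj _ hn0)
        have e : c/(a₁*a₂*a₃) = c/(a₁*a₂)/a₃ := (div_div _ _ _).symm
        calc |c/(a₁*a₂)| = |c/(a₁*a₂)| / |a₃| * |a₃| :=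
              (div_mul_cancel₀ _ (ne_of_gt hA3)).symm
          _ = |c/(a₁*a₂*a₃)| * |a₃| := by rw [e, abs_div (c/(a₁*a₂)) a₃]
          _ ≤ max 1 |c/(a₁*a₂*a₃)| * |a₃| :=
              mul_le_mul_of_nonneg_right (le_max_right _ _) hA3.le
      · rcases max_cases |a₁| |a₂| with ⟨hMeq, hle2⟩ | ⟨hMeq, hlt2⟩
        · rw [hMMeq, hMeq]
          apply step2 D (norm_nonneg _) (by positivity) (hBj _ hn1)
          have e1 : a₁*c/(a₁*a₂*a₃) = c/(a₂*a₃) := by field_simp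
          calc |c/(a₁*a₂)| = |c| / (|a₂| * |a₃|) * (|a₃| / |a₁|) := by
                rw [abs_div, abs_mul]; field_simp
            _ ≤ max 1 |a₁*c/(a₁*a₂*a₃)| * (|a₃| / |a₁|) := by
                apply mul_le_mul_of_nonneg_right _ (by positivity)
                rw [e1, abs_div, abs_mul]
                exact le_max_right _ _
        · rw [hMMeq, hMeq]
          apply step2 D (norm_nonneg _) (by positivity) (hBj _ hn2)
          have e1 : a₂*c/(a₁*a₂*a₃) = c/(a₁*a₃) := by field_simp
          calc |c/(a₁*a₂)| = |c| / (|a₁| * |a₃|) * (|a₃| / |a₂|) := by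
                rw [abs_div, abs_mul]; field_simp
            _ ≤ max 1 |a₂*c/(a₁*a₂*a₃)| * (|a₃| / |a₂|) := by
                apply mul_le_mul_of_nonneg_right _ (by positivity)
                rw [e1, abs_div, abs_mul]
                exact le_max_right _ _
  obtain ⟨D', rfl⟩ : ∃ D', D = D' + 1 := ⟨D-1, by omega⟩
  have emin₁ : min 1 |a₁| = |a₁| / max 1 |a₁| := by
    rcases le_total |a₁| 1 with h | h
    · rw [min_eq_right h, max_eq_left h, div_one]
    · rw [min_eq_left h, max_eq_right h, div_self (ne_of_gt hA1)]
  have emin₂ : min 1 |a₂| = |a₂| / max 1 |a₂| := by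
    rcases le_total |a₂| 1 with h | h
    · rw [min_eq_right h, max_eq_left h, div_one]
    · rw [min_eq_left h, max_eq_right h, div_self (ne_of_gt hA2)]
  have eq1 : ‖M₃ x‖ * (max 1 |a₁| ^ E₁)⁻¹ * (max 1 |a₂| ^ E₂)⁻¹ *
      (|a₁*a₂*a₃/c| ^ (D'+1))⁻¹ * (|a₁|^E₁ * |a₂|^E₂ * |a₃|^(D'+1-1)) =
      (‖M₃ x‖ * |c/(a₁*a₂)|^(D'+1)) *
        ((min 1 |a₁|)^E₁ * (min 1 |a₂|)^E₂ / |a₃|) := by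
    simp only [Nat.add_sub_cancel]
    rw [emin₁, emin₂, abs_div, abs_mul, abs_mul, abs_div, abs_mul]
    have key : |a₃|^D' * (|a₃|^(D'+1))⁻¹ = |a₃|⁻¹ := by
      rw [pow_succ, mul_inv, ← mul_assoc, mul_inv_cancel₀ (pow_ne_zero _ hA3.ne'), one_mul]
    linear_combination (norm := ring_nf) (‖M₃ x‖ * (max 1 |a₁| ^ E₁)⁻¹ * (max 1 |a₂| ^ E₂)⁻¹ *
      |c|^(D'+1) * ((|a₁| * |a₂|)^(D'+1))⁻¹ * |a₁|^E₁ * |a₂|^E₂) * key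
    simp only [inv_inv]
    ring
  rw [eq1]
  calc (‖M₃ x‖ * |c/(a₁*a₂)|^(D'+1)) *
        ((min 1 |a₁|)^E₁ * (min 1 |a₂|)^E₂ / |a₃|)
      ≤ (B * (min 1 (|a₃| / max 1 (max |a₁| |a₂|)))^(D'+1)) *
        ((min 1 |a₁|)^E₁ * (min 1 |a₂|)^E₂ / |a₃|) := by
        apply mul_le_mul_of_nonneg_right ineq2
        have hm1 : (0:ℝ) ≤ min 1 |a₁| := le_min zero_le_one hA1.le
        have hm2 : (0:ℝ) ≤ min 1 |a₂| := le_min zero_le_one hA2.le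
        positivity
    _ = B * ((min 1 (|a₃| / max 1 (max |a₁| |a₂|)))^(D'+1) *
        ((min 1 |a₁|)^E₁ * (min 1 |a₂|)^E₂) / |a₃|) := by ring

end AuxiliaryLemmas

/-- Corollary 9.9 (archimedean case `F = ℝ`). -/
theorem stmt13
    (d₁ d₂ d₃ : ℕ) (hd₁e : Even d₁) (hd₂e : Even d₂) (hd₃e : Even d₃)
    (hd₁ : 4 ≤ d₁) (hd₂ : 4 ≤ d₂) (hd₃ : 4 ≤ d₃)
    (M₃ : SchwartzMap (ℝ × ℝ × ℝ × ℝ) ℂ) :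
    ∀ α : ℝ, 0 < α →
      ∃ β : ℝ, 0 < β ∧ ∃ C : ℝ, 0 < C ∧
        ∀ c : ℝ, 1 < |c| →
          (∫⁻ a in {p : ℝ × ℝ × ℝ | |c| ^ α ≤ max |p.1| (max |p.2.1| |p.2.2|)},
              ENNReal.ofReal
                (‖M₃ (c / (a.1 * a.2.1 * a.2.2), a.1 * c / (a.1 * a.2.1 * a.2.2),
                    a.2.1 * c / (a.1 * a.2.1 * a.2.2), a.2.2 * c / (a.1 * a.2.1 * a.2.2))‖ *
                  max 1 |a.1| ^ (1 - (d₁ : ℝ) / 2) *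
                  max 1 |a.2.1| ^ (1 - (d₂ : ℝ) / 2) *
                  |a.1 * a.2.1 * a.2.2 / c| ^ (-(d₃ : ℝ) / 2) *
                  (|a.1| ^ ((d₁ : ℝ) / 2 - 1) * |a.2.1| ^ ((d₂ : ℝ) / 2 - 1) *
                    |a.2.2| ^ ((d₃ : ℝ) / 2 - 1))) ∂mulHaar3)
          ≤ ENNReal.ofReal (C * |c| ^ (-β)) := by
  obtain ⟨r₁, hr₁⟩ := hd₁e
  obtain ⟨r₂, hr₂⟩ := hd₂e
  obtain ⟨r₃, hr₃⟩ := hd₃e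
  subst hr₁; subst hr₂; subst hr₃
  have h2r₁ : 2 ≤ r₁ := by omega
  have h2r₂ : 2 ≤ r₂ := by omega
  have h2r₃ : 2 ≤ r₃ := by omega
  intro α hα
  refine ⟨α/8, by positivity, ?_⟩
  obtain ⟨B₀, hB₀pos, hB₀⟩ := M₃.decay 0 0
  obtain ⟨B₁, hB₁pos, hB₁⟩ := M₃.decay r₃ 0
  set B := B₀ + B₁ with hBdef
  have hBpos : 0 < B := by linarith
  have hB : ∀ x : ℝ×ℝ×ℝ×ℝ, ‖M₃ x‖ * max 1 ‖x‖ ^ r₃ ≤ B := by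
    intro x
    rcases le_total ‖x‖ 1 with h | h
    · rw [max_eq_left h, one_pow, mul_one]
      have h0 := hB₀ x
      rw [pow_zero, one_mul, norm_iteratedFDeriv_zero] at h0
      linarith
    · rw [max_eq_right h]
      have h0 := hB₁ x
      rw [norm_iteratedFDeriv_zero] at h0
      rw [mul_comm]
      linarith
  haveI : SigmaFinite mulHaar := by unfold mulHaar; infer_instance
  have hJ : ∫⁻ t, ENNReal.ofReal (phiAux t) ∂mulHaar < ⊤ := J_lt_top
  set J := ∫⁻ t, ENNReal.ofReal (phiAux t) ∂mulHaar with hJdef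
  set K := J.toReal with hKdef
  have hK0 : 0 ≤ K := ENNReal.toReal_nonneg
  have hJK : J = ENNReal.ofReal K := (ENNReal.ofReal_toReal hJ.ne).symm
  refine ⟨B*(K+1)^3 + 1, by nlinarith [pow_pos (by linarith : (0:ℝ) < K+1) 3], ?_⟩
  intro c hc
  have hc0 : (0:ℝ) < |c| := lt_trans one_pos hc
  have hcne : c ≠ 0 := abs_pos.mp hc0
  have hcβ : (0:ℝ) ≤ |c| ^ (-(α/8)) := Real.rpow_nonneg hc0.le _
  have hS : MeasurableSet {p : ℝ × ℝ × ℝ | |c| ^ α ≤ max |p.1| (max |p.2.1| |p.2.2|)} := by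
    apply measurableSet_le measurable_const
    fun_prop
  have hcast₁ : (((r₁+r₁ : ℕ)) : ℝ)/2 - 1 = ((r₁ - 1 : ℕ) : ℝ) := by
    rw [Nat.cast_sub (by omega)]; push_cast; ring
  have hcast₁' : 1 - (((r₁+r₁ : ℕ)) : ℝ)/2 = -((r₁ - 1 : ℕ) : ℝ) := by
    rw [Nat.cast_sub (by omega)]; push_cast; ring
  have hcast₂ : (((r₂+r₂ : ℕ)) : ℝ)/2 - 1 = ((r₂ - 1 : ℕ) : ℝ) := by
    rw [Nat.cast_sub (by omega)]; push_cast; ring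
  have hcast₂' : 1 - (((r₂+r₂ : ℕ)) : ℝ)/2 = -((r₂ - 1 : ℕ) : ℝ) := by
    rw [Nat.cast_sub (by omega)]; push_cast; ring
  have hcast₃ : -(((r₃+r₃ : ℕ)) : ℝ)/2 = -((r₃ : ℕ) : ℝ) := by push_cast; ring
  have hcast₃' : (((r₃+r₃ : ℕ)) : ℝ)/2 - 1 = ((r₃ - 1 : ℕ) : ℝ) := by
    rw [Nat.cast_sub (by omega)]; push_cast; ring
  have hpt : ∀ a : ℝ × ℝ × ℝ, |c| ^ α ≤ max |a.1| (max |a.2.1| |a.2.2|) →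
      ‖M₃ (c / (a.1 * a.2.1 * a.2.2), a.1 * c / (a.1 * a.2.1 * a.2.2),
            a.2.1 * c / (a.1 * a.2.1 * a.2.2), a.2.2 * c / (a.1 * a.2.1 * a.2.2))‖ *
          max 1 |a.1| ^ (1 - ((r₁+r₁ : ℕ) : ℝ) / 2) *
          max 1 |a.2.1| ^ (1 - ((r₂+r₂ : ℕ) : ℝ) / 2) *
          |a.1 * a.2.1 * a.2.2 / c| ^ (-((r₃+r₃ : ℕ) : ℝ) / 2) *
          (|a.1| ^ (((r₁+r₁ : ℕ) : ℝ) / 2 - 1) * |a.2.1| ^ (((r₂+r₂ : ℕ) : ℝ) / 2 - 1) *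
            |a.2.2| ^ (((r₃+r₃ : ℕ) : ℝ) / 2 - 1)) ≤
        (B * |c| ^ (-(α/8))) * (phiAux a.1 * (phiAux a.2.1 * phiAux a.2.2)) := by
    intro a hreg
    have hRHS0 : 0 ≤ (B * |c| ^ (-(α/8))) * (phiAux a.1 * (phiAux a.2.1 * phiAux a.2.2)) :=
      mul_nonneg (mul_nonneg hBpos.le hcβ)
        (mul_nonneg (phiAux_nonneg _) (mul_nonneg (phiAux_nonneg _) (phiAux_nonneg _)))
    by_cases h1 : a.1 = 0
    · have : |a.1| ^ (((r₁+r₁ : ℕ) : ℝ) / 2 - 1) = 0 := by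
        rw [h1, abs_zero]
        exact Real.zero_rpow (by rw [hcast₁]; exact_mod_cast (by omega : (r₁ - 1 : ℕ) ≠ 0))
      rw [this]
      simpa using hRHS0
    by_cases h2 : a.2.1 = 0
    · have : |a.2.1| ^ (((r₂+r₂ : ℕ) : ℝ) / 2 - 1) = 0 := by
        rw [h2, abs_zero]
        exact Real.zero_rpow (by rw [hcast₂]; exact_mod_cast (by omega : (r₂ - 1 : ℕ) ≠ 0))
      rw [this]
      simpa using hRHS0
    by_cases h3 : a.2.2 = 0
    · have : |a.2.2| ^ (((r₃+r₃ : ℕ) : ℝ) / 2 - 1) = 0 := by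
        rw [h3, abs_zero]
        exact Real.zero_rpow (by rw [hcast₃']; exact_mod_cast (by omega : (r₃ - 1 : ℕ) ≠ 0))
      rw [this]
      simpa using hRHS0
    rw [hcast₁, hcast₁', hcast₂, hcast₂', hcast₃, hcast₃']
    rw [Real.rpow_neg (le_trans zero_le_one (le_max_left _ _)), Real.rpow_natCast,
      Real.rpow_neg (le_trans zero_le_one (le_max_left _ _)), Real.rpow_natCast,
      Real.rpow_neg (abs_nonneg _), Real.rpow_natCast,
      Real.rpow_natCast, Real.rpow_natCast, Real.rpow_natCast]
    calc ‖M₃ (c / (a.1 * a.2.1 * a.2.2), a.1 * c / (a.1 * a.2.1 * a.2.2),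
            a.2.1 * c / (a.1 * a.2.1 * a.2.2), a.2.2 * c / (a.1 * a.2.1 * a.2.2))‖ *
          (max 1 |a.1| ^ (r₁ - 1))⁻¹ * (max 1 |a.2.1| ^ (r₂ - 1))⁻¹ *
          (|a.1 * a.2.1 * a.2.2 / c| ^ r₃)⁻¹ *
          (|a.1| ^ (r₁ - 1) * |a.2.1| ^ (r₂ - 1) * |a.2.2| ^ (r₃ - 1))
        ≤ B * ((min 1 (|a.2.2| / max 1 (max |a.1| |a.2.1|)))^r₃ *
            ((min 1 |a.1|)^(r₁-1) * (min 1 |a.2.1|)^(r₂-1)) / |a.2.2|) :=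
          main_bound M₃ r₃ (r₁-1) (r₂-1) h2r₃ (by omega) (by omega) B hB
            c a.1 a.2.1 a.2.2 hcne h1 h2 h3
      _ ≤ B * (|c| ^ (-(α/8)) * (phiAux a.1 * (phiAux a.2.1 * phiAux a.2.2))) := by
          apply mul_le_mul_of_nonneg_left _ hBpos.le
          exact final_real r₃ (r₁-1) (r₂-1) h2r₃ (by omega) (by omega) hc
            a.1 a.2.1 a.2.2 h1 h2 h3 hreg
      _ = (B * |c| ^ (-(α/8))) * (phiAux a.1 * (phiAux a.2.1 * phiAux a.2.2)) :=
          (mul_assoc _ _ _).symm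
  have hφm : Measurable fun t : ℝ => ENNReal.ofReal (phiAux t) :=
    ENNReal.measurable_ofReal.comp phiAux_measurable
  calc (∫⁻ a in {p : ℝ × ℝ × ℝ | |c| ^ α ≤ max |p.1| (max |p.2.1| |p.2.2|)},
          ENNReal.ofReal
            (‖M₃ (c / (a.1 * a.2.1 * a.2.2), a.1 * c / (a.1 * a.2.1 * a.2.2),
                a.2.1 * c / (a.1 * a.2.1 * a.2.2), a.2.2 * c / (a.1 * a.2.1 * a.2.2))‖ *
              max 1 |a.1| ^ (1 - ((r₁+r₁ : ℕ) : ℝ) / 2) *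
              max 1 |a.2.1| ^ (1 - ((r₂+r₂ : ℕ) : ℝ) / 2) *
              |a.1 * a.2.1 * a.2.2 / c| ^ (-((r₃+r₃ : ℕ) : ℝ) / 2) *
              (|a.1| ^ (((r₁+r₁ : ℕ) : ℝ) / 2 - 1) * |a.2.1| ^ (((r₂+r₂ : ℕ) : ℝ) / 2 - 1) *
                |a.2.2| ^ (((r₃+r₃ : ℕ) : ℝ) / 2 - 1))) ∂mulHaar3)
      ≤ ∫⁻ a in {p : ℝ × ℝ × ℝ | |c| ^ α ≤ max |p.1| (max |p.2.1| |p.2.2|)},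
          ENNReal.ofReal ((B * |c| ^ (-(α/8))) *
            (phiAux a.1 * (phiAux a.2.1 * phiAux a.2.2))) ∂mulHaar3 := by
        apply lintegral_mono_ae
        filter_upwards [ae_restrict_mem hS] with a ha
        exact ENNReal.ofReal_le_ofReal (hpt a ha)
    _ ≤ ∫⁻ a, ENNReal.ofReal ((B * |c| ^ (-(α/8))) *
          (phiAux a.1 * (phiAux a.2.1 * phiAux a.2.2))) ∂mulHaar3 :=
        setLIntegral_le_lintegral _ _
    _ = ∫⁻ a : ℝ × ℝ × ℝ, ENNReal.ofReal (B * |c| ^ (-(α/8))) *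
          (ENNReal.ofReal (phiAux a.1) *
            (ENNReal.ofReal (phiAux a.2.1) * ENNReal.ofReal (phiAux a.2.2))) ∂mulHaar3 :=
        lintegral_congr fun a => by
          rw [ENNReal.ofReal_mul (mul_nonneg hBpos.le hcβ),
            ENNReal.ofReal_mul (phiAux_nonneg _), ENNReal.ofReal_mul (phiAux_nonneg _)]
    _ = ENNReal.ofReal (B * |c| ^ (-(α/8))) *
          ∫⁻ a : ℝ × ℝ × ℝ, ENNReal.ofReal (phiAux a.1) *
            (ENNReal.ofReal (phiAux a.2.1) * ENNReal.ofReal (phiAux a.2.2)) ∂mulHaar3 :=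
        lintegral_const_mul' _ _ ENNReal.ofReal_ne_top
    _ = ENNReal.ofReal (B * |c| ^ (-(α/8))) * (J * (J * J)) := by
        rw [show mulHaar3 = mulHaar.prod (mulHaar.prod mulHaar) from rfl]
        have hg : Measurable (fun p : ℝ × ℝ =>
            ENNReal.ofReal (phiAux p.1) * ENNReal.ofReal (phiAux p.2)) :=
          (hφm.comp measurable_fst).mul (hφm.comp measurable_snd)
        rw [lintegral_prod_mul hφm.aemeasurable hg.aemeasurable]
        rw [lintegral_prod_mul hφm.aemeasurable hφm.aemeasurable]
    _ ≤ ENNReal.ofReal (B * |c| ^ (-(α/8))) *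
          (ENNReal.ofReal (K+1) * (ENNReal.ofReal (K+1) * ENNReal.ofReal (K+1))) := by
        have hJle : J ≤ ENNReal.ofReal (K+1) := by
          rw [hJK]; exact ENNReal.ofReal_le_ofReal (by linarith)
        exact mul_le_mul_right (mul_le_mul' hJle (mul_le_mul' hJle hJle)) _
    _ = ENNReal.ofReal ((B * |c| ^ (-(α/8))) * ((K+1) * ((K+1) * (K+1)))) := by
        rw [← ENNReal.ofReal_mul (by linarith : (0:ℝ) ≤ K+1),
          ← ENNReal.ofReal_mul (by linarith : (0:ℝ) ≤ K+1),
          ← ENNReal.ofReal_mul (mul_nonneg hBpos.le hcβ)]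
    _ ≤ ENNReal.ofReal ((B*(K+1)^3 + 1) * |c| ^ (-(α/8))) := by
        apply ENNReal.ofReal_le_ofReal
        nlinarith [hcβ]
end
end

section
/- Let d₁, d₂, d₃ be even integers with dᵢ ≥ 4 and let ε ∈ (0, 1/2). Then there is a constant C > 0 (depending on ε and the dᵢ) such that for every c ∈ ℝ∖{0}: ∫_{(ℝ^×)³} max(1, |a₁|)^{1−d₁/2} · max(1, |[a]/c|, |a|)^{1−d₂/2−d₃/2} · {a}^{d/2−1} d^×a ≤ C · min(1, |c|)^{min(d₁,d₂,d₃)/2 − 1 − ε}. (Lemma 9.10 of the paper, archimedean case F = ℝ.) -/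
open MeasureTheory Set ENNReal

noncomputable section

instance : SigmaFinite mulHaar := by unfold mulHaar; infer_instance

/-- One-variable bounding function. -/
def Fb (B q x : ℝ) : ℝ := max 1 |x| ^ (-B) * |x| ^ q

lemma Fb_nonneg (B q x : ℝ) : 0 ≤ Fb B q x := by
  unfold Fb
  have h1 : (0:ℝ) ≤ max 1 |x| := le_trans zero_le_one (le_max_left _ _)
  positivity

lemma Fb_meas (B q : ℝ) : Measurable fun x => ENNReal.ofReal (Fb B q x) := by
  apply Measurable.ennreal_ofReal
  exact ((measurable_const.max measurable_abs).pow_const _).mul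
    (measurable_abs.pow_const _)

/-- reflection for lintegrals -/
lemma lintegral_abs_comp (f : ℝ → ℝ≥0∞) (_hf : Measurable f) :
    ∫⁻ x : ℝ, f (|x|) ∂volume = 2 * ∫⁻ x in Ioi (0:ℝ), f x := by
  have h1 : ∫⁻ x : ℝ, f (|x|) ∂volume =
      (∫⁻ x in Ioi (0:ℝ), f (|x|)) + ∫⁻ x in (Ioi (0:ℝ))ᶜ, f (|x|) :=
    (lintegral_add_compl _ measurableSet_Ioi).symm
  have hc : (Ioi (0:ℝ))ᶜ = Iic 0 := by ext x; simp
  have h2 : ∫⁻ x in Iic (0:ℝ), f (|x|) = ∫⁻ x in Ici (0:ℝ), f (|x|) := by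
    have hpre : (fun x : ℝ => -x) ⁻¹' (Ici (0:ℝ)) = Iic 0 := by ext x; simp
    have := (Measure.measurePreserving_neg (volume : Measure ℝ)).setLIntegral_comp_preimage_emb
      measurableEmbedding_neg (fun x => f (|x|)) (Ici (0:ℝ))
    · rw [hpre] at this
      rw [← this]
      apply setLIntegral_congr_fun measurableSet_Iic
      intro x _; dsimp only
      rw [abs_neg]
  have h3 : ∫⁻ x in Ici (0:ℝ), f (|x|) = ∫⁻ x in Ioi (0:ℝ), f x := by
    rw [← setLIntegral_congr Ioi_ae_eq_Ici]
    apply setLIntegral_congr_fun measurableSet_Ioi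
    intro x hx; dsimp only at hx ⊢
    rw [abs_of_pos hx]
  have h4 : ∫⁻ x in Ioi (0:ℝ), f (|x|) = ∫⁻ x in Ioi (0:ℝ), f x := by
    apply setLIntegral_congr_fun measurableSet_Ioi
    intro x hx; dsimp only at hx ⊢
    rw [abs_of_pos hx]
  rw [h1, hc, h2, h3, h4, two_mul]

lemma Fb_lintegral_lt_top {B q : ℝ} (hq : 0 < q) (hqB : q < B) :
    ∫⁻ x, ENNReal.ofReal (Fb B q x) ∂mulHaar < ⊤ := by
  rw [mulHaar, lintegral_withDensity_eq_lintegral_mul _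
    (by exact (measurable_abs.inv).ennreal_ofReal) (Fb_meas B q)]
  have key : ∀ x : ℝ, (ENNReal.ofReal |x|⁻¹ * ENNReal.ofReal (Fb B q x)) =
      (fun y => ENNReal.ofReal (y⁻¹ * (max 1 y ^ (-B) * y ^ q))) |x| := by
    intro x
    simp only [Fb, abs_abs]
    rw [← ENNReal.ofReal_mul (by positivity)]
  simp only [Pi.mul_apply]
  have hmeas : Measurable fun y : ℝ => ENNReal.ofReal (y⁻¹ * (max 1 y ^ (-B) * y ^ q)) := by
    apply Measurable.ennreal_ofReal
    exact measurable_inv.mul (((measurable_const.max measurable_id).pow_const _).mul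
      (measurable_id.pow_const _))
  rw [lintegral_congr key,
    lintegral_abs_comp (fun y : ℝ => ENNReal.ofReal (y⁻¹ * (max 1 y ^ (-B) * y ^ q))) hmeas]
  have hsplit : ∫⁻ y in Ioi (0:ℝ), ENNReal.ofReal (y⁻¹ * (max 1 y ^ (-B) * y ^ q)) =
      (∫⁻ y in Ioc (0:ℝ) 1, ENNReal.ofReal (y⁻¹ * (max 1 y ^ (-B) * y ^ q)))
      + ∫⁻ y in Ioi (1:ℝ), ENNReal.ofReal (y⁻¹ * (max 1 y ^ (-B) * y ^ q)) := by
    rw [← lintegral_union measurableSet_Ioi (Set.Ioc_disjoint_Ioi le_rfl),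
      Set.Ioc_union_Ioi_eq_Ioi zero_le_one]
  rw [hsplit]
  have hfin1 : (∫⁻ y in Ioc (0:ℝ) 1, ENNReal.ofReal (y⁻¹ * (max 1 y ^ (-B) * y ^ q))) < ⊤ := by
    rw [setLIntegral_congr Ioo_ae_eq_Ioc.symm]
    have heq : ∀ y ∈ Ioo (0:ℝ) 1, ENNReal.ofReal (y⁻¹ * (max 1 y ^ (-B) * y ^ q)) =
        ENNReal.ofReal (y ^ (q - 1)) := by
      intro y hy
      congr 1
      rw [max_eq_left hy.2.le, Real.one_rpow, one_mul, ← Real.rpow_neg_one y,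
        ← Real.rpow_add hy.1]
      ring_nf
    rw [setLIntegral_congr_fun measurableSet_Ioo heq]
    exact ((intervalIntegral.integrableOn_Ioo_rpow_iff zero_lt_one).2 (by linarith)).setLIntegral_lt_top
  have hfin2 : (∫⁻ y in Ioi (1:ℝ), ENNReal.ofReal (y⁻¹ * (max 1 y ^ (-B) * y ^ q))) < ⊤ := by
    have heq : ∀ y ∈ Ioi (1:ℝ), ENNReal.ofReal (y⁻¹ * (max 1 y ^ (-B) * y ^ q)) =
        ENNReal.ofReal (y ^ (q - B - 1)) := by
      intro y hy
      have hy0 : (0:ℝ) < y := lt_trans zero_lt_one hy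
      congr 1
      rw [max_eq_right (le_of_lt hy), ← Real.rpow_neg_one y, ← Real.rpow_add hy0,
        ← Real.rpow_add hy0]
      ring_nf
    rw [setLIntegral_congr_fun measurableSet_Ioi heq]
    exact (integrableOn_Ioi_rpow_of_lt (by linarith) zero_lt_one).setLIntegral_lt_top
  exact ENNReal.mul_lt_top (by simp) (ENNReal.add_lt_top.2 ⟨hfin1, hfin2⟩)
lemma pointwise_bound (D₁ D₂ D₃ α β₁ β₂ β₃ : ℝ)
    (hα : 0 ≤ α) (hβ₁ : 0 ≤ β₁) (hβ₂ : 0 ≤ β₂) (hβ₃ : 0 ≤ β₃)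
    (hD₁ : 2 ≤ D₁) (hD₂ : 2 ≤ D₂) (hD₃ : 2 ≤ D₃)
    (hsum : α + β₁ + β₂ + β₃ ≤ D₂ + D₃ - 1)
    (c : ℝ) (hc : c ≠ 0) (x y z : ℝ) :
    max 1 |x| ^ (1 - D₁) *
        max (max 1 |x * y * z / c|) (max |x| (max |y| |z|)) ^ (1 - D₂ - D₃) *
        (|x| ^ (D₁ - 1) * |y| ^ (D₂ - 1) * |z| ^ (D₃ - 1)) ≤
      |c| ^ α * (Fb (D₁ - 1 + β₁) (D₁ - 1 - α) x *
        (Fb β₂ (D₂ - 1 - α) y * Fb β₃ (D₃ - 1 - α) z)) := by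
  have hrhs : 0 ≤ |c| ^ α * (Fb (D₁ - 1 + β₁) (D₁ - 1 - α) x *
      (Fb β₂ (D₂ - 1 - α) y * Fb β₃ (D₃ - 1 - α) z)) :=
    mul_nonneg (Real.rpow_nonneg (abs_nonneg c) α)
      (mul_nonneg (Fb_nonneg _ _ _) (mul_nonneg (Fb_nonneg _ _ _) (Fb_nonneg _ _ _)))
  by_cases hx : x = 0
  · subst hx
    have h0 : |(0:ℝ)| ^ (D₁ - 1) = 0 := by
      rw [abs_zero]; exact Real.zero_rpow (by linarith)
    rw [h0]
    simpa using hrhs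
  by_cases hy : y = 0
  · subst hy
    have h0 : |(0:ℝ)| ^ (D₂ - 1) = 0 := by
      rw [abs_zero]; exact Real.zero_rpow (by linarith)
    rw [h0]
    simpa using hrhs
  by_cases hz : z = 0
  · subst hz
    have h0 : |(0:ℝ)| ^ (D₃ - 1) = 0 := by
      rw [abs_zero]; exact Real.zero_rpow (by linarith)
    rw [h0]
    simpa using hrhs
  -- main case
  have habx : (0:ℝ) < |x| := abs_pos.2 hx
  have haby : (0:ℝ) < |y| := abs_pos.2 hy
  have habz : (0:ℝ) < |z| := abs_pos.2 hz
  simp only [Fb]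
  set Ax := max 1 |x| with hAxdef
  set Ay := max 1 |y| with hAydef
  set Az := max 1 |z| with hAzdef
  set M := max (max 1 |x * y * z / c|) (max |x| (max |y| |z|)) with hMdef
  have hAx1 : (1:ℝ) ≤ Ax := le_max_left _ _
  have hAy1 : (1:ℝ) ≤ Ay := le_max_left _ _
  have hAz1 : (1:ℝ) ≤ Az := le_max_left _ _
  have hAx0 : (0:ℝ) < Ax := lt_of_lt_of_le zero_lt_one hAx1
  have hAy0 : (0:ℝ) < Ay := lt_of_lt_of_le zero_lt_one hAy1
  have hAz0 : (0:ℝ) < Az := lt_of_lt_of_le zero_lt_one hAz1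
  have hM1 : (1:ℝ) ≤ M := le_trans (le_max_left _ _) (le_max_left _ _)
  have hM0 : (0:ℝ) < M := lt_of_lt_of_le zero_lt_one hM1
  have hXM : |x * y * z / c| ≤ M := le_trans (le_max_right _ _) (le_max_left _ _)
  have hAxM : Ax ≤ M :=
    max_le hM1 (le_trans (le_max_left _ _) (le_max_right _ _))
  have hAyM : Ay ≤ M :=
    max_le hM1 (le_trans (le_trans (le_max_left _ _) (le_max_right _ _)) (le_max_right _ _))
  have hAzM : Az ≤ M :=
    max_le hM1 (le_trans (le_trans (le_max_right _ _) (le_max_right _ _)) (le_max_right _ _))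
  have hX0 : (0:ℝ) < |x * y * z / c| :=
    abs_pos.2 (div_ne_zero (mul_ne_zero (mul_ne_zero hx hy) hz) hc)
  have key1 : |x * y * z / c| ^ α * Ax ^ β₁ * Ay ^ β₂ * Az ^ β₃ ≤ M ^ (D₂ + D₃ - 1) := by
    calc |x * y * z / c| ^ α * Ax ^ β₁ * Ay ^ β₂ * Az ^ β₃
        ≤ M ^ α * M ^ β₁ * M ^ β₂ * M ^ β₃ := by
          have t1 := Real.rpow_le_rpow hX0.le hXM hα
          have t2 := Real.rpow_le_rpow hAx0.le hAxM hβ₁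
          have t3 := Real.rpow_le_rpow hAy0.le hAyM hβ₂
          have t4 := Real.rpow_le_rpow hAz0.le hAzM hβ₃
          have p1 : (0:ℝ) ≤ M ^ α := Real.rpow_nonneg hM0.le _
          have p2 : (0:ℝ) ≤ M ^ β₁ := Real.rpow_nonneg hM0.le _
          have p3 : (0:ℝ) ≤ M ^ β₂ := Real.rpow_nonneg hM0.le _
          have p4 : (0:ℝ) ≤ Az ^ β₃ := Real.rpow_nonneg hAz0.le _
          gcongr
      _ = M ^ (α + β₁ + β₂ + β₃) := by
          rw [Real.rpow_add hM0, Real.rpow_add hM0, Real.rpow_add hM0]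
      _ ≤ M ^ (D₂ + D₃ - 1) := Real.rpow_le_rpow_of_exponent_le hM1 (by linarith)
  have key2 : M ^ (1 - D₂ - D₃) ≤
      (|x * y * z / c| ^ α * Ax ^ β₁ * Ay ^ β₂ * Az ^ β₃)⁻¹ := by
    rw [show (1 - D₂ - D₃) = -(D₂ + D₃ - 1) by ring, Real.rpow_neg hM0.le]
    have hpos : (0:ℝ) < |x * y * z / c| ^ α * Ax ^ β₁ * Ay ^ β₂ * Az ^ β₃ := by positivity
    gcongr
  have key3 : (|x * y * z / c| ^ α * Ax ^ β₁ * Ay ^ β₂ * Az ^ β₃)⁻¹ =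
      |c| ^ α * (|x| ^ (-α) * |y| ^ (-α) * |z| ^ (-α)) *
        (Ax ^ (-β₁) * Ay ^ (-β₂) * Az ^ (-β₃)) := by
    rw [abs_div, abs_mul, abs_mul, Real.div_rpow (by positivity) (abs_nonneg c),
      Real.mul_rpow (by positivity) (abs_nonneg z), Real.mul_rpow (abs_nonneg x) (abs_nonneg y),
      Real.rpow_neg habx.le, Real.rpow_neg haby.le, Real.rpow_neg habz.le,
      Real.rpow_neg hAx0.le, Real.rpow_neg hAy0.le, Real.rpow_neg hAz0.le]
    have n1 : |x| ^ α ≠ 0 := (Real.rpow_pos_of_pos habx _).ne'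
    have n2 : |y| ^ α ≠ 0 := (Real.rpow_pos_of_pos haby _).ne'
    have n3 : |z| ^ α ≠ 0 := (Real.rpow_pos_of_pos habz _).ne'
    have n4 : Ax ^ β₁ ≠ 0 := (Real.rpow_pos_of_pos hAx0 _).ne'
    have n5 : Ay ^ β₂ ≠ 0 := (Real.rpow_pos_of_pos hAy0 _).ne'
    have n6 : Az ^ β₃ ≠ 0 := (Real.rpow_pos_of_pos hAz0 _).ne'
    have n7 : |c| ^ α ≠ 0 := (Real.rpow_pos_of_pos (abs_pos.2 hc) _).ne'
    field_simp
    try ring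
    try tauto
  calc Ax ^ (1 - D₁) * M ^ (1 - D₂ - D₃) * (|x| ^ (D₁ - 1) * |y| ^ (D₂ - 1) * |z| ^ (D₃ - 1))
      ≤ Ax ^ (1 - D₁) *
          (|c| ^ α * (|x| ^ (-α) * |y| ^ (-α) * |z| ^ (-α)) *
            (Ax ^ (-β₁) * Ay ^ (-β₂) * Az ^ (-β₃))) *
          (|x| ^ (D₁ - 1) * |y| ^ (D₂ - 1) * |z| ^ (D₃ - 1)) := by
        have hb := key2.trans_eq key3
        have q1 : (0:ℝ) ≤ Ax ^ (1 - D₁) := Real.rpow_nonneg hAx0.le _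
        have q2 : (0:ℝ) ≤ |x| ^ (D₁ - 1) * |y| ^ (D₂ - 1) * |z| ^ (D₃ - 1) := by positivity
        exact mul_le_mul_of_nonneg_right (mul_le_mul_of_nonneg_left hb q1) q2
    _ = |c| ^ α * (Ax ^ (-(D₁ - 1 + β₁)) * |x| ^ (D₁ - 1 - α) *
          (Ay ^ (-β₂) * |y| ^ (D₂ - 1 - α) * (Az ^ (-β₃) * |z| ^ (D₃ - 1 - α)))) := by
        have e1 : Ax ^ (-(D₁ - 1 + β₁)) = Ax ^ (1 - D₁) * Ax ^ (-β₁) := by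
          rw [show -(D₁ - 1 + β₁) = (1 - D₁) + (-β₁) from by ring, Real.rpow_add hAx0]
        have e2 : |x| ^ (D₁ - 1 - α) = |x| ^ (D₁ - 1) * |x| ^ (-α) := by
          rw [show D₁ - 1 - α = (D₁ - 1) + (-α) from by ring, Real.rpow_add habx]
        have e3 : |y| ^ (D₂ - 1 - α) = |y| ^ (D₂ - 1) * |y| ^ (-α) := by
          rw [show D₂ - 1 - α = (D₂ - 1) + (-α) from by ring, Real.rpow_add haby]
        have e4 : |z| ^ (D₃ - 1 - α) = |z| ^ (D₃ - 1) * |z| ^ (-α) := by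
          rw [show D₃ - 1 - α = (D₃ - 1) + (-α) from by ring, Real.rpow_add habz]
        rw [e1, e2, e3, e4]
        ring
lemma master (D₁ D₂ D₃ α β₁ β₂ β₃ : ℝ)
    (hα : 0 ≤ α) (hβ₁ : 0 ≤ β₁) (hβ₂ : 0 ≤ β₂) (hβ₃ : 0 ≤ β₃)
    (hD₁ : 2 ≤ D₁) (hD₂ : 2 ≤ D₂) (hD₃ : 2 ≤ D₃)
    (hsum : α + β₁ + β₂ + β₃ ≤ D₂ + D₃ - 1)
    (hq₁ : 0 < D₁ - 1 - α) (hq₂ : 0 < D₂ - 1 - α) (hq₃ : 0 < D₃ - 1 - α)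
    (hB₁ : D₁ - 1 - α < D₁ - 1 + β₁) (hB₂ : D₂ - 1 - α < β₂) (hB₃ : D₃ - 1 - α < β₃) :
    ∃ P : ℝ, 0 ≤ P ∧ ∀ c : ℝ, c ≠ 0 →
      (∫⁻ a : ℝ × ℝ × ℝ, ENNReal.ofReal
          (max 1 |a.1| ^ (1 - D₁) *
            max (max 1 |a.1 * a.2.1 * a.2.2 / c|) (max |a.1| (max |a.2.1| |a.2.2|)) ^
              (1 - D₂ - D₃) *
            (|a.1| ^ (D₁ - 1) * |a.2.1| ^ (D₂ - 1) * |a.2.2| ^ (D₃ - 1))) ∂mulHaar3)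
        ≤ ENNReal.ofReal (|c| ^ α * P) := by
  set K₁ : ℝ≥0∞ := ∫⁻ u, ENNReal.ofReal (Fb (D₁ - 1 + β₁) (D₁ - 1 - α) u) ∂mulHaar with hK₁
  set K₂ : ℝ≥0∞ := ∫⁻ u, ENNReal.ofReal (Fb β₂ (D₂ - 1 - α) u) ∂mulHaar with hK₂
  set K₃ : ℝ≥0∞ := ∫⁻ u, ENNReal.ofReal (Fb β₃ (D₃ - 1 - α) u) ∂mulHaar with hK₃
  have hK₁fin : K₁ < ⊤ := Fb_lintegral_lt_top hq₁ hB₁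
  have hK₂fin : K₂ < ⊤ := Fb_lintegral_lt_top hq₂ hB₂
  have hK₃fin : K₃ < ⊤ := Fb_lintegral_lt_top hq₃ hB₃
  have hfin : K₁ * (K₂ * K₃) ≠ ⊤ :=
    (ENNReal.mul_lt_top hK₁fin (ENNReal.mul_lt_top hK₂fin hK₃fin)).ne
  refine ⟨(K₁ * (K₂ * K₃)).toReal, ENNReal.toReal_nonneg, fun c hc => ?_⟩
  have step1 : (∫⁻ a : ℝ × ℝ × ℝ, ENNReal.ofReal
          (max 1 |a.1| ^ (1 - D₁) *
            max (max 1 |a.1 * a.2.1 * a.2.2 / c|) (max |a.1| (max |a.2.1| |a.2.2|)) ^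
              (1 - D₂ - D₃) *
            (|a.1| ^ (D₁ - 1) * |a.2.1| ^ (D₂ - 1) * |a.2.2| ^ (D₃ - 1))) ∂mulHaar3)
      ≤ ∫⁻ a : ℝ × ℝ × ℝ, ENNReal.ofReal (|c| ^ α) *
          (ENNReal.ofReal (Fb (D₁ - 1 + β₁) (D₁ - 1 - α) a.1) *
            (ENNReal.ofReal (Fb β₂ (D₂ - 1 - α) a.2.1) *
              ENNReal.ofReal (Fb β₃ (D₃ - 1 - α) a.2.2))) ∂mulHaar3 := by
    apply lintegral_mono
    intro a
    have h := pointwise_bound D₁ D₂ D₃ α β₁ β₂ β₃ hα hβ₁ hβ₂ hβ₃ hD₁ hD₂ hD₃ hsum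
      c hc a.1 a.2.1 a.2.2
    calc ENNReal.ofReal _ ≤ ENNReal.ofReal (|c| ^ α * (Fb (D₁ - 1 + β₁) (D₁ - 1 - α) a.1 *
          (Fb β₂ (D₂ - 1 - α) a.2.1 * Fb β₃ (D₃ - 1 - α) a.2.2))) := ENNReal.ofReal_le_ofReal h
      _ = _ := by
          rw [ENNReal.ofReal_mul (Real.rpow_nonneg (abs_nonneg c) α),
            ENNReal.ofReal_mul (Fb_nonneg _ _ _), ENNReal.ofReal_mul (Fb_nonneg _ _ _)]
  refine step1.trans ?_
  have step2 : (∫⁻ a : ℝ × ℝ × ℝ, ENNReal.ofReal (|c| ^ α) *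
          (ENNReal.ofReal (Fb (D₁ - 1 + β₁) (D₁ - 1 - α) a.1) *
            (ENNReal.ofReal (Fb β₂ (D₂ - 1 - α) a.2.1) *
              ENNReal.ofReal (Fb β₃ (D₃ - 1 - α) a.2.2))) ∂mulHaar3)
      = ENNReal.ofReal (|c| ^ α) * (K₁ * (K₂ * K₃)) := by
    rw [lintegral_const_mul' _ _ ENNReal.ofReal_ne_top]
    congr 1
    rw [mulHaar3]
    have inner := lintegral_prod_mul (μ := mulHaar) (ν := mulHaar)
      (f := fun u => ENNReal.ofReal (Fb β₂ (D₂ - 1 - α) u))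
      (g := fun u => ENNReal.ofReal (Fb β₃ (D₃ - 1 - α) u))
      (Fb_meas _ _).aemeasurable (Fb_meas _ _).aemeasurable
    have outer := lintegral_prod_mul (μ := mulHaar) (ν := mulHaar.prod mulHaar)
      (f := fun u => ENNReal.ofReal (Fb (D₁ - 1 + β₁) (D₁ - 1 - α) u))
      (g := fun b : ℝ × ℝ => ENNReal.ofReal (Fb β₂ (D₂ - 1 - α) b.1) *
        ENNReal.ofReal (Fb β₃ (D₃ - 1 - α) b.2))
      (Fb_meas _ _).aemeasurable
      ((((Fb_meas _ _).comp measurable_fst)).mul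
        (((Fb_meas _ _).comp measurable_snd))).aemeasurable
    exact outer.trans (congrArg (fun t => K₁ * t) inner)
  rw [step2, ENNReal.ofReal_mul (Real.rpow_nonneg (abs_nonneg c) α),
    ENNReal.ofReal_toReal hfin]

/-- Lemma 9.10 (archimedean case `F = ℝ`). -/
theorem stmt14
    (d₁ d₂ d₃ : ℕ) (hd₁e : Even d₁) (hd₂e : Even d₂) (hd₃e : Even d₃)
    (hd₁ : 4 ≤ d₁) (hd₂ : 4 ≤ d₂) (hd₃ : 4 ≤ d₃)
    (ε : ℝ) (hε0 : 0 < ε) (hε : ε < 1 / 2) :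
    ∃ C : ℝ, 0 < C ∧
      ∀ c : ℝ, c ≠ 0 →
        (∫⁻ a : ℝ × ℝ × ℝ, ENNReal.ofReal
            (max 1 |a.1| ^ (1 - (d₁ : ℝ) / 2) *
              max (max 1 |a.1 * a.2.1 * a.2.2 / c|) (max |a.1| (max |a.2.1| |a.2.2|)) ^
                (1 - (d₂ : ℝ) / 2 - (d₃ : ℝ) / 2) *
              (|a.1| ^ ((d₁ : ℝ) / 2 - 1) * |a.2.1| ^ ((d₂ : ℝ) / 2 - 1) *
                |a.2.2| ^ ((d₃ : ℝ) / 2 - 1))) ∂mulHaar3)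
        ≤ ENNReal.ofReal
            (C * min 1 |c| ^ ((min d₁ (min d₂ d₃) : ℝ) / 2 - 1 - ε)) := by
  have hc₁ : (4:ℝ) ≤ (d₁ : ℝ) := by exact_mod_cast hd₁
  have hc₂ : (4:ℝ) ≤ (d₂ : ℝ) := by exact_mod_cast hd₂
  have hc₃ : (4:ℝ) ≤ (d₃ : ℝ) := by exact_mod_cast hd₃
  have hm4 : (4:ℝ) ≤ min (d₁:ℝ) (min (d₂:ℝ) (d₃:ℝ)) := le_min hc₁ (le_min hc₂ hc₃)
  have hm₁ : min (d₁:ℝ) (min (d₂:ℝ) (d₃:ℝ)) ≤ (d₁ : ℝ) := min_le_left _ _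
  have hm₂ : min (d₁:ℝ) (min (d₂:ℝ) (d₃:ℝ)) ≤ (d₂ : ℝ) :=
    le_trans (min_le_right _ _) (min_le_left _ _)
  have hm₃ : min (d₁:ℝ) (min (d₂:ℝ) (d₃:ℝ)) ≤ (d₃ : ℝ) :=
    le_trans (min_le_right _ _) (min_le_right _ _)
  set E : ℝ := min (d₁:ℝ) (min (d₂:ℝ) (d₃:ℝ)) / 2 - 1 - ε with hEdef
  have hE0 : 0 < E := by simp only [hEdef]; linarith
  obtain ⟨P₁, hP₁0, H₁⟩ := master ((d₁:ℝ)/2) ((d₂:ℝ)/2) ((d₃:ℝ)/2) E 0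
    ((d₂:ℝ)/2 - 1 - E + ε/2) ((d₃:ℝ)/2 - 1 - E + ε/2)
    (le_of_lt hE0) le_rfl (by simp only [hEdef]; linarith) (by simp only [hEdef]; linarith)
    (by linarith) (by linarith) (by linarith)
    (by simp only [hEdef]; linarith)
    (by simp only [hEdef]; linarith) (by simp only [hEdef]; linarith)
    (by simp only [hEdef]; linarith)
    (by linarith) (by linarith) (by linarith)
  obtain ⟨P₂, hP₂0, H₂⟩ := master ((d₁:ℝ)/2) ((d₂:ℝ)/2) ((d₃:ℝ)/2) 0 (1/4)
    ((d₂:ℝ)/2 - 1 + 1/4) ((d₃:ℝ)/2 - 1 + 1/4)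
    le_rfl (by norm_num) (by linarith) (by linarith)
    (by linarith) (by linarith) (by linarith)
    (by linarith)
    (by linarith) (by linarith) (by linarith)
    (by linarith) (by linarith) (by linarith)
  refine ⟨P₁ + P₂ + 1, by linarith, fun c hc => ?_⟩
  rcases le_or_gt |c| 1 with h | h
  · rw [min_eq_right h]
    refine (H₁ c hc).trans (ENNReal.ofReal_le_ofReal ?_)
    have h0 : 0 ≤ |c| ^ E := Real.rpow_nonneg (abs_nonneg c) E
    calc |c| ^ E * P₁ ≤ |c| ^ E * (P₁ + P₂ + 1) := by
          exact mul_le_mul_of_nonneg_left (by linarith) h0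
      _ = (P₁ + P₂ + 1) * |c| ^ E := mul_comm _ _
  · rw [min_eq_left h.le, Real.one_rpow, mul_one]
    have h2 := H₂ c hc
    rw [Real.rpow_zero, one_mul] at h2
    exact h2.trans (ENNReal.ofReal_le_ofReal (by linarith))
end
end

section
/- Let d₁, d₂, d₃ be even integers with dᵢ ≥ 4. Then for every α > 0 there exist β > 0 and C > 0 (depending on α and the dᵢ) such that for every c ∈ ℝ with |c| > 1: ∫_{|a| ≥ |c|^α} max(1, |a₁|)^{1−d₁/2} · max(1, |[a]/c|, |a|)^{1−d₂/2−d₃/2} · {a}^{d/2−1} d^×a ≤ C · |c|^{−β}, where the integral is over a ∈ (ℝ^×)³ with |a| = max(|a₁|,|a₂|,|a₃|) ≥ |c|^α. (Corollary 9.12 of the paper, archimedean case F = ℝ.) -/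
open MeasureTheory

noncomputable section

open Real Set

/-- auxiliary majorant -/
def Haux (t : ℝ) : ℝ := min 1 |t| * max 1 |t| ^ (-(6:ℝ)⁻¹)

lemma Haux_nonneg (t : ℝ) : 0 ≤ Haux t := by
  unfold Haux; positivity

lemma Haux_cont : Continuous Haux :=
  (continuous_const.min continuous_abs).mul
    ((continuous_const.max continuous_abs).rpow_const (fun x => Or.inl (by positivity)))

instance inst_s15 : SigmaFinite mulHaar := by
  unfold mulHaar; infer_instance

lemma sv (t B p : ℝ) (hp : 1 ≤ p) (hB : max 1 |t| ≤ B) :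
    |t| ^ p * B ^ (-p) ≤ min 1 |t| := by
  have hmax : (0:ℝ) < max 1 |t| := lt_of_lt_of_le one_pos (le_max_left _ _)
  have hB0 : (0:ℝ) < B := lt_of_lt_of_le hmax hB
  have h1 : B ^ (-p) ≤ (max 1 |t|) ^ (-p) :=
    Real.rpow_le_rpow_of_nonpos hmax hB (by linarith)
  calc |t| ^ p * B ^ (-p) ≤ |t| ^ p * (max 1 |t|) ^ (-p) := by
        exact mul_le_mul_of_nonneg_left h1 (Real.rpow_nonneg (abs_nonneg t) p)
    _ = (|t| / max 1 |t|) ^ p := by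
        rw [Real.div_rpow (abs_nonneg t) hmax.le, Real.rpow_neg hmax.le, div_eq_mul_inv]
    _ = (min 1 |t|) ^ p := by
        congr 1
        rcases le_total |t| 1 with h | h
        · rw [max_eq_left h, div_one, min_eq_right h]
        · rw [max_eq_right h, min_eq_left h, div_self (by linarith)]
    _ ≤ min 1 |t| := by
        rcases eq_or_ne t 0 with rfl | ht
        · simp [Real.zero_rpow (by linarith : p ≠ 0)]
        · have h0 : 0 < min 1 |t| := lt_min one_pos (abs_pos.mpr ht)
          calc (min 1 |t|) ^ p ≤ (min 1 |t|) ^ (1:ℝ) :=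
                Real.rpow_le_rpow_of_exponent_ge h0 (min_le_left _ _) hp
            _ = min 1 |t| := Real.rpow_one _

lemma key (q₁ q₂ q₃ : ℝ) (h₁ : 2 ≤ q₁) (h₂ : 2 ≤ q₂) (h₃ : 2 ≤ q₃)
    (T M a₁ a₂ a₃ : ℝ) (hT : 1 ≤ T) (hM1 : 1 ≤ M)
    (hMm : max |a₁| (max |a₂| |a₃|) ≤ M)
    (hS : T ≤ max |a₁| (max |a₂| |a₃|)) :
    max 1 |a₁| ^ (1 - q₁) * M ^ (1 - q₂ - q₃) *
      (|a₁| ^ (q₁ - 1) * |a₂| ^ (q₂ - 1) * |a₃| ^ (q₃ - 1)) ≤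
    T ^ (-(2:ℝ)⁻¹) * (Haux a₁ * (Haux a₂ * Haux a₃)) := by
  set m := max |a₁| (max |a₂| |a₃|) with hm
  have hm1 : (1:ℝ) ≤ m := le_trans hT hS
  have hm0 : (0:ℝ) < m := lt_of_lt_of_le one_pos hm1
  have hM0 : (0:ℝ) < M := lt_of_lt_of_le one_pos hM1
  have hT0 : (0:ℝ) < T := lt_of_lt_of_le one_pos hT
  have hmax1 : (0:ℝ) < max 1 |a₁| := lt_of_lt_of_le one_pos (le_max_left _ _)
  -- split the M power
  have hsplit : M ^ (1 - q₂ - q₃) = M ^ (-(q₂-1)) * (M ^ (-(q₃-1)) * M ^ (-(1:ℝ))) := by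
    rw [← Real.rpow_add hM0, ← Real.rpow_add hM0]; ring_nf
  -- single variable bounds
  have e₁ : |a₁| ^ (q₁-1) * (max 1 |a₁|) ^ (-(q₁-1)) ≤ min 1 |a₁| :=
    sv a₁ _ _ (by linarith) le_rfl
  have hBa₂ : max 1 |a₂| ≤ M :=
    max_le hM1 (le_trans (le_trans (le_max_left _ _) (le_max_right _ _)) hMm)
  have hBa₃ : max 1 |a₃| ≤ M :=
    max_le hM1 (le_trans (le_trans (le_max_right _ _) (le_max_right _ _)) hMm)
  have e₂ : |a₂| ^ (q₂-1) * M ^ (-(q₂-1)) ≤ min 1 |a₂| := sv a₂ _ _ (by linarith) hBa₂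
  have e₃ : |a₃| ^ (q₃-1) * M ^ (-(q₃-1)) ≤ min 1 |a₃| := sv a₃ _ _ (by linarith) hBa₃
  -- the M⁻¹ factor
  have hmax₁m : max 1 |a₁| ≤ m := max_le hm1 (le_max_left _ _)
  have hmax₂m : max 1 |a₂| ≤ m :=
    max_le hm1 (le_trans (le_max_left _ _) (le_max_right _ _))
  have hmax₃m : max 1 |a₃| ≤ m :=
    max_le hm1 (le_trans (le_max_right _ _) (le_max_right _ _))
  have e₄ : M ^ (-(1:ℝ)) ≤
      T ^ (-(2:ℝ)⁻¹) * (max 1 |a₁| ^ (-(6:ℝ)⁻¹) *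
        (max 1 |a₂| ^ (-(6:ℝ)⁻¹) * max 1 |a₃| ^ (-(6:ℝ)⁻¹))) := by
    have s1 : M ^ (-(1:ℝ)) ≤ m ^ (-(1:ℝ)) :=
      Real.rpow_le_rpow_of_nonpos hm0 hMm (by norm_num)
    have s2 : m ^ (-(1:ℝ)) =
        m ^ (-(2:ℝ)⁻¹) * (m ^ (-(6:ℝ)⁻¹) * (m ^ (-(6:ℝ)⁻¹) * m ^ (-(6:ℝ)⁻¹))) := by
      rw [← Real.rpow_add hm0, ← Real.rpow_add hm0, ← Real.rpow_add hm0]; norm_num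
    have t1 : m ^ (-(2:ℝ)⁻¹) ≤ T ^ (-(2:ℝ)⁻¹) :=
      Real.rpow_le_rpow_of_nonpos hT0 hS (by norm_num)
    have u₁ : m ^ (-(6:ℝ)⁻¹) ≤ max 1 |a₁| ^ (-(6:ℝ)⁻¹) :=
      Real.rpow_le_rpow_of_nonpos (by positivity) hmax₁m (by norm_num)
    have u₂ : m ^ (-(6:ℝ)⁻¹) ≤ max 1 |a₂| ^ (-(6:ℝ)⁻¹) :=
      Real.rpow_le_rpow_of_nonpos (by positivity) hmax₂m (by norm_num)
    have u₃ : m ^ (-(6:ℝ)⁻¹) ≤ max 1 |a₃| ^ (-(6:ℝ)⁻¹) :=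
      Real.rpow_le_rpow_of_nonpos (by positivity) hmax₃m (by norm_num)
    calc M ^ (-(1:ℝ)) ≤ m ^ (-(1:ℝ)) := s1
      _ = m ^ (-(2:ℝ)⁻¹) * (m ^ (-(6:ℝ)⁻¹) * (m ^ (-(6:ℝ)⁻¹) * m ^ (-(6:ℝ)⁻¹))) := s2
      _ ≤ _ := by gcongr
  -- assemble
  have lhs_eq : max 1 |a₁| ^ (1 - q₁) * M ^ (1 - q₂ - q₃) *
      (|a₁| ^ (q₁ - 1) * |a₂| ^ (q₂ - 1) * |a₃| ^ (q₃ - 1)) =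
      (|a₁| ^ (q₁-1) * (max 1 |a₁|) ^ (-(q₁-1))) *
      ((|a₂| ^ (q₂-1) * M ^ (-(q₂-1))) *
      ((|a₃| ^ (q₃-1) * M ^ (-(q₃-1))) * M ^ (-(1:ℝ)))) := by
    rw [hsplit]
    have : max 1 |a₁| ^ (1 - q₁) = max 1 |a₁| ^ (-(q₁-1)) := by ring_nf
    rw [this]; ring
  rw [lhs_eq]
  have h4 : (|a₁| ^ (q₁-1) * (max 1 |a₁|) ^ (-(q₁-1))) *
      ((|a₂| ^ (q₂-1) * M ^ (-(q₂-1))) *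
      ((|a₃| ^ (q₃-1) * M ^ (-(q₃-1))) * M ^ (-(1:ℝ)))) ≤
      (min 1 |a₁|) * ((min 1 |a₂|) * ((min 1 |a₃|) *
        (T ^ (-(2:ℝ)⁻¹) * (max 1 |a₁| ^ (-(6:ℝ)⁻¹) *
          (max 1 |a₂| ^ (-(6:ℝ)⁻¹) * max 1 |a₃| ^ (-(6:ℝ)⁻¹)))))) := by
    gcongr
  refine h4.trans (le_of_eq ?_)
  unfold Haux; ring

lemma Faux_meas : Measurable fun t : ℝ => ENNReal.ofReal (Haux t) :=
  ENNReal.measurable_ofReal.comp Haux_cont.measurable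

lemma gmaj_integrable :
    Integrable (fun t : ℝ => min 1 (|t| ^ (-(7/6):ℝ))) volume := by
  have gmeas : Measurable fun t : ℝ => min 1 (|t| ^ (-(7/6):ℝ)) := by fun_prop
  have hIoi : IntegrableOn (fun t : ℝ => min 1 (|t| ^ (-(7/6):ℝ))) (Ioi 1) := by
    refine Integrable.mono (integrableOn_Ioi_rpow_of_lt (a := (-(7/6):ℝ)) (by norm_num) one_pos)
      gmeas.aestronglyMeasurable.restrict ?_
    rw [ae_restrict_iff' measurableSet_Ioi]
    filter_upwards with x hx
    have h1x : (1:ℝ) < x := hx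
    have hxe : min 1 (|x| ^ (-(7/6):ℝ)) = x ^ (-(7/6):ℝ) := by
      rw [abs_of_pos (lt_trans one_pos h1x)]
      exact min_eq_right (Real.rpow_le_one_of_one_le_of_nonpos h1x.le (by norm_num))
    rw [hxe]
  have hIic : IntegrableOn (fun t : ℝ => min 1 (|t| ^ (-(7/6):ℝ))) (Iic (-1:ℝ)) := by
    rw [← Measure.map_neg_eq_self (volume : Measure ℝ)]
    have m : MeasurableEmbedding fun x : ℝ => -x :=
      (Homeomorph.neg ℝ).measurableEmbedding
    rw [m.integrableOn_map_iff]
    simp_rw [Function.comp_def, abs_neg]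
    have hset : (fun x : ℝ => -x) ⁻¹' (Iic (-1)) = Ici 1 := by
      ext x; simp
    rw [hset]
    exact Iff.mpr integrableOn_Ici_iff_integrableOn_Ioi hIoi
  have hIcc : IntegrableOn (fun t : ℝ => min 1 (|t| ^ (-(7/6):ℝ))) (Icc (-1:ℝ) 1) := by
    refine Measure.integrableOn_of_bounded (s := Icc (-1:ℝ) 1) (measure_Icc_lt_top).ne
      gmeas.aestronglyMeasurable (M := 1) ?_
    filter_upwards with x
    rw [Real.norm_eq_abs, abs_of_nonneg (by positivity)]
    exact min_le_left _ _
  rw [← integrableOn_univ]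
  refine ((hIic.union hIcc).union hIoi).mono_set ?_
  intro x _
  rcases le_or_gt x (-1) with h | h
  · exact Or.inl (Or.inl h)
  rcases le_or_gt x 1 with h2 | h2
  · exact Or.inl (Or.inr ⟨h.le, h2⟩)
  · exact Or.inr h2

lemma aux_fin : ∫⁻ t, ENNReal.ofReal (Haux t) ∂mulHaar < ⊤ := by
  rw [mulHaar, lintegral_withDensity_eq_lintegral_mul _ (by fun_prop) Faux_meas]
  have hpt : ∀ t : ℝ, ((fun a => ENNReal.ofReal |a|⁻¹) * fun t => ENNReal.ofReal (Haux t)) t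
      ≤ ENNReal.ofReal (min 1 (|t| ^ (-(7/6):ℝ))) := by
    intro t
    simp only [Pi.mul_apply]
    rw [← ENNReal.ofReal_mul (by positivity)]
    refine ENNReal.ofReal_le_ofReal ?_
    unfold Haux
    rcases eq_or_ne t 0 with rfl | ht
    · simp [Real.zero_rpow (by norm_num : (-(7/6):ℝ) ≠ 0)]
    have h0 : (0:ℝ) < |t| := abs_pos.mpr ht
    rcases le_total |t| 1 with h1 | h1
    · rw [min_eq_right h1, max_eq_left h1, Real.one_rpow, mul_one,
        inv_mul_cancel₀ h0.ne']
      exact le_min le_rfl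
        (Real.one_le_rpow_of_pos_of_le_one_of_nonpos h0 h1 (by norm_num))
    · rw [min_eq_left h1, max_eq_right h1, one_mul]
      have : |t|⁻¹ * |t| ^ (-(6:ℝ)⁻¹) = |t| ^ (-(7/6):ℝ) := by
        rw [← Real.rpow_neg_one |t|, ← Real.rpow_add h0]; norm_num
      rw [this]
      exact le_min (Real.rpow_le_one_of_one_le_of_nonpos h1 (by norm_num)) le_rfl
  calc ∫⁻ t, ((fun a => ENNReal.ofReal |a|⁻¹) * fun t => ENNReal.ofReal (Haux t)) t
      ≤ ∫⁻ t, ENNReal.ofReal (min 1 (|t| ^ (-(7/6):ℝ))) := lintegral_mono hpt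
    _ < ⊤ := gmaj_integrable.lintegral_lt_top

/-- Corollary 9.12 (archimedean case `F = ℝ`). -/
theorem stmt15
    (d₁ d₂ d₃ : ℕ) (hd₁e : Even d₁) (hd₂e : Even d₂) (hd₃e : Even d₃)
    (hd₁ : 4 ≤ d₁) (hd₂ : 4 ≤ d₂) (hd₃ : 4 ≤ d₃) :
    ∀ α : ℝ, 0 < α →
      ∃ β : ℝ, 0 < β ∧ ∃ C : ℝ, 0 < C ∧
        ∀ c : ℝ, 1 < |c| →
          (∫⁻ a in {p : ℝ × ℝ × ℝ | |c| ^ α ≤ max |p.1| (max |p.2.1| |p.2.2|)},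
              ENNReal.ofReal
                (max 1 |a.1| ^ (1 - (d₁ : ℝ) / 2) *
                  max (max 1 |a.1 * a.2.1 * a.2.2 / c|) (max |a.1| (max |a.2.1| |a.2.2|)) ^
                    (1 - (d₂ : ℝ) / 2 - (d₃ : ℝ) / 2) *
                  (|a.1| ^ ((d₁ : ℝ) / 2 - 1) * |a.2.1| ^ ((d₂ : ℝ) / 2 - 1) *
                    |a.2.2| ^ ((d₃ : ℝ) / 2 - 1))) ∂mulHaar3)
          ≤ ENNReal.ofReal (C * |c| ^ (-β)) := by
  intro α hα
  refine ⟨α/2, by positivity, ?_⟩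
  set I := ∫⁻ t, ENNReal.ofReal (Haux t) ∂mulHaar with hIdef
  have hIfin : I * (I * I) ≠ ⊤ :=
    ENNReal.mul_ne_top aux_fin.ne (ENNReal.mul_ne_top aux_fin.ne aux_fin.ne)
  refine ⟨(I * (I * I)).toReal + 1, by positivity, ?_⟩
  intro c hc
  set T := |c| ^ α with hTdef
  have hc0 : (0:ℝ) < |c| := lt_trans one_pos hc
  have hT1 : 1 < T := (Real.one_lt_rpow_iff_of_pos hc0).mpr (Or.inl ⟨hc, hα⟩)
  set C : ℝ := (I * (I * I)).toReal + 1 with hCdef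
  have hC0 : (0:ℝ) < C := by positivity
  set K : ENNReal := ENNReal.ofReal (T ^ (-(2:ℝ)⁻¹)) with hKdef
  set S : Set (ℝ × ℝ × ℝ) := {p | T ≤ max |p.1| (max |p.2.1| |p.2.2|)} with hSdef
  have hSmeas : MeasurableSet S :=
    measurableSet_le measurable_const (by fun_prop)
  have hq₁ : (2:ℝ) ≤ (d₁:ℝ)/2 := by
    have : (4:ℝ) ≤ (d₁:ℝ) := by exact_mod_cast hd₁
    linarith
  have hq₂ : (2:ℝ) ≤ (d₂:ℝ)/2 := by
    have : (4:ℝ) ≤ (d₂:ℝ) := by exact_mod_cast hd₂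
    linarith
  have hq₃ : (2:ℝ) ≤ (d₃:ℝ)/2 := by
    have : (4:ℝ) ≤ (d₃:ℝ) := by exact_mod_cast hd₃
    linarith
  have hbd : ∀ a ∈ S,
      ENNReal.ofReal
        (max 1 |a.1| ^ (1 - (d₁ : ℝ) / 2) *
          max (max 1 |a.1 * a.2.1 * a.2.2 / c|) (max |a.1| (max |a.2.1| |a.2.2|)) ^
            (1 - (d₂ : ℝ) / 2 - (d₃ : ℝ) / 2) *
          (|a.1| ^ ((d₁ : ℝ) / 2 - 1) * |a.2.1| ^ ((d₂ : ℝ) / 2 - 1) *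
            |a.2.2| ^ ((d₃ : ℝ) / 2 - 1))) ≤
      K * (ENNReal.ofReal (Haux a.1) *
        (ENNReal.ofReal (Haux a.2.1) * ENNReal.ofReal (Haux a.2.2))) := by
    intro a ha
    have hkey := key ((d₁:ℝ)/2) ((d₂:ℝ)/2) ((d₃:ℝ)/2) hq₁ hq₂ hq₃ T
      (max (max 1 |a.1 * a.2.1 * a.2.2 / c|) (max |a.1| (max |a.2.1| |a.2.2|)))
      a.1 a.2.1 a.2.2 hT1.le
      (le_trans (le_max_left _ _) (le_max_left _ _)) (le_max_right _ _) ha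
    refine le_trans (ENNReal.ofReal_le_ofReal hkey) (le_of_eq ?_)
    rw [ENNReal.ofReal_mul (by positivity), ENNReal.ofReal_mul (Haux_nonneg _),
      ENNReal.ofReal_mul (Haux_nonneg _)]
  calc (∫⁻ a in S, ENNReal.ofReal
          (max 1 |a.1| ^ (1 - (d₁ : ℝ) / 2) *
            max (max 1 |a.1 * a.2.1 * a.2.2 / c|) (max |a.1| (max |a.2.1| |a.2.2|)) ^
              (1 - (d₂ : ℝ) / 2 - (d₃ : ℝ) / 2) *
            (|a.1| ^ ((d₁ : ℝ) / 2 - 1) * |a.2.1| ^ ((d₂ : ℝ) / 2 - 1) *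
              |a.2.2| ^ ((d₃ : ℝ) / 2 - 1))) ∂mulHaar3)
      ≤ ∫⁻ a in S, K * (ENNReal.ofReal (Haux a.1) *
          (ENNReal.ofReal (Haux a.2.1) * ENNReal.ofReal (Haux a.2.2))) ∂mulHaar3 :=
        setLIntegral_mono' hSmeas hbd
    _ ≤ ∫⁻ a, K * (ENNReal.ofReal (Haux a.1) *
          (ENNReal.ofReal (Haux a.2.1) * ENNReal.ofReal (Haux a.2.2))) ∂mulHaar3 :=
        setLIntegral_le_lintegral _ _
    _ = K * ∫⁻ a, ENNReal.ofReal (Haux a.1) *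
          (ENNReal.ofReal (Haux a.2.1) * ENNReal.ofReal (Haux a.2.2)) ∂mulHaar3 :=
        lintegral_const_mul' _ _ ENNReal.ofReal_ne_top
    _ = K * (I * (I * I)) := by
        rw [mulHaar3]
        congr 1
        rw [lintegral_prod_mul (f := fun t => ENNReal.ofReal (Haux t))
          (g := fun y : ℝ × ℝ => ENNReal.ofReal (Haux y.1) * ENNReal.ofReal (Haux y.2))
          Faux_meas.aemeasurable
          (((Faux_meas.comp measurable_fst)).mul
            ((Faux_meas.comp measurable_snd))).aemeasurable,
          lintegral_prod_mul Faux_meas.aemeasurable Faux_meas.aemeasurable]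
    _ ≤ K * ENNReal.ofReal C := by
        gcongr
        rw [← ENNReal.ofReal_toReal hIfin]
        exact ENNReal.ofReal_le_ofReal (by simp [hCdef])
    _ = ENNReal.ofReal (C * |c| ^ (-(α/2))) := by
        rw [hKdef, ← ENNReal.ofReal_mul (by positivity)]
        congr 1
        rw [hTdef, ← Real.rpow_mul (abs_nonneg c)]
        rw [show α * (-(2:ℝ)⁻¹) = -(α/2) by ring, mul_comm]
end
end
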